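/- arXiv:1707.02542 — 5 statements merged into one kernel-verified Lean document; each statement's English description precedes it below -/
import Mathlib

section
/- Let R be a commutative noetherian ring, S a Serre subcategory of the category of R-modules, I an ideal of R, and M an R-module. If the submodule (0 :_M I) belongs to S, then (0 :_M I^n) belongs to S for every positive integer n. -/
/-!
Common framework: a *Serre class* is a class of (bundled) `R`-modules closed under
submodules, quotient modules and extensions.  `MelkerssonCondition R P I` is the
Melkersson condition `(C_I)`: if `Γ_I(M) = M` (every element of `M` is annihilated by
some power of `I`) and `(0 :_M I)` (the `I`-torsion-by-`I` submodule `torsionBySet`)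
belongs to the class, then `M` belongs to the class.  `MP R P` is the set of prime
ideals `p` such that the class satisfies `(C_p)`.
-/

open CategoryTheory

structure SerreClass (R : Type) [CommRing R] where
  mem : ModuleCat.{0} R → Prop
  mem_of_injective : ∀ {M N : ModuleCat.{0} R} (f : M →ₗ[R] N),
    Function.Injective f → mem N → mem M
  mem_of_surjective : ∀ {M N : ModuleCat.{0} R} (f : M →ₗ[R] N),
    Function.Surjective f → mem M → mem N
  mem_of_extension : ∀ {A M B : ModuleCat.{0} R} (f : A →ₗ[R] M) (g : M →ₗ[R] B),
    Function.Injective f → Function.Surjective g →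
    LinearMap.range f = LinearMap.ker g → mem A → mem B → mem M

variable (R : Type) [CommRing R]

/-- `Γ_I(M) = M`: every element of `M` is annihilated by some power of `I`. -/
def IsTorsionByPowers (I : Ideal R) (M : ModuleCat.{0} R) : Prop :=
  ∀ m : M, ∃ n : ℕ, ∀ x ∈ I ^ n, x • m = 0

/-- The Melkersson condition `(C_I)` for a class `P` of `R`-modules:
if `Γ_I(M) = M` and `(0 :_M I) ∈ P` then `M ∈ P`. -/
def MelkerssonCondition (P : ModuleCat.{0} R → Prop) (I : Ideal R) : Prop :=
  ∀ M : ModuleCat.{0} R, IsTorsionByPowers R I M →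
    P (ModuleCat.of R (Submodule.torsionBySet R M (I : Set R))) → P M

/-- `MP[P]`: the set of prime ideals `p` such that `P` satisfies `(C_p)`. -/
def MP (P : ModuleCat.{0} R → Prop) : Set (PrimeSpectrum R) :=
  { p | MelkerssonCondition R P p.asIdeal }

/-- The class `FG` of finitely generated `R`-modules. -/
def FGClass : ModuleCat.{0} R → Prop := fun M => Module.Finite R M

/-- Membership in the extension subcategory `P * Q`: `M` fits in a short exact
sequence `0 → A → M → B → 0` with `A ∈ P` and `B ∈ Q`. -/
def IsExtensionIn (P Q : ModuleCat.{0} R → Prop) (M : ModuleCat.{0} R) : Prop :=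
  ∃ (A B : ModuleCat.{0} R) (f : A →ₗ[R] M) (g : M →ₗ[R] B),
    Function.Injective f ∧ Function.Surjective g ∧
    LinearMap.range f = LinearMap.ker g ∧ P A ∧ Q B

/-- `Supp(P) = ⋃_{M ∈ P} Supp_R M`. -/
def SuppClass (P : ModuleCat.{0} R → Prop) : Set (PrimeSpectrum R) :=
  ⋃ (M : ModuleCat.{0} R) (_ : P M), Module.support R M

/-- `E` is an injective hull of `N`: `E` is injective and contains `N` as an
essential submodule. -/
def IsInjectiveHull (N E : ModuleCat.{0} R) : Prop :=
  Module.Injective R E ∧ ∃ f : N →ₗ[R] E, Function.Injective f ∧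
    ∀ W : Submodule R E, W ≠ ⊥ → W ⊓ LinearMap.range f ≠ ⊥

/-- `M` is `I`-cofinite: `Supp M ⊆ V(I)` and `Ext^i_R(R/I, M)` is a finitely
generated `R`-module for every `i`. -/
noncomputable def IsCofiniteWrt (I : Ideal R) (M : ModuleCat.{0} R) : Prop :=
  Module.support R M ⊆ PrimeSpectrum.zeroLocus (I : Set R) ∧
  ∀ i : ℕ, Module.Finite R
    (((Ext R (ModuleCat.{0} R) i).obj (Opposite.op (ModuleCat.of R (R ⧸ I)))).obj M)

/-- A specialization closed subset of `Spec R`. -/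
def SpecializationClosed (W : Set (PrimeSpectrum R)) : Prop :=
  ∀ p ∈ W, ∀ q : PrimeSpectrum R, p.asIdeal ≤ q.asIdeal → q ∈ W


section Aux

variable {R' : Type} [CommRing R']

lemma SerreClass.mem_of_equiv (S : SerreClass R') {A B : ModuleCat.{0} R'}
    (e : A ≃ₗ[R'] B) (hA : S.mem A) : S.mem B :=
  S.mem_of_surjective e.toLinearMap e.surjective hA

lemma SerreClass.mem_pi_fin (S : SerreClass R') (N : ModuleCat.{0} R') (hN : S.mem N) :
    ∀ k : ℕ, S.mem (ModuleCat.of R' (Fin k → N))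
  | 0 => by
    refine S.mem_of_injective (M := ModuleCat.of R' (Fin 0 → N)) (N := N)
      (0 : (Fin 0 → N) →ₗ[R'] N) ?_ hN
    intro a b _
    funext i
    exact i.elim0
  | (k + 1) => by
    have hB := S.mem_pi_fin N hN k
    refine S.mem_of_extension (A := N) (M := ModuleCat.of R' (Fin (k+1) → N))
      (B := ModuleCat.of R' (Fin k → N))
      (LinearMap.single R' (fun _ : Fin (k+1) => N) 0)
      (LinearMap.funLeft R' N Fin.succ) ?_ ?_ ?_ hN hB
    · intro a b hab
      have := congrFun hab (0 : Fin (k+1))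
      simpa using this
    · intro v
      refine ⟨Fin.cases 0 v, ?_⟩
      funext i
      show Fin.cases (motive := fun _ => (N : Type)) 0 v i.succ = v i
      exact Fin.cases_succ ..
    · ext v
      constructor
      · rintro ⟨x, rfl⟩
        funext i
        show Pi.single (M := fun _ : Fin (k+1) => (N : Type)) (0 : Fin (k+1)) x i.succ = (0 : (N : Type))
        exact Pi.single_eq_of_ne (Fin.succ_ne_zero i) x
      · intro hv
        refine ⟨v 0, ?_⟩
        funext j
        induction j using Fin.cases with
        | zero =>
          show Pi.single (M := fun _ : Fin (k+1) => (N : Type)) (0 : Fin (k+1)) (v 0) 0 = v 0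
          exact Pi.single_eq_same _ _
        | succ i =>
          have hv' : v i.succ = 0 := congrFun hv i
          show Pi.single (M := fun _ : Fin (k+1) => (N : Type)) (0 : Fin (k+1)) (v 0) i.succ = v i.succ
          exact (Pi.single_eq_of_ne (Fin.succ_ne_zero i) (v 0)).trans hv'.symm

lemma SerreClass.mem_pi (S : SerreClass R') (N : ModuleCat.{0} R') (hN : S.mem N)
    (idx : Type) [Fintype idx] : S.mem (ModuleCat.of R' (idx → N)) := by
  have e : (Fin (Fintype.card idx) → N) ≃ₗ[R'] (idx → N) :=
    LinearEquiv.funCongrLeft R' N (Fintype.equivFin idx)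
  exact S.mem_of_equiv (A := ModuleCat.of R' (Fin (Fintype.card idx) → N)) e
    (S.mem_pi_fin N hN _)

end Aux

/-- If `(0 :_M I) ∈ S` then `(0 :_M I^n) ∈ S` for every positive integer `n`. -/
theorem stmt_0 {R : Type} [CommRing R] [IsNoetherianRing R] (S : SerreClass R)
    (I : Ideal R) (M : ModuleCat.{0} R)
    (h : S.mem (ModuleCat.of R (Submodule.torsionBySet R M (I : Set R))))
    (n : ℕ) (hn : 0 < n) :
    S.mem (ModuleCat.of R (Submodule.torsionBySet R M ((I ^ n : Ideal R) : Set R))) := by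
  induction n with
  | zero => exact absurd hn (lt_irrefl 0)
  | succ n ih =>
    rcases Nat.eq_zero_or_pos n with hn0 | hn0
    · subst hn0
      rw [show (0 : ℕ) + 1 = 1 from rfl, pow_one]
      exact h
    have ihn := ih hn0
    -- generators of I
    obtain ⟨s, hs⟩ : ∃ s : Finset R, Ideal.span (s : Set R) = I :=
      (isNoetherianRing_iff_ideal_fg R).mp ‹IsNoetherianRing R› I
    set Kn := Submodule.torsionBySet R M ((I ^ n : Ideal R) : Set R) with hKn
    set Km := Submodule.torsionBySet R M ((I ^ (n+1) : Ideal R) : Set R) with hKm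
    -- the map φ : Km → (s → Kn), x ↦ (a • x)
    have hcomp : ∀ i : s, ∀ x : Km, (i : R) • (x : M) ∈ Kn := by
      intro i x
      rw [hKn, Submodule.mem_torsionBySet_iff]
      rintro ⟨a, ha⟩
      have hiI : (i : R) ∈ I := by
        rw [← hs]; exact Ideal.subset_span i.2
      have : a * (i : R) ∈ I ^ (n + 1) := by
        rw [pow_succ]
        exact Ideal.mul_mem_mul ha hiI
      have hx := (Submodule.mem_torsionBySet_iff _ _).mp x.2 ⟨a * (i : R), this⟩
      rw [mul_smul] at hx; exact hx
    let φ : Km →ₗ[R] (s → Kn) :=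
      LinearMap.pi fun i => LinearMap.codRestrict Kn ((i : R) • Km.subtype) (hcomp i)
    -- kernel of φ is the image of (0 :_M I)
    have hle : Submodule.torsionBySet R M (I : Set R) ≤ Km := by
      rw [hKm]
      apply Submodule.torsionBySet_le_torsionBySet_of_subset
      exact Ideal.pow_le_self (Nat.succ_ne_zero n)
    have hker : LinearMap.range (Submodule.inclusion hle) = LinearMap.ker φ := by
      ext x
      simp only [LinearMap.mem_range, LinearMap.mem_ker]
      constructor
      · rintro ⟨y, rfl⟩
        funext i
        apply Subtype.ext
        have := (Submodule.mem_torsionBySet_iff _ _).mp y.2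
          ⟨(i : R), by rw [← hs]; exact Ideal.subset_span i.2⟩
        exact this
      · intro hx
        have hxI : (x : M) ∈ Submodule.torsionBySet R M (I : Set R) := by
          rw [← hs, ← Submodule.torsionBySet_eq_torsionBySet_span,
            Submodule.mem_torsionBySet_iff]
          rintro ⟨a, ha⟩
          have := congrFun hx ⟨a, ha⟩
          exact congrArg Subtype.val this
        exact ⟨⟨(x : M), hxI⟩, rfl⟩
    -- the extension 0 → (0:I) → Km → Km/ker φ → 0
    refine S.mem_of_extension
      (A := ModuleCat.of R (Submodule.torsionBySet R M (I : Set R)))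
      (M := ModuleCat.of R Km)
      (B := ModuleCat.of R (Km ⧸ LinearMap.ker φ))
      (Submodule.inclusion hle) ((LinearMap.ker φ).mkQ) ?_ ?_ ?_ h ?_
    · exact Submodule.inclusion_injective _
    · exact Submodule.mkQ_surjective _
    · rw [Submodule.ker_mkQ]; exact hker
    · -- Km/ker φ embeds into s → Kn
      have hinj : Function.Injective ((LinearMap.ker φ).liftQ φ le_rfl) := by
        rw [← LinearMap.ker_eq_bot]
        exact Submodule.ker_liftQ_eq_bot _ _ _ le_rfl
      exact S.mem_of_injective (M := ModuleCat.of R (Km ⧸ LinearMap.ker φ))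
        (N := ModuleCat.of R (s → Kn)) ((LinearMap.ker φ).liftQ φ le_rfl) hinj
        (S.mem_pi (ModuleCat.of R Kn) ihn s)
end

section
/- Let R be a commutative noetherian ring and S a Serre subcategory of the category of R-modules. If MP[S] contains every prime ideal of R of height at least 1, then MP[S] contains all minimal prime ideals of R; in particular MP[S] = Spec(R). -/
/-!
Common framework: a *Serre class* is a class of (bundled) `R`-modules closed under
submodules, quotient modules and extensions.  `MelkerssonCondition R P I` is the
Melkersson condition `(C_I)`: if `Γ_I(M) = M` (every element of `M` is annihilated by
some power of `I`) and `(0 :_M I)` (the `I`-torsion-by-`I` submodule `torsionBySet`)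
belongs to the class, then `M` belongs to the class.  `MP R P` is the set of prime
ideals `p` such that the class satisfies `(C_p)`.
-/

open CategoryTheory

variable (R : Type) [CommRing R]

section AuxiliaryLemmas

section Ann
variable {R : Type} [CommRing R] {M : Type} [AddCommGroup M] [Module R M]

lemma ann_le_of_span {m : M} {s : Set R} (h : ∀ x ∈ s, x • m = 0) :
    Submodule.span R s ≤ LinearMap.ker (LinearMap.toSpanSingleton R M m) := by
  rw [Submodule.span_le]
  intro x hx
  simpa [LinearMap.mem_ker, LinearMap.toSpanSingleton_apply] using h x hx

lemma smul_zero_of_mem_ann {m : M} {I : Ideal R}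
    (h : I ≤ LinearMap.ker (LinearMap.toSpanSingleton R M m)) {x : R} (hx : x ∈ I) :
    x • m = 0 := by
  simpa [LinearMap.toSpanSingleton_apply] using h hx

lemma le_ann_iff {m : M} {I : Ideal R} :
    I ≤ LinearMap.ker (LinearMap.toSpanSingleton R M m) ↔ ∀ x ∈ I, x • m = 0 := by
  constructor
  · intro h x hx; exact smul_zero_of_mem_ann h hx
  · intro h x hx; simpa [LinearMap.mem_ker, LinearMap.toSpanSingleton_apply] using h x hx

end Ann


namespace SerreClass

variable {R : Type} [CommRing R] (S : SerreClass R)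

lemma mem_of_inj {X Y : Type} [AddCommGroup X] [Module R X] [AddCommGroup Y] [Module R Y]
    (f : X →ₗ[R] Y) (hf : Function.Injective f) (hY : S.mem (ModuleCat.of R Y)) :
    S.mem (ModuleCat.of R X) :=
  S.mem_of_injective (M := ModuleCat.of R X) (N := ModuleCat.of R Y) f hf hY

lemma mem_of_surj {X Y : Type} [AddCommGroup X] [Module R X] [AddCommGroup Y] [Module R Y]
    (f : X →ₗ[R] Y) (hf : Function.Surjective f) (hX : S.mem (ModuleCat.of R X)) :
    S.mem (ModuleCat.of R Y) :=
  S.mem_of_surjective (M := ModuleCat.of R X) (N := ModuleCat.of R Y) f hf hX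

lemma mem_ext {A X B : Type} [AddCommGroup A] [Module R A] [AddCommGroup X] [Module R X]
    [AddCommGroup B] [Module R B] (f : A →ₗ[R] X) (g : X →ₗ[R] B)
    (hf : Function.Injective f) (hg : Function.Surjective g)
    (hfg : LinearMap.range f = LinearMap.ker g)
    (hA : S.mem (ModuleCat.of R A)) (hB : S.mem (ModuleCat.of R B)) :
    S.mem (ModuleCat.of R X) :=
  S.mem_of_extension (A := ModuleCat.of R A) (M := ModuleCat.of R X) (B := ModuleCat.of R B)
    f g hf hg hfg hA hB

lemma mem_pi_s2 {N : Type} [AddCommGroup N] [Module R N] (hN : S.mem (ModuleCat.of R N)) :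
    ∀ k : ℕ, S.mem (ModuleCat.of R (Fin k → N)) := by
  intro k
  induction k with
  | zero =>
    exact S.mem_of_surj (0 : N →ₗ[R] (Fin 0 → N))
      (fun y => ⟨0, funext fun i => i.elim0⟩) hN
  | succ k ih =>
    refine S.mem_ext (LinearMap.single R (fun _ : Fin (k+1) => N) 0)
      (LinearMap.funLeft R N Fin.succ) ?_ ?_ ?_ hN ih
    · intro x y hxy
      simpa using congrFun hxy 0
    · intro y
      exact ⟨Fin.cons 0 y, funext fun i => by simp [LinearMap.funLeft]⟩
    · ext x
      simp only [LinearMap.mem_range, LinearMap.mem_ker]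
      constructor
      · rintro ⟨y, rfl⟩
        funext i
        simp [LinearMap.funLeft, Pi.single_eq_of_ne (Fin.succ_ne_zero i)]
      · intro hx
        refine ⟨x 0, funext fun j => ?_⟩
        refine Fin.cases ?_ (fun i => ?_) j
        · simp
        · have := congrFun hx i
          simp only [LinearMap.funLeft_apply] at this
          simp [Pi.single_eq_of_ne (Fin.succ_ne_zero i), this]

lemma crux [IsNoetherianRing R] {X : Type} [AddCommGroup X] [Module R X]
    (L : Submodule R X) (J : Ideal R)
    (hL : S.mem (ModuleCat.of R ↥L))
    (hT : S.mem (ModuleCat.of R ↥(Submodule.torsionBySet R X (J : Set R)))) :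
    S.mem (ModuleCat.of R ↥(Submodule.torsionBySet R (X ⧸ L) (J : Set R))) := by
  obtain ⟨r, s, hs⟩ := Submodule.fg_iff_exists_fin_generating_family.mp
    (IsNoetherian.noetherian J)
  set tors := Submodule.torsionBySet R X (J : Set R) with htors
  set W := Submodule.torsionBySet R (X ⧸ L) (J : Set R) with hWdef
  set T := W.comap L.mkQ with hTdef
  have hsJ : ∀ i, s i ∈ J := fun i => by
    rw [← hs]; exact Submodule.subset_span (Set.mem_range_self i)
  have hJsmul : ∀ m ∈ T, ∀ a ∈ J, a • m ∈ L := by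
    intro m hm a ha
    have h1 : a • (L.mkQ m) = 0 :=
      (Submodule.mem_torsionBySet_iff _ _).mp (Submodule.mem_comap.mp hm) ⟨a, ha⟩
    rw [← map_smul, Submodule.mkQ_apply] at h1
    exact (Submodule.Quotient.mk_eq_zero L).mp h1
  have hLT : L ≤ T := by
    intro l hl
    refine Submodule.mem_comap.mpr ?_
    have : L.mkQ l = 0 := by
      rw [Submodule.mkQ_apply]
      exact (Submodule.Quotient.mk_eq_zero L).mpr hl
    rw [this]; exact W.zero_mem
  have htorsT : tors ≤ T := by
    intro t ht
    refine Submodule.mem_comap.mpr ((Submodule.mem_torsionBySet_iff _ _).mpr ?_)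
    rintro ⟨a, ha⟩
    rw [← map_smul]
    have h2 : a • t = 0 := (Submodule.mem_torsionBySet_iff _ _).mp ht ⟨a, ha⟩
    rw [h2, map_zero]
  let ρ : ↥L →ₗ[R] (Fin r → ↥L) :=
    { toFun := fun l i => ⟨s i • (l : X), L.smul_mem _ l.2⟩
      map_add' := fun x y => funext fun i => Subtype.ext (by simp [smul_add])
      map_smul' := fun c x => funext fun i =>
        Subtype.ext (by simpa using smul_comm (s i) c (x : X)) }
  let ψ : ↥T →ₗ[R] (Fin r → ↥L) :=
    { toFun := fun m i => ⟨s i • (m : X), hJsmul _ m.2 _ (hsJ i)⟩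
      map_add' := fun x y => funext fun i => Subtype.ext (by simp [smul_add])
      map_smul' := fun c x => funext fun i =>
        Subtype.ext (by simpa using smul_comm (s i) c (x : X)) }
  set D := LinearMap.range ρ with hD
  let χ : ↥T →ₗ[R] ((Fin r → ↥L) ⧸ D) := D.mkQ.comp ψ
  set K := LinearMap.ker χ with hK
  set U := L ⊔ tors with hU
  have hUmem : S.mem (ModuleCat.of R ↥U) := by
    set L2 := Submodule.comap U.subtype L with hL2
    have hq : S.mem (ModuleCat.of R (↥U ⧸ L2)) := by
      refine S.mem_of_surj
        (L2.mkQ.comp (Submodule.inclusion (le_sup_right : tors ≤ U))) ?_ hT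
      intro q
      obtain ⟨u, rfl⟩ := L2.mkQ_surjective q
      obtain ⟨l, hl, t, ht, hlt⟩ := Submodule.mem_sup.mp u.2
      refine ⟨⟨t, ht⟩, ?_⟩
      have hdiff : u - (Submodule.inclusion (le_sup_right : tors ≤ U)) ⟨t, ht⟩ ∈ L2 := by
        refine Submodule.mem_comap.mpr ?_
        have hval : (U.subtype) (u - (Submodule.inclusion (le_sup_right : tors ≤ U)) ⟨t, ht⟩)
            = l := by
          simp only [map_sub, Submodule.coe_subtype]
          have h1 : ((Submodule.inclusion (le_sup_right : tors ≤ U)) ⟨t, ht⟩ : X) = t := rfl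
          rw [h1]
          rw [← hlt]
          abel
        rw [hval]; exact hl
      rw [LinearMap.comp_apply]
      rw [Submodule.mkQ_apply, Submodule.mkQ_apply]
      exact ((Submodule.Quotient.eq L2).mpr hdiff).symm
    exact S.mem_ext (Submodule.inclusion (le_sup_left : L ≤ U)) L2.mkQ
      (Submodule.inclusion_injective _) (L2.mkQ_surjective)
      (by rw [Submodule.range_inclusion, Submodule.ker_mkQ]) hL hq
  have hKU : ∀ x : ↥K, ((x : ↥T) : X) ∈ U := by
    intro x
    have h0 : χ (x : ↥T) = 0 := x.2
    have h1 : ψ (x : ↥T) ∈ D := by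
      rw [LinearMap.comp_apply, Submodule.mkQ_apply] at h0
      exact (Submodule.Quotient.mk_eq_zero D).mp h0
    obtain ⟨l, hl⟩ := h1
    have h2 : ∀ i, s i • (l : X) = s i • ((x : ↥T) : X) := by
      intro i
      have h3 := congrFun hl i
      have h4 := Subtype.ext_iff.mp h3
      exact h4
    have hdiff : ((x : ↥T) : X) - (l : X) ∈ tors := by
      rw [htors, Submodule.mem_torsionBySet_iff]
      rintro ⟨a, ha⟩
      have hle := ann_le_of_span (m := ((x : ↥T) : X) - (l : X)) (s := Set.range s)
        (by rintro _ ⟨i, rfl⟩; rw [smul_sub, h2 i, sub_self])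
      rw [hs] at hle
      exact smul_zero_of_mem_ann hle ha
    have hxval : ((x : ↥T) : X) = (l : X) + (((x : ↥T) : X) - (l : X)) := by abel
    rw [hxval]
    exact U.add_mem ((le_sup_left : L ≤ U) l.2) ((le_sup_right : tors ≤ U) hdiff)
  have hKmem : S.mem (ModuleCat.of R ↥K) := by
    refine S.mem_of_inj
      { toFun := fun x => (⟨((x : ↥T) : X), hKU x⟩ : ↥U)
        map_add' := fun x y => Subtype.ext (by simp)
        map_smul' := fun c x => Subtype.ext (by simp) } ?_ hUmem
    intro x y hxy
    have h2 := Subtype.ext_iff.mp hxy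
    exact Subtype.ext (Subtype.ext h2)
  have hQ2 : S.mem (ModuleCat.of R ((Fin r → ↥L) ⧸ D)) :=
    S.mem_of_surj D.mkQ D.mkQ_surjective (S.mem_pi_s2 hL r)
  have hTq : S.mem (ModuleCat.of R (↥T ⧸ K)) := by
    refine S.mem_of_inj (K.liftQ χ le_rfl) ?_ hQ2
    rw [← LinearMap.ker_eq_bot]
    exact Submodule.ker_liftQ_eq_bot _ _ _ le_rfl
  have hTmem : S.mem (ModuleCat.of R ↥T) :=
    S.mem_ext K.subtype K.mkQ (Submodule.injective_subtype K) (Submodule.mkQ_surjective K)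
      (by rw [Submodule.range_subtype, Submodule.ker_mkQ]) hKmem hTq
  refine S.mem_of_surj
    { toFun := fun m : ↥T => (⟨L.mkQ (m : X), Submodule.mem_comap.mp m.2⟩ : ↥W)
      map_add' := fun x y => Subtype.ext (by simp)
      map_smul' := fun c x => Subtype.ext (by simp) } ?_ hTmem
  intro w
  obtain ⟨x, hx⟩ := L.mkQ_surjective (w : X ⧸ L)
  refine ⟨⟨x, Submodule.mem_comap.mpr (by rw [hx]; exact w.2)⟩, Subtype.ext hx⟩



lemma mem_torsion_pow [IsNoetherianRing R] {M : Type} [AddCommGroup M] [Module R M]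
    (I : Ideal R)
    (hI : S.mem (ModuleCat.of R ↥(Submodule.torsionBySet R M (I : Set R)))) :
    ∀ k : ℕ, S.mem (ModuleCat.of R ↥(Submodule.torsionBySet R M ((I ^ k : Ideal R) : Set R))) := by
  intro k
  induction k with
  | zero =>
    have hone : (1:R) ∈ ((I ^ 0 : Ideal R) : Set R) := by
      rw [pow_zero, Ideal.one_eq_top]
      exact SetLike.mem_coe.mpr Submodule.mem_top
    have h0 : ∀ y : ↥(Submodule.torsionBySet R M ((I ^ 0 : Ideal R) : Set R)), (y:M) = 0 := by
      intro y
      have h1 := (Submodule.mem_torsionBySet_iff _ _).mp y.2 ⟨(1:R), hone⟩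
      simpa using h1
    exact S.mem_of_surj (X := ↥(Submodule.torsionBySet R M (I : Set R)))
      (Y := ↥(Submodule.torsionBySet R M ((I ^ 0 : Ideal R) : Set R))) 0
      (fun y => ⟨0, Subtype.ext (by simp [h0 y])⟩) hI
  | succ k ih =>
    obtain ⟨r, s, hs⟩ := Submodule.fg_iff_exists_fin_generating_family.mp
      (IsNoetherian.noetherian I)
    set Tk := Submodule.torsionBySet R M ((I ^ k : Ideal R) : Set R) with hTk
    set Tk1 := Submodule.torsionBySet R M ((I ^ (k+1) : Ideal R) : Set R) with hTk1
    have hsI : ∀ i, s i ∈ I := fun i => by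
      rw [← hs]; exact Submodule.subset_span (Set.mem_range_self i)
    have key : ∀ (m : M), (∀ i, s i • m = 0) → ∀ x ∈ I, x • m = 0 := by
      intro m hm x hx
      have hle := ann_le_of_span (m := m) (s := Set.range s)
        (by rintro _ ⟨i, rfl⟩; exact hm i)
      rw [hs] at hle
      exact smul_zero_of_mem_ann hle hx
    have hmem : ∀ (m : ↥Tk1) (i : Fin r), s i • (m : M) ∈ Tk := by
      intro m i
      rw [Submodule.mem_torsionBySet_iff]
      rintro ⟨a, ha⟩
      rw [smul_smul]
      have hmul : a * s i ∈ I ^ (k+1) := by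
        rw [pow_succ]
        exact Ideal.mul_mem_mul (SetLike.mem_coe.mp ha) (hsI i)
      exact (Submodule.mem_torsionBySet_iff _ _).mp m.2 ⟨_, SetLike.mem_coe.mpr hmul⟩
    let φ : ↥Tk1 →ₗ[R] (Fin r → ↥Tk) :=
      { toFun := fun m i => ⟨s i • (m : M), hmem m i⟩
        map_add' := fun x y => funext fun i => Subtype.ext (by simp [smul_add])
        map_smul' := fun c x => funext fun i =>
          Subtype.ext (by simpa using smul_comm (s i) c (x : M)) }
    set K := LinearMap.ker φ with hK
    have hxK : ∀ (x : ↥K), ((x : ↥Tk1) : M) ∈ Submodule.torsionBySet R M (I : Set R) := by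
      intro x
      rw [Submodule.mem_torsionBySet_iff]
      rintro ⟨a, ha⟩
      refine key _ ?_ a (SetLike.mem_coe.mp ha)
      intro i
      have h0 : φ (x : ↥Tk1) = 0 := x.2
      have h1 := congrFun h0 i
      exact Subtype.ext_iff.mp h1
    have hKmem : S.mem (ModuleCat.of R ↥K) := by
      refine S.mem_of_inj (Y := ↥(Submodule.torsionBySet R M (I : Set R)))
        { toFun := fun x => ⟨((x : ↥Tk1) : M), hxK x⟩
          map_add' := fun x y => Subtype.ext (by simp)
          map_smul' := fun c x => Subtype.ext (by simp) } ?_ hI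
      intro x y hxy
      have h2 := Subtype.ext_iff.mp hxy
      exact Subtype.ext (Subtype.ext h2)
    have hBmem : S.mem (ModuleCat.of R (↥Tk1 ⧸ K)) := by
      refine S.mem_of_inj (K.liftQ φ le_rfl) ?_ (S.mem_pi_s2 ih r)
      rw [← LinearMap.ker_eq_bot]
      exact Submodule.ker_liftQ_eq_bot _ _ _ le_rfl
    exact S.mem_ext K.subtype K.mkQ (Submodule.injective_subtype K) (Submodule.mkQ_surjective K)
      (by rw [Submodule.range_subtype, Submodule.ker_mkQ]) hKmem hBmem

lemma mainJ [IsNoetherianRing R] (h : ∀ p : PrimeSpectrum R, 1 ≤ Order.height p → p ∈ MP R S.mem) :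
    ∀ J : Ideal R,
      (∀ q : Ideal R, q.IsPrime → J ≤ q → ∃ q₀ : Ideal R, q₀.IsPrime ∧ q₀ < q) →
      MelkerssonCondition R S.mem J := by
  intro J
  refine WellFoundedGT.induction (motive := fun I : Ideal R =>
    (∀ q : Ideal R, q.IsPrime → I ≤ q → ∃ q₀ : Ideal R, q₀.IsPrime ∧ q₀ < q) →
    MelkerssonCondition R S.mem I) J ?_
  clear J
  intro J IH hJht
  have hprime : ∀ (q : Ideal R) (hq : q.IsPrime), J ≤ q → MelkerssonCondition R S.mem q := by
    intro q hq hle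
    obtain ⟨q₀, hq₀, hlt⟩ := hJht q hq hle
    have h1 : (1 : ℕ∞) ≤ Order.height (⟨q, hq⟩ : PrimeSpectrum R) := by
      by_contra hcon
      have h0 : Order.height (⟨q, hq⟩ : PrimeSpectrum R) = 0 :=
        ENat.lt_one_iff_eq_zero.mp (not_le.mp hcon)
      have hmin : IsMin (⟨q, hq⟩ : PrimeSpectrum R) := Order.height_eq_zero.mp h0
      have hle2 : (⟨q₀, hq₀⟩ : PrimeSpectrum R) ≤ ⟨q, hq⟩ := hlt.le
      have hle3 : q ≤ q₀ := hmin hle2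
      exact (not_le_of_gt hlt) hle3
    exact h ⟨q, hq⟩ h1
  by_cases hJtop : J = ⊤
  · subst hJtop
    intro M hM hSM
    refine S.mem_of_surjective
      (M := ModuleCat.of R ↥(Submodule.torsionBySet R M (((⊤ : Ideal R)) : Set R))) (N := M)
      (Submodule.torsionBySet R M (((⊤ : Ideal R)) : Set R)).subtype ?_ hSM
    intro m
    have hm0 : m = 0 := by
      obtain ⟨n, hn⟩ := hM m
      have h1 := hn 1 (by rw [Ideal.top_pow]; trivial)
      simpa using h1
    exact ⟨0, by simp [hm0]⟩
  by_cases hJp : J.IsPrime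
  · exact hprime J hJp le_rfl
  obtain ⟨a, ha, b, hb, hab⟩ := (Ideal.not_isPrime_iff.mp hJp).resolve_left hJtop
  set J' := J ⊔ Ideal.span {a} with hJ'
  set J'' := J ⊔ Ideal.span {b} with hJ''
  have haJ' : a ∈ J' := Submodule.mem_sup_right (Ideal.subset_span rfl)
  have hbJ'' : b ∈ J'' := Submodule.mem_sup_right (Ideal.subset_span rfl)
  have hlt' : J < J' := lt_of_le_of_ne le_sup_left (fun hEq => ha (by rw [hEq]; exact haJ'))
  have hlt'' : J < J'' := lt_of_le_of_ne le_sup_left (fun hEq => hb (by rw [hEq]; exact hbJ''))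
  have C' := IH J' hlt' (fun q hq hle => hJht q hq (le_trans le_sup_left hle))
  have C'' := IH J'' hlt'' (fun q hq hle => hJht q hq (le_trans le_sup_left hle))
  intro M hM hSM
  set L : Submodule R M :=
    { carrier := {m : M | ∃ k : ℕ, a ^ k • m = 0}
      add_mem' := by
        rintro x y ⟨k, hk⟩ ⟨l, hl⟩
        refine ⟨k + l, ?_⟩
        have h1 : a ^ (k + l) • x = 0 := by rw [pow_add, mul_comm, mul_smul, hk, smul_zero]
        have h2 : a ^ (k + l) • y = 0 := by rw [pow_add, mul_smul, hl, smul_zero]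
        rw [smul_add, h1, h2, add_zero]
      zero_mem' := ⟨0, smul_zero _⟩
      smul_mem' := by
        rintro c x ⟨k, hk⟩
        exact ⟨k, by rw [smul_comm, hk, smul_zero]⟩ } with hLdef
  have hSL : S.mem (ModuleCat.of R ↥L) := by
    refine C' (ModuleCat.of R ↥L) ?_ ?_
    · rintro ⟨m, hmL⟩
      obtain ⟨k, hk⟩ := hmL
      obtain ⟨n, hn⟩ := hM m
      refine ⟨n + k, ?_⟩
      intro x hx
      have hle2 : J' ^ (n + k) ≤ J ^ n ⊔ Ideal.span {a} ^ k := Ideal.sup_pow_add_le_pow_sup_pow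
      have hle3 : J ^ n ⊔ Ideal.span {a} ^ k ≤
          LinearMap.ker (LinearMap.toSpanSingleton R M m) := by
        refine sup_le (le_ann_iff.mpr hn) ?_
        rw [Ideal.span_singleton_pow]
        refine (Ideal.span_le).mpr ?_
        intro y hy
        rw [Set.mem_singleton_iff] at hy
        subst hy
        simpa only [SetLike.mem_coe, LinearMap.mem_ker, LinearMap.toSpanSingleton_apply] using hk
      have h4 : x • m = 0 := smul_zero_of_mem_ann (le_trans hle2 hle3) hx
      exact Subtype.ext h4
    · show S.mem (ModuleCat.of R ↥(Submodule.torsionBySet R ↥L ((J' : Ideal R) : Set R)))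
      have hmem2 : ∀ x : ↥(Submodule.torsionBySet R ↥L (J' : Set R)),
          ((x : ↥L) : M) ∈ Submodule.torsionBySet R M (J : Set R) := by
        intro x
        rw [Submodule.mem_torsionBySet_iff]
        rintro ⟨c, hc⟩
        have h5 : c • (x : ↥L) = 0 := (Submodule.mem_torsionBySet_iff _ _).mp x.2
          ⟨c, SetLike.mem_coe.mpr ((le_sup_left : J ≤ J') (SetLike.mem_coe.mp hc))⟩
        have h6 := Subtype.ext_iff.mp h5
        simpa only [Submodule.coe_smul, Submodule.coe_zero] using h6
      refine S.mem_of_inj (Y := ↥(Submodule.torsionBySet R M (J : Set R)))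
        { toFun := fun x =>
            (⟨((x : ↥L) : M), hmem2 x⟩ : ↥(Submodule.torsionBySet R M (J : Set R)))
          map_add' := fun x y => Subtype.ext (by simp)
          map_smul' := fun c x => Subtype.ext (by simp) } ?_ hSM
      intro x y hxy
      have h2 := Subtype.ext_iff.mp hxy
      exact Subtype.ext (Subtype.ext h2)
  have hQtors : IsTorsionByPowers R J'' (ModuleCat.of R (M ⧸ L)) := by
    intro mq
    obtain ⟨m, rfl⟩ := Submodule.Quotient.mk_surjective L mq
    obtain ⟨n, hn⟩ := hM m
    refine ⟨n + n, ?_⟩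
    intro x hx
    have hle2 : J'' ^ (n + n) ≤ J ^ n ⊔ Ideal.span {b} ^ n := Ideal.sup_pow_add_le_pow_sup_pow
    have hle3 : J ^ n ⊔ Ideal.span {b} ^ n ≤
        LinearMap.ker (LinearMap.toSpanSingleton R (M ⧸ L) (Submodule.Quotient.mk m)) := by
      refine sup_le (le_ann_iff.mpr ?_) ?_
      · intro y hy
        rw [← Submodule.Quotient.mk_smul, hn y hy, Submodule.Quotient.mk_zero]
      · rw [Ideal.span_singleton_pow]
        refine (Ideal.span_le).mpr ?_
        intro y hy
        rw [Set.mem_singleton_iff] at hy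
        subst hy
        have hbm : b ^ n • m ∈ L := by
          refine ⟨n, ?_⟩
          rw [smul_smul, ← mul_pow]
          exact hn _ (Ideal.pow_mem_pow hab n)
        have h7 : b ^ n • (Submodule.Quotient.mk m : M ⧸ L) = 0 := by
          rw [← Submodule.Quotient.mk_smul]
          exact (Submodule.Quotient.mk_eq_zero L).mpr hbm
        simpa [LinearMap.mem_ker, LinearMap.toSpanSingleton_apply] using h7
    exact smul_zero_of_mem_ann (le_trans hle2 hle3) hx
  have hsub'' : S.mem (ModuleCat.of R ↥(Submodule.torsionBySet R M (J'' : Set R))) := by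
    have hmem3 : ∀ x : ↥(Submodule.torsionBySet R M (J'' : Set R)),
        (x : M) ∈ Submodule.torsionBySet R M (J : Set R) := by
      intro x
      rw [Submodule.mem_torsionBySet_iff]
      rintro ⟨c, hc⟩
      exact (Submodule.mem_torsionBySet_iff _ _).mp x.2
        ⟨c, SetLike.mem_coe.mpr ((le_sup_left : J ≤ J'') (SetLike.mem_coe.mp hc))⟩
    refine S.mem_of_inj (Y := ↥(Submodule.torsionBySet R M (J : Set R)))
      { toFun := fun x =>
          (⟨(x : M), hmem3 x⟩ : ↥(Submodule.torsionBySet R M (J : Set R)))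
        map_add' := fun x y => Subtype.ext (by simp)
        map_smul' := fun c x => Subtype.ext (by simp) } ?_ hSM
    intro x y hxy
    have h2 := Subtype.ext_iff.mp hxy
    exact Subtype.ext h2
  have hW := S.crux L J'' hSL hsub''
  have hSQ : S.mem (ModuleCat.of R (M ⧸ L)) := by
    refine C'' (ModuleCat.of R (M ⧸ L)) hQtors ?_
    exact hW
  exact S.mem_of_extension (A := ModuleCat.of R ↥L) (M := M) (B := ModuleCat.of R (M ⧸ L))
    L.subtype L.mkQ (Submodule.injective_subtype L) (Submodule.mkQ_surjective L)
    (by rw [Submodule.range_subtype, Submodule.ker_mkQ]) hSL hSQ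


end SerreClass

lemma exists_killer {R : Type} [CommRing R] [IsNoetherianRing R] {p : Ideal R}
    (hp : p ∈ minimalPrimes R) : ∃ (n : ℕ) (s : R), s ∉ p ∧ ∀ x ∈ p ^ n, s * x = 0 := by
  have hpp : p.IsPrime := hp.1.1
  set Rp := Localization.AtPrime p with hRp
  haveI : IsNoetherianRing Rp := IsLocalization.isNoetherianRing p.primeCompl Rp ‹IsNoetherianRing R›
  obtain ⟨n, hn⟩ := IsNoetherianRing.isNilpotent_nilradical Rp
  have hmax : IsLocalRing.maximalIdeal Rp ≤ nilradical Rp := by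
    rw [nilradical_eq_sInf]
    refine le_sInf ?_
    rintro P hP
    haveI hPp : P.IsPrime := hP
    have hcle : P.comap (algebraMap R Rp) ≤ p := by
      intro x hx
      by_contra hxp
      have hu : IsUnit (algebraMap R Rp x) :=
        (IsLocalization.AtPrime.isUnit_to_map_iff Rp p x).mpr hxp
      exact hPp.ne_top (P.eq_top_of_isUnit_mem hx hu)
    haveI : (P.comap (algebraMap R Rp)).IsPrime := Ideal.IsPrime.comap _
    have hcge : p ≤ P.comap (algebraMap R Rp) := hp.2 ⟨inferInstance, bot_le⟩ hcle
    rw [← Localization.AtPrime.map_eq_maximalIdeal]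
    calc Ideal.map (algebraMap R Rp) p
        ≤ Ideal.map (algebraMap R Rp) (P.comap (algebraMap R Rp)) := Ideal.map_mono hcge
      _ ≤ P := Ideal.map_comap_le
  have hpow : ∀ x ∈ p ^ n, algebraMap R Rp x = 0 := by
    intro x hx
    have h1 : algebraMap R Rp x ∈ (Ideal.map (algebraMap R Rp) p) ^ n := by
      rw [← Ideal.map_pow]
      exact Ideal.mem_map_of_mem _ hx
    have h2 : (Ideal.map (algebraMap R Rp) p) ^ n ≤ ⊥ := by
      rw [Localization.AtPrime.map_eq_maximalIdeal]
      calc (IsLocalRing.maximalIdeal Rp) ^ n ≤ (nilradical Rp) ^ n :=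
            Ideal.pow_right_mono hmax n
        _ = ⊥ := hn
    simpa using h2 h1
  classical
  have key : ∀ T : Finset R, (∀ x ∈ T, algebraMap R Rp x = 0) →
      ∃ s : R, s ∉ p ∧ ∀ x ∈ Ideal.span (T : Set R), s * x = 0 := by
    intro T
    induction T using Finset.induction_on with
    | empty =>
      intro _
      refine ⟨1, fun h1 => hpp.ne_top ((Ideal.eq_top_iff_one p).mpr h1), ?_⟩
      intro x hx
      rw [Finset.coe_empty, Ideal.span_empty] at hx
      rw [Submodule.mem_bot] at hx
      rw [hx, mul_zero]
    | @insert a T hanot ih =>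
      intro hall
      obtain ⟨s0, hs0, hkill⟩ := ih (fun x hx => hall x (Finset.mem_insert_of_mem hx))
      obtain ⟨m, hm⟩ := (IsLocalization.map_eq_zero_iff p.primeCompl Rp _).mp
        (hall a (Finset.mem_insert_self a T))
      refine ⟨(m : R) * s0, ?_, ?_⟩
      · intro hmem
        rcases hpp.mem_or_mem hmem with h1 | h1
        · exact m.2 h1
        · exact hs0 h1
      · intro x hx
        have hle := ann_le_of_span (M := R) (m := ((m : R) * s0))
          (s := ((insert a T : Finset R) : Set R)) ?_
        · have h3 := smul_zero_of_mem_ann hle hx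
          rw [smul_eq_mul] at h3
          rw [mul_comm]
          exact h3
        · intro y hy
          rw [Finset.coe_insert, Set.mem_insert_iff] at hy
          rcases hy with rfl | hy
          · rw [smul_eq_mul, show y * ((m : R) * s0) = ((m : R) * y) * s0 by ring, hm, zero_mul]
          · rw [smul_eq_mul, show y * ((m : R) * s0) = (m : R) * (s0 * y) by ring,
              hkill y (Ideal.subset_span hy), mul_zero]
  obtain ⟨T, hT⟩ := (IsNoetherian.noetherian (p ^ n) : (p ^ n).FG)
  obtain ⟨s, hsnp, hskill⟩ := key T (fun x hx => hpow x (by rw [← hT]; exact Ideal.subset_span hx))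
  exact ⟨n, s, hsnp, fun x hx => hskill x (show x ∈ Submodule.span R ((T : Finset R) : Set R) by rw [hT]; exact hx)⟩


end AuxiliaryLemmas

/-- If `MP[S]` contains every prime of height at least one, then it contains all
minimal primes; in particular `MP[S] = Spec R`. -/
theorem stmt_2 {R : Type} [CommRing R] [IsNoetherianRing R] (S : SerreClass R)
    (h : ∀ p : PrimeSpectrum R, 1 ≤ Order.height p → p ∈ MP R S.mem) :
    (∀ p : PrimeSpectrum R, p.asIdeal ∈ minimalPrimes R → p ∈ MP R S.mem) ∧
    MP R S.mem = Set.univ := by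
  have part1 : ∀ p : PrimeSpectrum R, p.asIdeal ∈ minimalPrimes R → p ∈ MP R S.mem := by
    intro p hp
    obtain ⟨n, s, hsnp, hskill⟩ := exists_killer hp
    show MelkerssonCondition R S.mem p.asIdeal
    intro M hM hSM
    set Tn := Submodule.torsionBySet R M ((p.asIdeal ^ n : Ideal R) : Set R) with hTn
    have hTnmem := S.mem_torsion_pow p.asIdeal hSM n
    set K := LinearMap.ker ((LinearMap.lsmul R M) s) with hK
    have hφmem : ∀ m : M, s • m ∈ Tn := by
      intro m
      rw [hTn, Submodule.mem_torsionBySet_iff]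
      rintro ⟨x, hx⟩
      rw [smul_smul]
      have h0 : x * s = 0 := by rw [mul_comm]; exact hskill x (SetLike.mem_coe.mp hx)
      rw [h0, zero_smul]
    let φ : M →ₗ[R] ↥Tn :=
      { toFun := fun m => ⟨s • m, hφmem m⟩
        map_add' := fun x y => Subtype.ext (by simp [smul_add])
        map_smul' := fun c x => Subtype.ext (by simpa using smul_comm s c x) }
    have hkerφ : LinearMap.ker φ = K := by
      ext m
      constructor
      · intro hm
        have h1 := Subtype.ext_iff.mp (LinearMap.mem_ker.mp hm)
        rw [hK]
        rw [LinearMap.mem_ker, LinearMap.lsmul_apply]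
        exact h1
      · intro hm
        have h1 : s • m = 0 := by
          have := LinearMap.mem_ker.mp (hK ▸ hm)
          simpa only [LinearMap.lsmul_apply] using this
        refine LinearMap.mem_ker.mpr (Subtype.ext ?_)
        exact h1
    have hQmem : S.mem (ModuleCat.of R (↥M ⧸ K)) := by
      refine S.mem_of_inj (K.liftQ φ hkerφ.ge) ?_ hTnmem
      rw [← LinearMap.ker_eq_bot]
      exact Submodule.ker_liftQ_eq_bot _ _ _ hkerφ.le
    set J := p.asIdeal ⊔ Ideal.span {s} with hJ
    have hJht : ∀ q : Ideal R, q.IsPrime → J ≤ q → ∃ q₀ : Ideal R, q₀.IsPrime ∧ q₀ < q := by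
      intro q hq hle
      refine ⟨p.asIdeal, p.2, lt_of_le_of_ne (le_trans le_sup_left hle) ?_⟩
      intro hEq
      exact hsnp (by rw [hEq]; exact hle (Submodule.mem_sup_right (Ideal.subset_span rfl)))
    have hKtors : IsTorsionByPowers R J (ModuleCat.of R ↥K) := by
      rintro ⟨m, hm⟩
      obtain ⟨n', hn'⟩ := hM m
      refine ⟨n' + 1, ?_⟩
      intro x hx
      have hle2 : J ^ (n' + 1) ≤ p.asIdeal ^ n' ⊔ Ideal.span {s} ^ 1 :=
        Ideal.sup_pow_add_le_pow_sup_pow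
      have hsm : s • m = 0 := by
        have := LinearMap.mem_ker.mp hm
        simpa only [LinearMap.lsmul_apply] using this
      have hle3 : p.asIdeal ^ n' ⊔ Ideal.span {s} ^ 1 ≤
          LinearMap.ker (LinearMap.toSpanSingleton R M m) := by
        refine sup_le (le_ann_iff.mpr hn') ?_
        rw [pow_one]
        refine (Ideal.span_le).mpr ?_
        intro y hy
        rw [Set.mem_singleton_iff] at hy
        subst hy
        simpa only [SetLike.mem_coe, LinearMap.mem_ker, LinearMap.toSpanSingleton_apply] using hsm
      exact Subtype.ext (smul_zero_of_mem_ann (le_trans hle2 hle3) hx)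
    have hKsub : S.mem (ModuleCat.of R ↥(Submodule.torsionBySet R ↥K (J : Set R))) := by
      have hmem3 : ∀ x : ↥(Submodule.torsionBySet R ↥K (J : Set R)),
          ((x : ↥K) : M) ∈ Submodule.torsionBySet R M ((p.asIdeal : Ideal R) : Set R) := by
        intro x
        rw [Submodule.mem_torsionBySet_iff]
        rintro ⟨c, hc⟩
        have h5 : c • (x : ↥K) = 0 := (Submodule.mem_torsionBySet_iff _ _).mp x.2
          ⟨c, SetLike.mem_coe.mpr ((le_sup_left : p.asIdeal ≤ J) (SetLike.mem_coe.mp hc))⟩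
        have h6 := Subtype.ext_iff.mp h5
        simpa only [Submodule.coe_smul, Submodule.coe_zero] using h6
      refine S.mem_of_inj (Y := ↥(Submodule.torsionBySet R M ((p.asIdeal : Ideal R) : Set R)))
        { toFun := fun x => ⟨((x : ↥K) : M), hmem3 x⟩
          map_add' := fun x y => Subtype.ext (by simp)
          map_smul' := fun c x => Subtype.ext (by simp) } ?_ hSM
      intro x y hxy
      have h2 := Subtype.ext_iff.mp hxy
      exact Subtype.ext (Subtype.ext h2)
    have hKmem : S.mem (ModuleCat.of R ↥K) := by
      refine S.mainJ h J hJht (ModuleCat.of R ↥K) hKtors ?_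
      exact hKsub
    exact S.mem_of_extension (A := ModuleCat.of R ↥K) (M := M) (B := ModuleCat.of R (↥M ⧸ K))
      K.subtype K.mkQ (Submodule.injective_subtype K) (Submodule.mkQ_surjective K)
      (by rw [Submodule.range_subtype, Submodule.ker_mkQ]) hKmem hQmem
  refine ⟨part1, ?_⟩
  apply Set.eq_univ_of_forall
  intro q
  by_cases hq : 1 ≤ Order.height q
  · exact h q hq
  · have h0 : Order.height q = 0 := ENat.lt_one_iff_eq_zero.mp (not_le.mp hq)
    have hmin : IsMin q := Order.height_eq_zero.mp h0
    refine part1 q ?_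
    rw [minimalPrimes_eq_minimals]
    refine ⟨q.2, ?_⟩
    intro y hy hyle
    exact hmin (show (⟨y, hy⟩ : PrimeSpectrum R) ≤ q from hyle)
end

section
/- Let R be a commutative noetherian ring and S a nonzero Serre subcategory of the category of R-modules. If every maximal ideal of R belongs to MP[S], then there exists a maximal ideal m of R such that the injective hull E_R(R/m) belongs to S. In particular, if R is a noetherian local ring with maximal ideal m and m ∈ MP[S], then S contains every Artinian R-module. -/
/-!
Common framework: a *Serre class* is a class of (bundled) `R`-modules closed under
submodules, quotient modules and extensions.  `MelkerssonCondition R P I` is the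
Melkersson condition `(C_I)`: if `Γ_I(M) = M` (every element of `M` is annihilated by
some power of `I`) and `(0 :_M I)` (the `I`-torsion-by-`I` submodule `torsionBySet`)
belongs to the class, then `M` belongs to the class.  `MP R P` is the set of prime
ideals `p` such that the class satisfies `(C_p)`.
-/

open CategoryTheory

variable (R : Type) [CommRing R]

section Aux

variable {R : Type} [CommRing R]

/-- A Serre class is closed under isomorphisms. -/
theorem SerreClass.mem_of_equiv_s3 (S : SerreClass R) {X Y : Type} [AddCommGroup X] [Module R X]
    [AddCommGroup Y] [Module R Y] (e : X ≃ₗ[R] Y) (h : S.mem (ModuleCat.of R X)) :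
    S.mem (ModuleCat.of R Y) :=
  S.mem_of_surjective (M := ModuleCat.of R X) (N := ModuleCat.of R Y)
    e.toLinearMap e.surjective h

/-- A nonzero Serre class contains every subsingleton module. -/
theorem serre_mem_subsingleton (S : SerreClass R)
    (hS : ∃ M : ModuleCat.{0} R, S.mem M ∧ Nontrivial M)
    (Z : Type) [AddCommGroup Z] [Module R Z] [Subsingleton Z] :
    S.mem (ModuleCat.of R Z) := by
  obtain ⟨M₀, hM₀, -⟩ := hS
  exact S.mem_of_injective (M := ModuleCat.of R Z) (N := M₀) 0
    (fun a b _ => Subsingleton.elim (α := Z) a b) hM₀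

/-- A nonzero Serre class contains some `R ⧸ m`, `m` maximal. -/
theorem serre_exists_maximal [IsNoetherianRing R] (S : SerreClass R)
    (hS : ∃ M : ModuleCat.{0} R, S.mem M ∧ Nontrivial M) :
    ∃ m : Ideal R, m.IsMaximal ∧ S.mem (ModuleCat.of R (R ⧸ m)) := by
  obtain ⟨M₀, hM₀, hnt⟩ := hS
  obtain ⟨x, y, hxy⟩ := hnt
  have hz0 : x - y ≠ 0 := sub_ne_zero.mpr hxy
  set φ := LinearMap.toSpanSingleton R M₀ (x - y) with hφ
  have h1 : (1 : R) ∉ LinearMap.ker φ := by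
    simp only [LinearMap.mem_ker, hφ, LinearMap.toSpanSingleton_apply, one_smul]
    exact hz0
  obtain ⟨m, hm, hle⟩ := Ideal.exists_le_maximal (LinearMap.ker φ)
    (fun h => h1 (h ▸ Submodule.mem_top))
  have hq : S.mem (ModuleCat.of R (R ⧸ LinearMap.ker φ)) := by
    refine S.mem_of_injective (M := ModuleCat.of R (R ⧸ LinearMap.ker φ)) (N := M₀)
      ((LinearMap.ker φ).liftQ φ le_rfl) ?_ hM₀
    rw [← LinearMap.ker_eq_bot]
    exact Submodule.ker_liftQ_eq_bot _ _ _ le_rfl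
  refine ⟨m, hm, ?_⟩
  refine S.mem_of_surjective (M := ModuleCat.of R (R ⧸ LinearMap.ker φ))
    (N := ModuleCat.of R (R ⧸ m))
    (Submodule.mapQ _ m LinearMap.id (by simpa using hle)) ?_ hq
  intro w
  obtain ⟨r, rfl⟩ := Submodule.Quotient.mk_surjective m w
  exact ⟨Submodule.Quotient.mk r, rfl⟩

/-- A nonzero Serre class containing `k` contains all `kⁿ`. -/
theorem serre_mem_pi (S : SerreClass R)
    (hS : ∃ M : ModuleCat.{0} R, S.mem M ∧ Nontrivial M)
    {k : Type} [AddCommGroup k] [Module R k]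
    (hk : S.mem (ModuleCat.of R k)) : ∀ n : ℕ, S.mem (ModuleCat.of R (Fin n → k)) := by
  intro n
  induction n with
  | zero => exact serre_mem_subsingleton S hS _
  | succ n ih =>
    have hinj : Function.Injective (LinearMap.single R (fun _ : Fin (n + 1) => k) 0) :=
      LinearMap.ker_eq_bot.mp (LinearMap.ker_single R (fun _ : Fin (n + 1) => k) 0)
    have hsurj : Function.Surjective
        (LinearMap.funLeft R k (Fin.succ : Fin n → Fin (n + 1))) :=
      LinearMap.funLeft_surjective_of_injective _ _ _ (Fin.succ_injective n)
    have hrk : LinearMap.range (LinearMap.single R (fun _ : Fin (n + 1) => k) 0)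
        = LinearMap.ker (LinearMap.funLeft R k (Fin.succ : Fin n → Fin (n + 1))) := by
      apply le_antisymm
      · rintro v ⟨a, rfl⟩
        rw [LinearMap.mem_ker]
        funext j
        have h1 : (Fin.succ j : Fin (n + 1)) ≠ 0 := Fin.succ_ne_zero j
        simp [LinearMap.funLeft_apply, LinearMap.single_apply, Pi.single_eq_of_ne h1]
      · intro v hv
        have hv' : ∀ j : Fin n, v j.succ = 0 := by
          intro j
          have := congrFun (LinearMap.mem_ker.mp hv) j
          simpa [LinearMap.funLeft_apply] using this
        refine ⟨v 0, funext fun idx => ?_⟩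
        refine Fin.cases ?_ ?_ idx
        · simp [LinearMap.single_apply]
        · intro j
          have h1 : (Fin.succ j : Fin (n + 1)) ≠ 0 := Fin.succ_ne_zero j
          simp [LinearMap.single_apply, Pi.single_eq_of_ne h1, hv' j]
    exact S.mem_of_extension (A := ModuleCat.of R k)
      (M := ModuleCat.of R (Fin (n + 1) → k)) (B := ModuleCat.of R (Fin n → k))
      (LinearMap.single R (fun _ : Fin (n + 1) => k) 0)
      (LinearMap.funLeft R k (Fin.succ : Fin n → Fin (n + 1))) hinj hsurj hrk hk ih

/-- A nonzero Serre class containing `R ⧸ m` contains every Artinian `m`-torsion module. -/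
theorem serre_mem_of_artinian_torsion (S : SerreClass R)
    (hS : ∃ M : ModuleCat.{0} R, S.mem M ∧ Nontrivial M)
    (m : Ideal R) [m.IsMaximal] (hk : S.mem (ModuleCat.of R (R ⧸ m)))
    (T : Type) [AddCommGroup T] [Module R T] [IsArtinian R T]
    (hT : Module.IsTorsionBySet R T (m : Set R)) :
    S.mem (ModuleCat.of R T) := by
  letI : Field (R ⧸ m) := Ideal.Quotient.field m
  letI : Module (R ⧸ m) T := (by exact hT.module)
  haveI : IsScalarTower R (R ⧸ m) T := (by exact hT.isScalarTower)
  haveI : IsArtinian (R ⧸ m) T := isArtinian_of_tower R ‹IsArtinian R T›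
  haveI : Module.Finite (R ⧸ m) T := (IsSemisimpleModule.finite_tfae.out 2 0).mp ‹_›
  let e : T ≃ₗ[R ⧸ m] (Fin (Module.finrank (R ⧸ m) T) → R ⧸ m) :=
    (Module.finBasis (R ⧸ m) T).equivFun
  exact S.mem_of_equiv_s3 (e.restrictScalars R).symm (serre_mem_pi S hS hk _)

/-- Over a noetherian local ring, Artinian modules are `m`-power torsion. -/
theorem artinian_isTorsionByPowers [IsNoetherianRing R] [IsLocalRing R]
    (M : Type) [AddCommGroup M] [Module R M] [IsArtinian R M] (x : M) :
    ∃ n : ℕ, ∀ a ∈ (IsLocalRing.maximalIdeal R) ^ n, a • x = 0 := by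
  set m := IsLocalRing.maximalIdeal R with hm
  set N : Submodule R M := R ∙ x with hN
  obtain ⟨n, hn⟩ := IsArtinian.monotone_stabilizes (R := R) (M := M)
    ⟨fun i => OrderDual.toDual ((m ^ i) • N),
      fun i j h => Submodule.smul_mono_left (Ideal.pow_le_pow_right h)⟩
  have key : (m ^ n) • N = (m ^ (n + 1)) • N :=
    congrArg OrderDual.ofDual (hn (n + 1) (Nat.le_succ n))
  have hsub : (m ^ n) • N ≤ m • ((m ^ n) • N) := by
    have h2 : (m ^ (n + 1)) • N = m • ((m ^ n) • N) := by
      rw [pow_succ', ← Ideal.smul_eq_mul, Submodule.smul_assoc]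
    exact le_of_eq (key.trans h2)
  have hfg : ((m ^ n) • N).FG := by
    haveI : IsNoetherian R ↥N := isNoetherian_of_fg_of_noetherian N (Submodule.fg_span_singleton x)
    have hle : (m ^ n) • N ≤ N := Submodule.smul_le_right
    have h2 := (IsNoetherian.noetherian (Submodule.comap N.subtype ((m ^ n) • N))).map N.subtype
    rwa [Submodule.map_comap_subtype, inf_eq_right.mpr hle] at h2
  have hbot : (m ^ n) • N = ⊥ :=
    Submodule.eq_bot_of_le_smul_of_le_jacobson_bot m _ hfg hsub
      (le_of_eq (IsLocalRing.jacobson_eq_maximalIdeal ⊥ bot_ne_top).symm)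
  refine ⟨n, fun a ha => ?_⟩
  have : a • x ∈ (m ^ n) • N :=
    Submodule.smul_mem_smul ha (Submodule.mem_span_singleton_self x)
  rwa [hbot, Submodule.mem_bot] at this

/-- A module that is an essential extension of an `m`-torsion submodule is
`m`-power torsion (over a noetherian ring). -/
theorem isTorsionByPowers_of_essential [IsNoetherianRing R] (m : Ideal R)
    {Emod : Type} [AddCommGroup Emod] [Module R Emod] (k₀ : Submodule R Emod)
    (htor : ∀ z ∈ k₀, ∀ a ∈ m, a • z = 0)
    (hess : ∀ x : Emod, x ≠ 0 → ∃ r : R, r • x ∈ k₀ ∧ r • x ≠ 0)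
    (x : Emod) : ∃ n : ℕ, ∀ a ∈ m ^ n, a • x = 0 := by
  have hrad : m ≤ Ideal.radical (LinearMap.ker (LinearMap.toSpanSingleton R Emod x)) := by
    intro a ha
    have gmono : Monotone (fun n : ℕ =>
        LinearMap.ker (LinearMap.toSpanSingleton R Emod (a ^ n • x))) := by
      apply monotone_nat_of_le_succ
      intro n r hr
      simp only [LinearMap.mem_ker, LinearMap.toSpanSingleton_apply] at *
      rw [smul_smul, show r * a ^ (n + 1) = a * (r * a ^ n) by ring, mul_smul, mul_smul,
        hr, smul_zero]
    obtain ⟨n, hn⟩ := monotone_stabilizes_iff_noetherian.mpr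
      (inferInstance : IsNoetherian R R) ⟨_, gmono⟩
    refine ⟨n, ?_⟩
    simp only [LinearMap.mem_ker, LinearMap.toSpanSingleton_apply]
    by_contra hne
    obtain ⟨r, hr1, hr2⟩ := hess _ hne
    have h0 : a • (r • a ^ n • x) = 0 := htor _ hr1 a ha
    have hmem : r ∈ LinearMap.ker (LinearMap.toSpanSingleton R Emod (a ^ (n + 1) • x)) := by
      simp only [LinearMap.mem_ker, LinearMap.toSpanSingleton_apply]
      rw [smul_smul, show r * a ^ (n + 1) = a * (r * a ^ n) by ring, mul_smul, mul_smul]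
      exact h0
    have hg : LinearMap.ker (LinearMap.toSpanSingleton R Emod (a ^ n • x))
        = LinearMap.ker (LinearMap.toSpanSingleton R Emod (a ^ (n + 1) • x)) :=
      hn (n + 1) (Nat.le_succ n)
    rw [← hg] at hmem
    simp only [LinearMap.mem_ker, LinearMap.toSpanSingleton_apply] at hmem
    exact hr2 hmem
  obtain ⟨n, hle⟩ := Ideal.exists_pow_le_of_le_radical_of_fg hrad (IsNoetherian.noetherian m)
  refine ⟨n, fun a ha => ?_⟩
  have := hle ha
  simpa only [LinearMap.mem_ker, LinearMap.toSpanSingleton_apply] using this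

/-- Existence of injective hulls, with the essential property in elementwise form. -/
theorem exists_injective_hull_data (N : ModuleCat.{0} R) :
    ∃ (E : ModuleCat.{0} R) (f : N →ₗ[R] E),
      Module.Injective R E ∧ Function.Injective f ∧
      (∀ x : E, x ≠ 0 → ∃ r : R, r • x ∈ LinearMap.range f ∧ r • x ≠ 0) := by
  classical
  let J : ModuleCat.{0} R := CategoryTheory.Injective.under N
  let i : ↥N →ₗ[R] ↥J := (CategoryTheory.Injective.ι N).hom
  have hi : Function.Injective i :=
    (ModuleCat.mono_iff_injective (CategoryTheory.Injective.ι N)).mp inferInstance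
  haveI hJofInj : CategoryTheory.Injective (ModuleCat.of R ↥J) :=
    CategoryTheory.Injective.of_iso (Iso.refl _) (inferInstance : CategoryTheory.Injective J)
  have hJext : ∀ (X Y : Type) [AddCommGroup X] [AddCommGroup Y] [Module R X] [Module R Y]
      (φ : X →ₗ[R] Y), Function.Injective φ → ∀ g : X →ₗ[R] ↥J,
      ∃ h : Y →ₗ[R] ↥J, ∀ x, h (φ x) = g x := by
    intro X Y _ _ _ _ φ hφ g
    haveI : CategoryTheory.Mono (ModuleCat.ofHom φ) := (ModuleCat.mono_iff_injective _).mpr hφ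
    obtain ⟨h, hh⟩ := CategoryTheory.Injective.factors
      (ModuleCat.ofHom g : ModuleCat.of R X ⟶ ModuleCat.of R ↥J) (ModuleCat.ofHom φ)
    exact ⟨h.hom, fun x => congrArg (fun k => ModuleCat.Hom.hom k x) hh⟩
  -- Zorn: maximal essential extension of `range i` inside `J`
  let P : Submodule R ↥J → Prop := fun W =>
    LinearMap.range i ≤ W ∧ ∀ x ∈ W, x ≠ 0 → ∃ r : R, r • x ∈ LinearMap.range i ∧ r • x ≠ 0
  have hPr : P (LinearMap.range i) :=
    ⟨le_rfl, fun x hx hx0 => ⟨1, by simpa using hx, by simpa using hx0⟩⟩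
  have hchainP : ∀ c ⊆ {W | P W}, IsChain (· ≤ ·) c →
      ∀ y ∈ c, ∃ ub ∈ {W | P W}, ∀ z ∈ c, z ≤ ub := by
    intro c hcs hchain W₀ hW₀
    refine ⟨sSup c, ⟨le_trans (hcs hW₀).1 (le_sSup hW₀), ?_⟩, fun z hz => le_sSup hz⟩
    intro x hx hx0
    obtain ⟨W, hWc, hxW⟩ :=
      (Submodule.mem_sSup_of_directed ⟨W₀, hW₀⟩ hchain.directedOn).mp hx
    exact (hcs hWc).2 x hxW hx0
  obtain ⟨E₀, -, hE₀max⟩ := zorn_le_nonempty₀ {W | P W} hchainP _ hPr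
  have hE₀P : P E₀ := hE₀max.1
  -- Zorn: maximal complement of `E₀`
  let Q : Submodule R ↥J → Prop := fun C => ∀ x ∈ C, x ∈ E₀ → x = 0
  have hchainQ : ∀ c ⊆ {C | Q C}, IsChain (· ≤ ·) c →
      ∀ y ∈ c, ∃ ub ∈ {C | Q C}, ∀ z ∈ c, z ≤ ub := by
    intro c hcs hchain C₀ hC₀
    refine ⟨sSup c, ?_, fun z hz => le_sSup hz⟩
    intro x hx hxE
    obtain ⟨W, hWc, hxW⟩ :=
      (Submodule.mem_sSup_of_directed ⟨C₀, hC₀⟩ hchain.directedOn).mp hx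
    exact (hcs hWc) x hxW hxE
  obtain ⟨C, -, hCmax⟩ := zorn_le_nonempty₀ {C | Q C} hchainQ ⊥
    (fun x hx _ => (Submodule.mem_bot R).mp hx)
  have hCQ : Q C := hCmax.1
  set π := C.mkQ with hπdef
  have hkerπ : ∀ z : ↥J, π z = 0 ↔ z ∈ C := fun z => Submodule.Quotient.mk_eq_zero C
  -- `π` is injective on `E₀`
  have hq : Function.Injective (π.comp E₀.subtype) := by
    intro a b hab
    have h1 : π ((a : ↥J) - b) = 0 := by
      rw [map_sub]
      simpa [LinearMap.comp_apply] using congrArg (fun t => t - π (b : ↥J)) hab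
    have h2 : (a : ↥J) - b ∈ C := (hkerπ _).mp h1
    have h3 : (a : ↥J) - b ∈ E₀ := sub_mem a.2 b.2
    have := hCQ _ h2 h3
    exact Subtype.ext (sub_eq_zero.mp this)
  -- essentiality of `π '' E₀` in `J ⧸ C`
  have hquot : ∀ y : ↥J ⧸ C, y ≠ 0 → ∃ z, z ∈ E₀ ∧ π z ≠ 0 ∧ ∃ r : R, π z = r • y := by
    intro y hy
    obtain ⟨x, rfl⟩ := Submodule.mkQ_surjective C y
    have hxC : x ∉ C := fun h => hy ((hkerπ x).mpr h)
    have hD : ¬ Q (C ⊔ R ∙ x) := by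
      intro hQ'
      exact hxC (hCmax.2 hQ' le_sup_left
        (Submodule.mem_sup_right (Submodule.mem_span_singleton_self x)))
    have hDex : ∃ z, z ∈ C ⊔ (R ∙ x) ∧ z ∈ E₀ ∧ z ≠ 0 := by
      by_contra hno
      push_neg at hno
      exact hD hno
    obtain ⟨z, hzD, hzE, hz0⟩ := hDex
    obtain ⟨c, hc, w, hw, rfl⟩ := Submodule.mem_sup.mp hzD
    obtain ⟨r, rfl⟩ := Submodule.mem_span_singleton.mp hw
    refine ⟨c + r • x, hzE, ?_, r, ?_⟩
    · intro h0
      exact hz0 (hCQ _ ((hkerπ _).mp h0) hzE)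
    · have hc0 : π c = 0 := (hkerπ c).mpr hc
      rw [map_add, hc0, zero_add, map_smul]
  -- the retraction `σ`
  obtain ⟨σ, hσ⟩ := hJext _ _ (π.comp E₀.subtype) hq E₀.subtype
  have hσ' : ∀ z (hz : z ∈ E₀), σ (π z) = z := fun z hz => hσ ⟨z, hz⟩
  have hσker : ∀ y : ↥J ⧸ C, σ y = 0 → y = 0 := by
    intro y hy0
    by_contra hy
    obtain ⟨z, hzE, hπz, r, hπzr⟩ := hquot y hy
    have h1 : σ (π z) = z := hσ' z hzE
    rw [hπzr, map_smul, hy0, smul_zero] at h1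
    exact hπz (by rw [← h1, map_zero])
  have hsubE : E₀ ≤ LinearMap.range σ := fun w hw => ⟨π w, hσ' w hw⟩
  have hrange : LinearMap.range σ = E₀ := by
    refine le_antisymm ?_ hsubE
    have hPσ : P (LinearMap.range σ) := by
      constructor
      · exact le_trans hE₀P.1 hsubE
      · rintro w ⟨y, rfl⟩ hw0
        have hy : y ≠ 0 := fun h => hw0 (by rw [h, map_zero])
        obtain ⟨z, hzE, hπz, r, hπzr⟩ := hquot y hy
        have h1 : r • σ y = z := by rw [← map_smul, ← hπzr]; exact hσ' z hzE
        have hz0 : z ≠ 0 := fun h => hπz (by rw [h, map_zero])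
        obtain ⟨s, hs1, hs2⟩ := hE₀P.2 z hzE hz0
        refine ⟨s * r, ?_, ?_⟩
        · rw [mul_smul, h1]; exact hs1
        · rw [mul_smul, h1]; exact hs2
    exact hE₀max.2 hPσ hsubE
  -- `E₀` is an injective module
  have hEinj : Module.Injective R ↥E₀ := by
    constructor
    intro X Y _ _ _ _ φ hφ g
    obtain ⟨h, hh⟩ := hJext _ _ φ hφ (E₀.subtype.comp g)
    refine ⟨LinearMap.codRestrict E₀ (σ.comp (π.comp h))
      (fun y => hrange ▸ LinearMap.mem_range_self σ (π (h y))), ?_⟩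
    intro x
    apply Subtype.ext
    show σ (π (h (φ x))) = ↑(g x)
    rw [hh x]
    exact hσ (g x)
  -- assemble
  have hiE : ∀ a, i a ∈ E₀ := fun a => hE₀P.1 (LinearMap.mem_range_self i a)
  refine ⟨ModuleCat.of R ↥E₀, LinearMap.codRestrict E₀ i hiE, hEinj, ?_, ?_⟩
  · intro a b hab
    exact hi (congrArg Subtype.val hab)
  · show ∀ x : ↥E₀, x ≠ 0 →
      ∃ r : R, r • x ∈ LinearMap.range (LinearMap.codRestrict E₀ i hiE) ∧ r • x ≠ 0
    intro x hx0
    have hx0' : (↑x : ↥J) ≠ 0 := fun h => hx0 (Subtype.ext h)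
    obtain ⟨r, hr1, hr2⟩ := hE₀P.2 ↑x x.2 hx0'
    obtain ⟨a, ha⟩ := hr1
    refine ⟨r, ⟨a, ?_⟩, ?_⟩
    · exact Subtype.ext (by simpa using ha)
    · intro h
      apply hr2
      have h2 : ((r • x : ↥E₀) : ↥J) = 0 := by rw [h]; rfl
      exact h2

end Aux

/-- If every maximal ideal lies in `MP[S]` (`S` nonzero), some `E_R(R/m)` lies in `S`;
in particular over a local ring with `m ∈ MP[S]`, `S` contains all Artinian modules. -/
theorem stmt_3 {R : Type} [CommRing R] [IsNoetherianRing R] (S : SerreClass R)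
    (hS : ∃ M : ModuleCat.{0} R, S.mem M ∧ Nontrivial M) :
    ((∀ m : Ideal R, m.IsMaximal → MelkerssonCondition R S.mem m) →
      ∃ m : Ideal R, m.IsMaximal ∧ ∃ E : ModuleCat.{0} R,
        IsInjectiveHull R (ModuleCat.of R (R ⧸ m)) E ∧ S.mem E) ∧
    (∀ [IsLocalRing R],
      MelkerssonCondition R S.mem (IsLocalRing.maximalIdeal R) →
      ∀ M : ModuleCat.{0} R, IsArtinian R M → S.mem M) := by
  constructor
  · -- Part 1
    intro hmax
    obtain ⟨m, hm, hk⟩ := serre_exists_maximal S hS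
    haveI := hm
    obtain ⟨E, f, hEinj, hfinj, hess⟩ := exists_injective_hull_data (ModuleCat.of R (R ⧸ m))
    have hktor : ∀ (w : R ⧸ m) (a : R), a ∈ m → a • w = 0 := by
      intro w a ha
      obtain ⟨r, rfl⟩ := Submodule.Quotient.mk_surjective m w
      rw [← Submodule.Quotient.mk_smul, Submodule.Quotient.mk_eq_zero, smul_eq_mul]
      exact Ideal.mul_mem_right r m ha
    have htor : ∀ z ∈ LinearMap.range f, ∀ a ∈ m, a • z = 0 := by
      rintro z ⟨w, rfl⟩ a ha
      rw [← map_smul, hktor w a ha, map_zero]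
    have htp : IsTorsionByPowers R m E := fun x =>
      isTorsionByPowers_of_essential m (LinearMap.range f) htor hess x
    have heq : Submodule.torsionBySet R E (m : Set R) = LinearMap.range f := by
      apply le_antisymm
      · intro x hx
        by_cases hx0 : x = 0
        · rw [hx0]; exact zero_mem _
        obtain ⟨r, hr1, hr2⟩ := hess x hx0
        have hrm : r ∉ m := fun hrm =>
          hr2 ((Submodule.mem_torsionBySet_iff _ _).mp hx ⟨r, hrm⟩)
        obtain ⟨s, i, hi, hsi⟩ := hm.exists_inv hrm
        have hix : i • x = 0 := (Submodule.mem_torsionBySet_iff _ _).mp hx ⟨i, hi⟩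
        have hxe : x = s • (r • x) := by
          calc x = (s * r + i) • x := by rw [hsi, one_smul]
            _ = s • (r • x) + i • x := by rw [add_smul, mul_smul]
            _ = s • (r • x) := by rw [hix, add_zero]
        rw [hxe]
        exact Submodule.smul_mem _ s hr1
      · rintro x ⟨w, rfl⟩
        rw [Submodule.mem_torsionBySet_iff]
        rintro ⟨a, ha⟩
        exact htor (f w) ⟨w, rfl⟩ a ha
    have hmemT : S.mem (ModuleCat.of R (Submodule.torsionBySet R E (m : Set R))) := by
      refine S.mem_of_surjective (M := ModuleCat.of R (R ⧸ m))
        (N := ModuleCat.of R (Submodule.torsionBySet R E (m : Set R)))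
        (LinearMap.codRestrict _ f
          (fun w => by rw [heq]; exact LinearMap.mem_range_self f w)) ?_ hk
      rintro ⟨x, hx⟩
      rw [heq] at hx
      obtain ⟨w, hw⟩ := hx
      exact ⟨w, Subtype.ext hw⟩
    refine ⟨m, hm, E, ⟨hEinj, f, hfinj, ?_⟩, hmax m hm E htp hmemT⟩
    intro W hW
    obtain ⟨x, hxW, hx0⟩ := (Submodule.ne_bot_iff W).mp hW
    obtain ⟨r, hr1, hr2⟩ := hess x hx0
    exact (Submodule.ne_bot_iff _).mpr ⟨r • x, ⟨W.smul_mem r hxW, hr1⟩, hr2⟩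
  · -- Part 2
    intro _ hmel M hart
    obtain ⟨m', hm', hk⟩ := serre_exists_maximal S hS
    have hmeq : m' = IsLocalRing.maximalIdeal R := IsLocalRing.eq_maximalIdeal hm'
    rw [hmeq] at hk
    haveI : IsArtinian R ↥M := hart
    haveI : (IsLocalRing.maximalIdeal R).IsMaximal := IsLocalRing.maximalIdeal.isMaximal R
    apply hmel M
    · intro x
      exact artinian_isTorsionByPowers ↥M x
    · exact serre_mem_of_artinian_torsion S hS _ hk _
        (Submodule.torsionBySet_isTorsionBySet _)
end

section
/- Let R be a noetherian local ring with maximal ideal m and S a nonzero Serre subcategory of the category of R-modules. If MP[S] contains at least two distinct prime ideals of height dim R − 1, then m belongs to MP[S]; in particular S contains every Artinian R-module. -/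
/-!
Common framework: a *Serre class* is a class of (bundled) `R`-modules closed under
submodules, quotient modules and extensions.  `MelkerssonCondition R P I` is the
Melkersson condition `(C_I)`: if `Γ_I(M) = M` (every element of `M` is annihilated by
some power of `I`) and `(0 :_M I)` (the `I`-torsion-by-`I` submodule `torsionBySet`)
belongs to the class, then `M` belongs to the class.  `MP R P` is the set of prime
ideals `p` such that the class satisfies `(C_p)`.
-/

open CategoryTheory

variable (R : Type) [CommRing R]

namespace SCaux

variable {R} (S : SerreClass R)

lemma mem_of_equiv {M N : Type} [AddCommGroup M] [Module R M] [AddCommGroup N] [Module R N]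
    (e : M ≃ₗ[R] N) (h : S.mem (ModuleCat.of R M)) : S.mem (ModuleCat.of R N) :=
  S.mem_of_injective (M := ModuleCat.of R N) (N := ModuleCat.of R M)
    e.symm.toLinearMap e.symm.injective h

lemma mem_subsingleton {M N : Type} [AddCommGroup M] [Module R M] [AddCommGroup N] [Module R N]
    [Subsingleton M] (h : S.mem (ModuleCat.of R N)) : S.mem (ModuleCat.of R M) :=
  S.mem_of_injective (M := ModuleCat.of R M) (N := ModuleCat.of R N)
    (0 : M →ₗ[R] N) (fun a b _ => Subsingleton.elim (α := M) a b) h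

lemma mem_prod {A B : Type} [AddCommGroup A] [Module R A] [AddCommGroup B] [Module R B]
    (hA : S.mem (ModuleCat.of R A)) (hB : S.mem (ModuleCat.of R B)) :
    S.mem (ModuleCat.of R (A × B)) :=
  S.mem_of_extension (A := ModuleCat.of R A) (M := ModuleCat.of R (A × B))
    (B := ModuleCat.of R B) (LinearMap.inl R A B) (LinearMap.snd R A B)
    LinearMap.inl_injective (LinearMap.snd_surjective)
    (LinearMap.range_inl R A B) hA hB

lemma mem_pi_fin {A : Type} [AddCommGroup A] [Module R A]
    (hA : S.mem (ModuleCat.of R A)) : ∀ n : ℕ, S.mem (ModuleCat.of R (Fin n → A))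
  | 0 => mem_subsingleton S hA
  | (n+1) => by
    have hrec := mem_pi_fin hA n
    have e : (A × (Fin n → A)) ≃ₗ[R] (Fin (n+1) → A) :=
      LinearEquiv.symm
        { toFun := fun v => (v 0, fun i => v i.succ)
          map_add' := by intro v w; rfl
          map_smul' := by intro c v; rfl
          invFun := fun x => Fin.cons x.1 x.2
          left_inv := by
            intro v; funext i
            refine Fin.cases ?_ ?_ i
            · rfl
            · intro j; simp
          right_inv := by
            intro x
            refine Prod.ext ?_ ?_
            · rfl
            · funext j; simp }
    exact mem_of_equiv S e (mem_prod S hA hrec)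

lemma mem_pi {ι : Type} [Finite ι] {A : Type} [AddCommGroup A] [Module R A]
    (hA : S.mem (ModuleCat.of R A)) : S.mem (ModuleCat.of R (ι → A)) := by
  classical
  obtain ⟨n, ⟨e⟩⟩ := Finite.exists_equiv_fin ι
  exact mem_of_equiv S (LinearEquiv.funCongrLeft R A e) (mem_pi_fin S hA n)

lemma mem_submodule {M : Type} [AddCommGroup M] [Module R M]
    (h : S.mem (ModuleCat.of R M)) (p : Submodule R M) : S.mem (ModuleCat.of R p) :=
  S.mem_of_injective (M := ModuleCat.of R p) (N := ModuleCat.of R M)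
    p.subtype p.injective_subtype h

lemma mem_quotient {M : Type} [AddCommGroup M] [Module R M]
    (h : S.mem (ModuleCat.of R M)) (p : Submodule R M) : S.mem (ModuleCat.of R (M ⧸ p)) :=
  S.mem_of_surjective (M := ModuleCat.of R M) (N := ModuleCat.of R (M ⧸ p))
    p.mkQ p.mkQ_surjective h

lemma mem_extension_submodule {M : Type} [AddCommGroup M] [Module R M]
    (p : Submodule R M) (h1 : S.mem (ModuleCat.of R p)) (h2 : S.mem (ModuleCat.of R (M ⧸ p))) :
    S.mem (ModuleCat.of R M) :=
  S.mem_of_extension (A := ModuleCat.of R p) (M := ModuleCat.of R M)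
    (B := ModuleCat.of R (M ⧸ p)) p.subtype p.mkQ
    p.injective_subtype p.mkQ_surjective
    (by rw [Submodule.range_subtype, Submodule.ker_mkQ]) h1 h2

/-- Bootstrapping: if `I^k` annihilates `M` globally and `(0 :_M I) ∈ S` then `M ∈ S`. -/
lemma mem_of_pow_ann (I : Ideal R) (hI : I.FG) :
    ∀ (k : ℕ) (M : Type) [AddCommGroup M] [Module R M],
      (∀ (x : M), ∀ a ∈ I ^ k, a • x = 0) →
      S.mem (ModuleCat.of R (Submodule.torsionBySet R M (I : Set R))) →
      S.mem (ModuleCat.of R M) := by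
  intro k
  induction k with
  | zero =>
    intro M _ _ hann hmem
    have : Subsingleton M := by
      refine subsingleton_of_forall_eq 0 (fun x => ?_)
      have := hann x 1 (by simp [Ideal.one_eq_top])
      simpa using this
    exact mem_subsingleton S hmem
  | succ k ih =>
    intro M _ _ hann hmem
    classical
    obtain ⟨t, ht⟩ := hI
    set N := Submodule.torsionBySet R M (I : Set R) with hN
    have hmemt : ∀ a ∈ t, a ∈ I := fun a ha => ht ▸ Ideal.subset_span ha
    -- the "multiplication by a" maps on B = M ⧸ N
    have hker : ∀ a ∈ t, N ≤ LinearMap.ker (LinearMap.lsmul R M a) := by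
      intro a ha y (hy : y ∈ N)
      have := (Submodule.mem_torsionBySet_iff (I : Set R) y).mp hy ⟨a, hmemt a ha⟩
      simpa using this
    set f : {a // a ∈ t} → (M ⧸ N) →ₗ[R] M :=
      fun a => Submodule.liftQ N (LinearMap.lsmul R M a.1) (hker a.1 a.2) with hf
    set T := Submodule.torsionBySet R (M ⧸ N) (I : Set R) with hT
    have hfT : ∀ (a : {a // a ∈ t}) (x : T), f a x.1 ∈ N := by
      intro a x
      rw [Submodule.mem_torsionBySet_iff]
      intro b
      have hbx : (b : R) • (x : M ⧸ N) = 0 :=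
        (Submodule.mem_torsionBySet_iff (I : Set R) (x : M ⧸ N)).mp x.2 b
      calc (b : R) • f a x.1 = f a ((b : R) • x.1) := (map_smul _ _ _).symm
        _ = 0 := by rw [hbx, map_zero]
    set j : T →ₗ[R] ({a // a ∈ t} → N) :=
      LinearMap.pi (fun a => LinearMap.codRestrict N ((f a).comp T.subtype) (fun x => hfT a x))
      with hj
    have hjinj : Function.Injective j := by
      intro x y hxy
      have hxy0 : ∀ a : {a // a ∈ t}, f a (x.1 - y.1) = 0 := by
        intro a
        have := congrFun hxy a
        have : f a x.1 = f a y.1 := Subtype.ext_iff.mp this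
        rw [map_sub, this, sub_self]
      obtain ⟨z, hz⟩ := Submodule.Quotient.mk_surjective N (x.1 - y.1)
      have hz0 : ∀ a ∈ t, a • z = 0 := by
        intro a ha
        have := hxy0 ⟨a, ha⟩
        rw [← hz] at this
        simpa [f] using this
      have hz1 : ∀ c ∈ I, c • z = 0 := by
        intro c hc
        rw [← ht] at hc
        induction hc using Submodule.span_induction with
        | mem c hc => exact hz0 c hc
        | zero => simp
        | add c d _ _ hc hd => rw [add_smul, hc, hd, add_zero]
        | smul r c _ hc => rw [smul_eq_mul, mul_smul, hc, smul_zero]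
      have hzN : z ∈ N := by
        rw [hN, Submodule.mem_torsionBySet_iff]
        rintro ⟨b, hb⟩
        exact hz1 b hb
      have : x.1 - y.1 = 0 := by
        rw [← hz, Submodule.Quotient.mk_eq_zero]; exact hzN
      exact Subtype.ext (by rwa [sub_eq_zero] at this)
    have hmemT : S.mem (ModuleCat.of R T) :=
      S.mem_of_injective (M := ModuleCat.of R T) (N := ModuleCat.of R ({a // a ∈ t} → N))
        j hjinj (mem_pi S hmem)
    have hannB : ∀ (x : M ⧸ N), ∀ a ∈ I ^ k, a • x = 0 := by
      intro x a ha
      obtain ⟨y, rfl⟩ := Submodule.Quotient.mk_surjective N x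
      rw [← Submodule.Quotient.mk_smul, Submodule.Quotient.mk_eq_zero]
      rw [hN, Submodule.mem_torsionBySet_iff]
      rintro ⟨b, hb⟩
      have : (b * a) ∈ I ^ (k + 1) := by
        rw [pow_succ, mul_comm (I ^ k) I]
        exact Ideal.mul_mem_mul hb ha
      have := hann y _ this
      simpa [mul_smul] using this
    have hmemB := ih (M ⧸ N) hannB hmemT
    exact mem_extension_submodule S N hmem hmemB

lemma pow_mono' {R' : Type*} [CommRing R'] {I J : Ideal R'} (h : I ≤ J) :
    ∀ n : ℕ, I ^ n ≤ J ^ n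
  | 0 => by simp
  | (n+1) => by
    rw [pow_succ, pow_succ]
    exact Ideal.mul_mono (pow_mono' h n) h

/-- Melkersson conditions combine over sums of ideals. -/
lemma melkersson_sup {I J : Ideal R}
    (hI : MelkerssonCondition R S.mem I) (hJ : MelkerssonCondition R S.mem J) :
    MelkerssonCondition R S.mem (I ⊔ J) := by
  intro M htor hmem
  set N := Submodule.torsionBySet R M (I : Set R) with hNdef
  have htorN : IsTorsionByPowers R J (ModuleCat.of R N) := by
    intro x
    obtain ⟨n, hn⟩ := htor x.1
    refine ⟨n, fun a ha => Subtype.ext ?_⟩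
    show a • x.1 = 0
    exact hn a (pow_mono' (le_sup_right : J ≤ I ⊔ J) n ha)
  set TJ := Submodule.torsionBySet R N (J : Set R) with hTJdef
  have himg : ∀ x : TJ, (N.subtype.comp TJ.subtype) x ∈
      Submodule.torsionBySet R M ((I ⊔ J : Ideal R) : Set R) := by
    intro x
    rw [Submodule.mem_torsionBySet_iff]
    rintro ⟨a, ha⟩
    obtain ⟨b, hb, c, hc, rfl⟩ := Submodule.mem_sup.mp ha
    have h1 : b • (x.1 : M) = 0 :=
      (Submodule.mem_torsionBySet_iff (I : Set R) (x.1 : M)).mp x.1.2 ⟨b, hb⟩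
    have h2 : c • x.1 = 0 :=
      (Submodule.mem_torsionBySet_iff (J : Set R) x.1).mp x.2 ⟨c, hc⟩
    have h2' : c • (x.1 : M) = 0 := by
      have := congrArg (Subtype.val) h2
      exact this
    show (b + c) • (x.1 : M) = 0
    rw [add_smul, h1, h2', add_zero]
  have hinj : Function.Injective
      (LinearMap.codRestrict (Submodule.torsionBySet R M ((I ⊔ J : Ideal R) : Set R))
        (N.subtype.comp TJ.subtype) himg) := by
    intro x y hxy
    have := Subtype.ext_iff.mp hxy
    exact TJ.injective_subtype (Subtype.ext (by simpa using this))
  have hmemTJ : S.mem (ModuleCat.of R TJ) :=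
    S.mem_of_injective (M := ModuleCat.of R TJ)
      (N := ModuleCat.of R (Submodule.torsionBySet R M ((I ⊔ J : Ideal R) : Set R)))
      (LinearMap.codRestrict _ (N.subtype.comp TJ.subtype) himg) hinj hmem
  have hmemN : S.mem (ModuleCat.of R N) := hJ (ModuleCat.of R N) htorN hmemTJ
  refine hI M (fun x => ?_) hmemN
  obtain ⟨n, hn⟩ := htor x
  exact ⟨n, fun a ha => hn a (pow_mono' (le_sup_left : I ≤ I ⊔ J) n ha)⟩

/-- If `J ≤ I` and `I ^ k ≤ J`, then `(C_J)` implies `(C_I)`. -/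
lemma melkersson_of_pow_le {I J : Ideal R} (hIfg : I.FG)
    (hJ : MelkerssonCondition R S.mem J) (hJI : J ≤ I) {k : ℕ} (hk : I ^ k ≤ J) :
    MelkerssonCondition R S.mem I := by
  intro M htor hmem
  set W := Submodule.torsionBySet R M (J : Set R) with hWdef
  -- W is annihilated by I ^ k globally
  have hannW : ∀ (x : W), ∀ a ∈ I ^ k, a • x = 0 := by
    intro x a ha
    exact Subtype.ext
      (by exact (Submodule.mem_torsionBySet_iff (J : Set R) x.1).mp x.2 ⟨a, hk ha⟩)
  -- (0 :_W I) embeds into (0 :_M I)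
  have himg : ∀ x : Submodule.torsionBySet R W (I : Set R),
      (W.subtype.comp (Submodule.torsionBySet R W (I : Set R)).subtype) x ∈
      Submodule.torsionBySet R M (I : Set R) := by
    intro x
    rw [Submodule.mem_torsionBySet_iff]
    intro a
    have h2 := (Submodule.mem_torsionBySet_iff (I : Set R) x.1).mp x.2 a
    have := congrArg (Subtype.val) h2
    exact this
  have hinj : Function.Injective
      (LinearMap.codRestrict (Submodule.torsionBySet R M (I : Set R))
        (W.subtype.comp (Submodule.torsionBySet R W (I : Set R)).subtype) himg) := by
    intro x y hxy
    have := Subtype.ext_iff.mp hxy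
    exact (Submodule.torsionBySet R W (I : Set R)).injective_subtype
      (Subtype.ext (by simpa using this))
  have hmemTW : S.mem (ModuleCat.of R (Submodule.torsionBySet R W (I : Set R))) :=
    S.mem_of_injective (M := ModuleCat.of R (Submodule.torsionBySet R W (I : Set R)))
      (N := ModuleCat.of R (Submodule.torsionBySet R M (I : Set R)))
      (LinearMap.codRestrict _ _ himg) hinj hmem
  have hmemW : S.mem (ModuleCat.of R W) := mem_of_pow_ann S I hIfg k W hannW hmemTW
  refine hJ M (fun x => ?_) hmemW
  obtain ⟨n, hn⟩ := htor x
  exact ⟨n, fun a ha => hn a (pow_mono' hJI n ha)⟩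

end SCaux

section KHTaux

open IsLocalRing

/-- Transfer Artinian-ness along a quotient ring action. -/
lemma isArtinian_of_quotient_action {A : Type*} [CommRing A] (J : Ideal A)
    (M : Type*) [AddCommGroup M] [Module A M]
    (htors : Module.IsTorsionBySet A M (J : Set A)) :
    letI : Module (A ⧸ J) M := htors.module
    IsArtinian (A ⧸ J) M → IsArtinian A M := by
  letI : Module (A ⧸ J) M := htors.module
  haveI : IsScalarTower A (A ⧸ J) M := htors.isScalarTower
  intro h
  let emb : Submodule A M ↪o Submodule (A ⧸ J) M :=
    { toFun := fun p =>
        { carrier := p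
          add_mem' := fun ha hb => p.add_mem ha hb
          zero_mem' := p.zero_mem
          smul_mem' := by
            intro c x hx
            obtain ⟨a, rfl⟩ := Ideal.Quotient.mk_surjective c
            have : (Ideal.Quotient.mk J a) • x = a • x := by
              rw [← Ideal.Quotient.algebraMap_eq, IsScalarTower.algebraMap_smul]
            rw [this]
            exact p.smul_mem a hx }
      inj' := by
        intro p q hpq
        apply SetLike.ext'
        have := congrArg (fun (r : Submodule (A ⧸ J) M) => (r : Set M)) hpq
        exact this
      map_rel_iff' := Iff.rfl }
  exact ⟨emb.wellFounded h.wf⟩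

/-- A noetherian module annihilated elementwise by a maximal ideal is Artinian. -/
lemma isArtinian_of_annihilated_max {A : Type*} [CommRing A] (J : Ideal A) [J.IsMaximal]
    (M : Type*) [AddCommGroup M] [Module A M] [IsNoetherian A M]
    (hann : ∀ (x : M), ∀ a ∈ J, a • x = 0) : IsArtinian A M := by
  have htors : Module.IsTorsionBySet A M (J : Set A) := fun x a => hann x a.1 a.2
  refine isArtinian_of_quotient_action J M htors ?_
  letI : Module (A ⧸ J) M := htors.module
  haveI : IsScalarTower A (A ⧸ J) M := htors.isScalarTower
  letI : Field (A ⧸ J) := Ideal.Quotient.field J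
  haveI : IsNoetherian (A ⧸ J) M := isNoetherian_of_tower A inferInstance
  haveI : Module.Finite (A ⧸ J) M := ⟨IsNoetherian.noetherian ⊤⟩
  infer_instance

/-- A finite module over a noetherian ring annihilated by a power of a maximal
ideal is Artinian. -/
lemma isArtinian_of_annihilated_max_pow {A : Type*} [CommRing A] [IsNoetherianRing A]
    (J : Ideal A) [J.IsMaximal] :
    ∀ (k : ℕ) (M : Type*) [AddCommGroup M] [Module A M] [Module.Finite A M],
      (∀ (x : M), ∀ a ∈ J ^ k, a • x = 0) → IsArtinian A M := by
  intro k
  induction k with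
  | zero =>
    intro M _ _ _ hann
    have : Subsingleton M := by
      refine subsingleton_of_forall_eq 0 (fun x => ?_)
      have := hann x 1 (by simp [Ideal.one_eq_top])
      simpa using this
    exact isArtinian_of_finite
  | succ k ih =>
    intro M _ _ _ hann
    haveI : IsNoetherian A M := isNoetherian_of_isNoetherianRing_of_finite A M
    set N := J • (⊤ : Submodule A M) with hNdef
    haveI : Module.Finite A N := ⟨IsNoetherian.noetherian ⊤⟩
    have hNann : ∀ (x : N), ∀ a ∈ J ^ k, a • x = 0 := by
      intro x a ha
      refine Subtype.ext ?_
      show a • x.1 = 0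
      refine Submodule.smul_induction_on x.2 ?_ ?_
      · intro b hb m _
        rw [smul_comm, ← smul_assoc, smul_eq_mul]
        have : b * a ∈ J ^ (k + 1) := by
          rw [pow_succ, mul_comm (J ^ k) J]
          exact Ideal.mul_mem_mul hb ha
        exact hann m _ this
      · intro m1 m2 h1 h2
        rw [smul_add, h1, h2, add_zero]
    haveI hNart : IsArtinian A N := ih N hNann
    have hQann : ∀ (x : M ⧸ N), ∀ a ∈ J, a • x = 0 := by
      intro x a ha
      obtain ⟨y, rfl⟩ := Submodule.Quotient.mk_surjective N x
      rw [← Submodule.Quotient.mk_smul, Submodule.Quotient.mk_eq_zero]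
      exact Submodule.smul_mem_smul ha trivial
    haveI hQart : IsArtinian A (M ⧸ N) := isArtinian_of_annihilated_max J (M ⧸ N) hQann
    exact isArtinian_of_range_eq_ker N.subtype N.mkQ
      (by rw [Submodule.range_subtype, Submodule.ker_mkQ])

/-- A noetherian ring in which all primes coincide is Artinian. -/
lemma isArtinianRing_of_primes_eq {A : Type*} [CommRing A] [IsNoetherianRing A]
    (h : ∀ P Q : Ideal A, P.IsPrime → Q.IsPrime → P = Q) : IsArtinianRing A := by
  rcases subsingleton_or_nontrivial A with hsub | hnt
  · exact Ring.isArtinian_of_zero_eq_one (Subsingleton.elim 0 1)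
  obtain ⟨mA, hmA⟩ := Ideal.exists_maximal A
  haveI := hmA
  have hprime : ∀ P : Ideal A, P.IsPrime → P = mA := fun P hP => h P mA hP hmA.isPrime
  have hnil : mA ≤ nilradical A := by
    rw [nilradical_eq_sInf]
    exact le_sInf (fun J hJ => (hprime J hJ) ▸ le_rfl)
  obtain ⟨k, hk⟩ := IsNoetherianRing.isNilpotent_nilradical A
  have hk' : mA ^ k = ⊥ := by
    refine le_bot_iff.mp ?_
    calc mA ^ k ≤ (nilradical A) ^ k := SCaux.pow_mono' hnil k
      _ = ⊥ := by rw [hk]; rfl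
  exact isArtinian_of_annihilated_max_pow mA k A
    (fun x a ha => by rw [hk'] at ha; simp [Ideal.mem_bot.mp ha])

end KHTaux

/-- Krull's principal ideal theorem (local form): if the maximal ideal of a
noetherian local ring is the unique prime containing `x`, then every prime
strictly below the maximal ideal is a minimal prime. -/
theorem pit_local {R : Type*} [CommRing R] [IsNoetherianRing R] [IsLocalRing R]
    (x : R) (hxm : x ∈ IsLocalRing.maximalIdeal R)
    (hx : ∀ s : Ideal R, s.IsPrime → x ∈ s → s = IsLocalRing.maximalIdeal R) :
    ∀ q : Ideal R, q.IsPrime → q < IsLocalRing.maximalIdeal R →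
      ∀ r : Ideal R, r.IsPrime → ¬ r < q := by
  intro q hq hqlt r hr hrq
  have hxq : x ∉ q := fun h => absurd (hx q hq h) (ne_of_lt hqlt)
  set Rq := Localization q.primeCompl with hRq
  set φ := algebraMap R Rq with hφ
  set Q : ℕ → Ideal R := fun n => ((q.map φ) ^ n).comap φ with hQ
  have hdisj_q : Disjoint ((q.primeCompl : Submonoid R) : Set R) (q : Set R) :=
    Set.disjoint_left.mpr (fun a ha ha' => ha ha')
  have hdisj_r : Disjoint ((q.primeCompl : Submonoid R) : Set R) (r : Set R) :=
    Set.disjoint_left.mpr (fun a ha ha' => ha (le_of_lt hrq ha'))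
  -- the quotient A := R ⧸ (x) is Artinian
  set A := R ⧸ Ideal.span {x} with hA
  have keyA : ∀ P : Ideal A, P.IsPrime →
      P = (IsLocalRing.maximalIdeal R).map (Ideal.Quotient.mk (Ideal.span {x})) := by
    intro P hP
    have hcp : (P.comap (Ideal.Quotient.mk (Ideal.span {x}))).IsPrime := hP.comap _
    have hxP : x ∈ P.comap (Ideal.Quotient.mk (Ideal.span {x})) := by
      show Ideal.Quotient.mk (Ideal.span {x}) x ∈ P
      have : Ideal.Quotient.mk (Ideal.span {x}) x = 0 :=
        Ideal.Quotient.eq_zero_iff_mem.mpr (Ideal.subset_span rfl)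
      rw [this]; exact P.zero_mem
    have hcm := hx _ hcp hxP
    conv_lhs => rw [← Ideal.map_comap_of_surjective _ Ideal.Quotient.mk_surjective P]
    rw [hcm]
  haveI : IsArtinianRing A :=
    isArtinianRing_of_primes_eq (fun P P' hP hP' => by rw [keyA P hP, keyA P' hP'])
  -- stabilization of the chain (Q n ⊔ (x)) in A
  have hQanti : ∀ n : ℕ, Q (n + 1) ≤ Q n := fun n =>
    Ideal.comap_mono (Ideal.pow_le_pow_right (Nat.le_succ n))
  have hQanti' : Antitone Q := antitone_nat_of_succ_le hQanti
  set f : ℕ →o (Ideal A)ᵒᵈ :=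
    ⟨fun n => (Q n ⊔ Ideal.span {x}).map (Ideal.Quotient.mk (Ideal.span {x})),
      fun a b hab => Ideal.map_mono (sup_le_sup_right (hQanti' hab) _)⟩ with hfdef
  obtain ⟨n, hn⟩ := IsArtinian.monotone_stabilizes f
  have hstab : Q n ⊔ Ideal.span {x} = Q (n + 1) ⊔ Ideal.span {x} := by
    have h1 : (Q n ⊔ Ideal.span {x}).map (Ideal.Quotient.mk (Ideal.span {x})) =
        (Q (n + 1) ⊔ Ideal.span {x}).map (Ideal.Quotient.mk (Ideal.span {x})) :=
      hn (n + 1) (Nat.le_succ n)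
    have h2 : ∀ m : ℕ, ((Q m ⊔ Ideal.span {x}).map
        (Ideal.Quotient.mk (Ideal.span {x}))).comap (Ideal.Quotient.mk (Ideal.span {x})) =
        Q m ⊔ Ideal.span {x} := by
      intro m
      rw [Ideal.comap_map_of_surjective _ Ideal.Quotient.mk_surjective]
      have : Ideal.comap (Ideal.Quotient.mk (Ideal.span {x})) ⊥ = Ideal.span {x} := by
        ext y
        simp [Ideal.mem_comap, Ideal.Quotient.eq_zero_iff_mem]
      rw [this, sup_assoc, sup_idem]
    have := congrArg (Ideal.comap (Ideal.Quotient.mk (Ideal.span {x}))) h1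
    rwa [h2 n, h2 (n + 1)] at this
  -- Q n ≤ Q (n+1) ⊔ (x) • Q n
  have hQle : Q n ≤ Q (n + 1) ⊔ Ideal.span {x} • Q n := by
    intro a ha
    have h1 : a ∈ Q (n + 1) ⊔ Ideal.span {x} := by
      rw [← hstab]; exact Submodule.mem_sup_left ha
    obtain ⟨b, hb, c, hc, rfl⟩ := Submodule.mem_sup.mp h1
    obtain ⟨t, rfl⟩ := Ideal.mem_span_singleton'.mp hc
    have htx : t * x ∈ Q n := by
      have : t * x = (b + t * x) - b := by ring
      rw [this]
      exact Submodule.sub_mem _ ha (hQanti n hb)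
    have ht : t ∈ Q n := by
      have hmem : φ t * φ x ∈ (q.map φ) ^ n := by
        have := htx
        rw [hQ] at this
        simpa [Ideal.mem_comap, map_mul] using this
      have hu : IsUnit (φ x) := IsLocalization.map_units (M := q.primeCompl) Rq ⟨x, hxq⟩
      rw [hQ]
      show φ t ∈ (q.map φ) ^ n
      have h3 := Ideal.mul_mem_left _ (↑hu.unit⁻¹) hmem
      have h4 : (↑hu.unit⁻¹ : Rq) * (φ t * φ x) = φ t := by
        rw [mul_comm (φ t) (φ x), ← mul_assoc]
        rw [IsUnit.val_inv_mul, one_mul]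
      rwa [h4] at h3
    refine Submodule.add_mem _ (Submodule.mem_sup_left hb) (Submodule.mem_sup_right ?_)
    rw [smul_eq_mul, mul_comm t x]
    exact Ideal.mul_mem_mul (Ideal.subset_span rfl) ht
  -- Nakayama in R ⧸ Q (n+1)
  have hQeq : Q n = Q (n + 1) := by
    set N' := Submodule.map (Q (n + 1)).mkQ (Q n) with hN'
    have hmapbot : Submodule.map (Q (n + 1)).mkQ (Q (n + 1)) = ⊥ := by
      rw [eq_bot_iff]
      intro y hy
      obtain ⟨z, hz, rfl⟩ := Submodule.mem_map.mp hy
      show (Q (n + 1)).mkQ z ∈ (⊥ : Submodule R (R ⧸ Q (n + 1)))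
      rw [Submodule.mem_bot]
      show Submodule.Quotient.mk z = 0
      rw [Submodule.Quotient.mk_eq_zero]
      exact hz
    have hle : N' ≤ Ideal.span {x} • N' := by
      have h5 := Submodule.map_mono (f := (Q (n + 1)).mkQ) hQle
      rwa [Submodule.map_sup, hmapbot, bot_sup_eq, Submodule.map_smul''] at h5
    have hfg : N'.FG := IsNoetherian.noetherian N'
    have hjac : Ideal.span {x} ≤ Ideal.jacobson ⊥ := by
      rw [IsLocalRing.jacobson_eq_maximalIdeal ⊥ bot_ne_top]
      exact (Ideal.span_singleton_le_iff_mem _).mpr hxm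
    have hbot : N' = ⊥ :=
      Submodule.eq_bot_of_le_smul_of_le_jacobson_bot (Ideal.span {x}) N' hfg hle hjac
    refine le_antisymm ?_ (hQanti n)
    intro a ha
    have hmem : (Q (n + 1)).mkQ a ∈ N' := Submodule.mem_map_of_mem ha
    rw [hbot, Submodule.mem_bot] at hmem
    have : Submodule.Quotient.mk a = (0 : R ⧸ Q (n + 1)) := hmem
    rwa [Submodule.Quotient.mk_eq_zero] at this
  -- Nakayama in Rq
  haveI : IsNoetherianRing Rq := IsLocalization.isNoetherianRing q.primeCompl Rq ‹_›
  haveI : IsLocalRing Rq := Localization.AtPrime.isLocalRing q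
  have hqqprime : (q.map φ).IsPrime :=
    IsLocalization.isPrime_of_isPrime_disjoint q.primeCompl Rq q hq hdisj_q
  have hmapeq : (q.map φ) ^ n = (q.map φ) ^ (n + 1) := by
    have h1 := IsLocalization.map_comap q.primeCompl Rq ((q.map φ) ^ n)
    have h2 := IsLocalization.map_comap q.primeCompl Rq ((q.map φ) ^ (n + 1))
    rw [← h1, ← h2]
    show ((Q n).map φ) = ((Q (n+1)).map φ)
    rw [hQeq]
  have hpowbot : (q.map φ) ^ n = ⊥ := by
    have hle : (q.map φ) ^ n ≤ (q.map φ) • ((q.map φ) ^ n) := by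
      rw [smul_eq_mul, ← pow_succ']
      exact le_of_eq hmapeq
    have hjac : (q.map φ) ≤ Ideal.jacobson ⊥ := by
      rw [IsLocalRing.jacobson_eq_maximalIdeal ⊥ bot_ne_top]
      exact IsLocalRing.le_maximalIdeal hqqprime.ne_top
    exact Submodule.eq_bot_of_le_smul_of_le_jacobson_bot (q.map φ) _
      (IsNoetherian.noetherian _) hle hjac
  -- conclude
  have hrmapprime : (r.map φ).IsPrime :=
    IsLocalization.isPrime_of_isPrime_disjoint q.primeCompl Rq r hr hdisj_r
  have hle2 : q.map φ ≤ r.map φ := by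
    intro y hy
    have hyn : y ^ n ∈ (q.map φ) ^ n := Submodule.pow_mem_pow _ hy n
    rw [hpowbot] at hyn
    have : y ^ n = 0 := by simpa using hyn
    exact hrmapprime.mem_of_pow_mem n (by rw [this]; exact (r.map φ).zero_mem)
  have hqr : q ≤ r := by
    have h1 : (q.map φ).comap φ = q :=
      IsLocalization.comap_map_of_isPrime_disjoint q.primeCompl Rq hq hdisj_q
    have h2 : (r.map φ).comap φ = r :=
      IsLocalization.comap_map_of_isPrime_disjoint q.primeCompl Rq hr hdisj_r
    rw [← h1, ← h2]
    exact Ideal.comap_mono hle2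
  exact absurd (lt_of_lt_of_le hrq hqr) (lt_irrefl r)

/-- Krull's height theorem (local form): in a noetherian local ring, if the
maximal ideal is the unique prime over an ideal generated by `≤ n` elements,
then the height of the closed point is at most `n`. -/
theorem kht : ∀ (n : ℕ) (R : Type u) (_ : CommRing R) (_ : IsNoetherianRing R)
    (_ : IsLocalRing R) (s : Finset R), s.card ≤ n →
    (Ideal.span (s : Set R) ≤ IsLocalRing.maximalIdeal R) →
    (∀ P : Ideal R, P.IsPrime → Ideal.span (s : Set R) ≤ P →
      P = IsLocalRing.maximalIdeal R) →
    Order.height (⟨IsLocalRing.maximalIdeal R,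
      (IsLocalRing.maximalIdeal.isMaximal R).isPrime⟩ : PrimeSpectrum R) ≤ n := by
  intro n
  induction n with
  | zero =>
    intro R _ _ _ s hcard hsm hmin
    have hs : s = ∅ := Finset.card_eq_zero.mp (Nat.le_zero.mp hcard)
    have hbot : Ideal.span ((s : Set R)) = ⊥ := by
      rw [hs]; simp
    have : ∀ P : Ideal R, P.IsPrime → P = IsLocalRing.maximalIdeal R := by
      intro P hP
      exact hmin P hP (hbot ▸ bot_le)
    have hmin' : IsMin (⟨IsLocalRing.maximalIdeal R,
        (IsLocalRing.maximalIdeal.isMaximal R).isPrime⟩ : PrimeSpectrum R) := by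
      intro b hb
      have : b.asIdeal = IsLocalRing.maximalIdeal R := this b.asIdeal b.2
      exact le_of_eq (PrimeSpectrum.ext this.symm)
    simpa using Order.height_eq_zero.mpr hmin'
  | succ n ih =>
    intro R _ _ _ s hcard hsm hmin
    classical
    set mpt : PrimeSpectrum R := ⟨IsLocalRing.maximalIdeal R,
      (IsLocalRing.maximalIdeal.isMaximal R).isPrime⟩ with hmpt
    have hstep : ∀ y : PrimeSpectrum R, y < mpt → Order.height y ≤ (n : ℕ∞) := by
      intro y hy
      -- choose a prime q' maximal among those between y and m
      have hwf : WellFounded ((· > ·) : Ideal R → Ideal R → Prop) :=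
        (inferInstance : WellFoundedGT (Ideal R)).wf
      set T : Set (Ideal R) :=
        {r | r.IsPrime ∧ y.asIdeal ≤ r ∧ r < IsLocalRing.maximalIdeal R} with hT
      have hyT : y.asIdeal ∈ T := ⟨y.2, le_rfl, hy⟩
      obtain ⟨q', hq'T, hq'max⟩ := hwf.has_min T ⟨y.asIdeal, hyT⟩
      obtain ⟨hq'prime, hyq', hq'lt⟩ := hq'T
      set q'pt : PrimeSpectrum R := ⟨q', hq'prime⟩ with hq'pt
      have hmono : Order.height y ≤ Order.height q'pt :=
        Order.height_mono (show y.asIdeal ≤ q' from hyq')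
      refine le_trans hmono ?_
      -- adjacency
      have hadj : ∀ rr : Ideal R, rr.IsPrime → q' < rr →
          rr = IsLocalRing.maximalIdeal R := by
        intro rr hrr hlt
        by_contra hne
        have hlt2 : rr < IsLocalRing.maximalIdeal R :=
          lt_of_le_of_ne (IsLocalRing.le_maximalIdeal hrr.ne_top) hne
        exact hq'max rr ⟨hrr, le_trans hyq' hlt.le, hlt2⟩ hlt
      -- an element of s outside q'
      have hex : ∃ x ∈ s, x ∉ q' := by
        by_contra hall
        push_neg at hall
        have : Ideal.span (s : Set R) ≤ q' := Ideal.span_le.mpr (fun z hz => hall z hz)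
        exact absurd (hmin q' hq'prime this) (ne_of_lt hq'lt)
      obtain ⟨x, hxs, hxq'⟩ := hex
      have hxm : x ∈ IsLocalRing.maximalIdeal R := hsm (Ideal.subset_span hxs)
      -- radical of q' + (x) is m
      have hradm : (q' ⊔ Ideal.span {x}).radical = IsLocalRing.maximalIdeal R := by
        rw [Ideal.radical_eq_sInf]
        apply le_antisymm
        · exact sInf_le ⟨sup_le hq'lt.le ((Ideal.span_singleton_le_iff_mem _).mpr hxm),
            (IsLocalRing.maximalIdeal.isMaximal R).isPrime⟩
        · refine le_sInf (fun J hJ => ?_)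
          obtain ⟨hle, hJp⟩ := hJ
          have hq'J : q' < J := lt_of_le_of_ne (le_trans le_sup_left hle)
            (fun h => hxq' (h ▸ hle (Submodule.mem_sup_right (Ideal.subset_span rfl))))
          exact (hadj J hJp hq'J) ▸ le_rfl
      have hdecomp : ∀ y' ∈ s.erase x, ∃ (kk : ℕ) (bb : R), bb ∈ q' ∧ ∃ cc : R,
          y' ^ kk = bb + cc * x := by
        intro y' hy'
        have hy's : y' ∈ s := Finset.mem_of_mem_erase hy'
        have : y' ∈ (q' ⊔ Ideal.span {x}).radical := by
          rw [hradm]; exact hsm (Ideal.subset_span hy's)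
        obtain ⟨kk, hkk⟩ := Ideal.mem_radical_iff.mp this
        obtain ⟨bb, hbb, cc', hcc', heq⟩ := Submodule.mem_sup.mp hkk
        obtain ⟨cc, hcc⟩ := Ideal.mem_span_singleton'.mp hcc'
        exact ⟨kk, bb, hbb, cc, by rw [← heq, ← hcc]⟩
      choose! kk bb hbb cc hcc using hdecomp
      set J : Ideal R := Ideal.span (((s.erase x).image bb : Finset R) : Set R) with hJ
      have hJq' : J ≤ q' := by
        rw [hJ, Ideal.span_le]
        intro z hz
        rw [Finset.coe_image] at hz
        obtain ⟨y', hy', rfl⟩ := hz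
        exact hbb y' hy'
      -- every prime over J + (x) is m
      have hJx : ∀ rr : Ideal R, rr.IsPrime → J ⊔ Ideal.span {x} ≤ rr →
          rr = IsLocalRing.maximalIdeal R := by
        intro rr hrr hle
        refine hmin rr hrr (Ideal.span_le.mpr (fun z hz => ?_))
        by_cases hzx : z = x
        · subst hzx
          exact hle (Submodule.mem_sup_right (Ideal.subset_span rfl))
        · have hz' : z ∈ s.erase x := Finset.mem_erase.mpr ⟨hzx, hz⟩
          have h1 : bb z ∈ rr := (le_trans le_sup_left hle)
            (Ideal.subset_span (by rw [Finset.coe_image]; exact ⟨z, hz', rfl⟩))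
          have h2 : x ∈ rr := hle (Submodule.mem_sup_right (Ideal.subset_span rfl))
          have h3 : z ^ kk z ∈ rr := by
            rw [hcc z hz']
            exact Submodule.add_mem _ h1 (rr.mul_mem_left _ h2)
          exact hrr.mem_of_pow_mem _ h3
      -- pass to the localization at q'
      set Rq' := Localization q'.primeCompl with hRq'
      set φ := algebraMap R Rq' with hφ
      haveI : IsNoetherianRing Rq' := IsLocalization.isNoetherianRing q'.primeCompl Rq' ‹_›
      haveI : IsLocalRing Rq' := Localization.AtPrime.isLocalRing q'
      have hdisj : ∀ (I : Ideal R), I ≤ q' →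
          Disjoint ((q'.primeCompl : Submonoid R) : Set R) (I : Set R) :=
        fun I hI => Set.disjoint_left.mpr (fun a ha ha' => ha (hI ha'))
      have hmapmax : Ideal.map φ q' = IsLocalRing.maximalIdeal Rq' := by
        have h1 := IsLocalization.AtPrime.comap_maximalIdeal (I := q') Rq'
        have h2 := IsLocalization.map_comap q'.primeCompl Rq' (IsLocalRing.maximalIdeal Rq')
        rw [← h2, h1]
      set s' : Finset Rq' := (s.erase x).image (fun y' => φ (bb y')) with hs'
      have hs'card : s'.card ≤ n := by
        have h1 : s'.card ≤ (s.erase x).card := Finset.card_image_le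
        have h2 : (s.erase x).card = s.card - 1 := Finset.card_erase_of_mem hxs
        omega
      have hs'span : Ideal.span ((s' : Finset Rq') : Set Rq') = Ideal.map φ J := by
        rw [hJ, Ideal.map_span, hs']
        congr 1
        rw [Finset.coe_image, Finset.coe_image, Set.image_image]
      have hs'm : Ideal.span ((s' : Finset Rq') : Set Rq') ≤ IsLocalRing.maximalIdeal Rq' := by
        rw [hs'span, ← hmapmax]
        exact Ideal.map_mono (le_trans hJq' le_rfl)
      have hs'min : ∀ P : Ideal Rq', P.IsPrime →
          Ideal.span ((s' : Finset Rq') : Set Rq') ≤ P →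
          P = IsLocalRing.maximalIdeal Rq' := by
        intro P hP hle
        obtain ⟨hr0prime, hr0disj⟩ := (IsLocalization.isPrime_iff_isPrime_disjoint
          q'.primeCompl Rq' P).mp hP
        set r0 := Ideal.comap φ P with hr0
        have hr0q' : r0 ≤ q' := by
          intro a ha
          by_contra hnq
          exact Set.disjoint_left.mp hr0disj (show a ∈ (q'.primeCompl : Set R) from hnq) ha
        have hJr0 : J ≤ r0 := by
          refine le_trans (Ideal.le_comap_map (f := φ)) ?_
          rw [hr0]
          exact Ideal.comap_mono (hs'span ▸ hle)
        have hr0eq : r0 = q' := by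
          by_contra hne
          have hr0lt : r0 < q' := lt_of_le_of_ne hr0q' hne
          -- work in B = R ⧸ r0 and apply the principal ideal theorem
          set B := R ⧸ r0 with hB
          set π := Ideal.Quotient.mk r0 with hπ
          haveI : Nontrivial B := Ideal.Quotient.nontrivial_iff.mpr hr0prime.ne_top
          haveI : IsLocalRing B := IsLocalRing.of_surjective' π Ideal.Quotient.mk_surjective
          have hkerπ : RingHom.ker π = r0 := Ideal.mk_ker
          have hr0m : r0 ≤ IsLocalRing.maximalIdeal R :=
            IsLocalRing.le_maximalIdeal hr0prime.ne_top
          have hmaxB : IsLocalRing.maximalIdeal B =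
              Ideal.map π (IsLocalRing.maximalIdeal R) := by
            have hmm : (Ideal.map π (IsLocalRing.maximalIdeal R)).IsPrime :=
              Ideal.map_isPrime_of_surjective Ideal.Quotient.mk_surjective
                (by rw [hkerπ]; exact hr0m)
            apply le_antisymm
            · have hcp : (Ideal.comap π (IsLocalRing.maximalIdeal B)).IsPrime :=
                (IsLocalRing.maximalIdeal.isMaximal B).isPrime.comap π
              have h4 : Ideal.comap π (IsLocalRing.maximalIdeal B) ≤
                  IsLocalRing.maximalIdeal R := IsLocalRing.le_maximalIdeal hcp.ne_top
              have h5 : Ideal.map π (Ideal.comap π (IsLocalRing.maximalIdeal B)) ≤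
                  Ideal.map π (IsLocalRing.maximalIdeal R) := Ideal.map_mono h4
              rwa [Ideal.map_comap_of_surjective π Ideal.Quotient.mk_surjective] at h5
            · exact IsLocalRing.le_maximalIdeal hmm.ne_top
          have hprimesB : ∀ P' : Ideal B, P'.IsPrime → π x ∈ P' →
              P' = IsLocalRing.maximalIdeal B := by
            intro P' hP' hxP'
            have hcp : (Ideal.comap π P').IsPrime := hP'.comap π
            have hr0cc : r0 ≤ Ideal.comap π P' := by
              intro a ha
              show π a ∈ P'
              have : π a = 0 := Ideal.Quotient.eq_zero_iff_mem.mpr ha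
              rw [this]; exact P'.zero_mem
            have hJcc : J ⊔ Ideal.span {x} ≤ Ideal.comap π P' :=
              sup_le (le_trans hJr0 hr0cc)
                ((Ideal.span_singleton_le_iff_mem _).mpr hxP')
            have hccm := hJx _ hcp hJcc
            have := congrArg (Ideal.map π) hccm
            rwa [Ideal.map_comap_of_surjective π Ideal.Quotient.mk_surjective, ← hmaxB]
              at this
          have hxB : π x ∈ IsLocalRing.maximalIdeal B := by
            rw [hmaxB]
            exact Ideal.mem_map_of_mem π hxm
          -- the image of q' in B
          have hq'B : (Ideal.map π q').IsPrime :=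
            Ideal.map_isPrime_of_surjective Ideal.Quotient.mk_surjective
              (by rw [hkerπ]; exact hr0q')
          have hq'Blt : Ideal.map π q' < IsLocalRing.maximalIdeal B := by
            rw [hmaxB]
            refine lt_of_le_of_ne (Ideal.map_mono hq'lt.le) (fun h => ?_)
            have := congrArg (Ideal.comap π) h
            rw [Ideal.comap_map_of_surjective π Ideal.Quotient.mk_surjective,
              Ideal.comap_map_of_surjective π Ideal.Quotient.mk_surjective] at this
            have hker0 : Ideal.comap π ⊥ = r0 := by
              rw [hπ]; ext a
              simp [Ideal.mem_comap, Ideal.Quotient.eq_zero_iff_mem]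
            rw [hker0, sup_of_le_left hr0q', sup_of_le_left hr0m] at this
            exact absurd this (ne_of_lt hq'lt)
          haveI : IsDomain B := Ideal.Quotient.isDomain r0
          have hbotB : (⊥ : Ideal B).IsPrime := Ideal.bot_prime
          have hbotlt : (⊥ : Ideal B) < Ideal.map π q' := by
            refine lt_of_le_of_ne bot_le (fun h => ?_)
            have := congrArg (Ideal.comap π) h.symm
            rw [Ideal.comap_map_of_surjective π Ideal.Quotient.mk_surjective] at this
            have hker0 : Ideal.comap π ⊥ = r0 := by
              rw [hπ]; ext a
              simp [Ideal.mem_comap, Ideal.Quotient.eq_zero_iff_mem]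
            rw [hker0, sup_of_le_left hr0q'] at this
            exact absurd this (ne_of_gt hr0lt)
          exact pit_local (π x) hxB hprimesB (Ideal.map π q') hq'B hq'Blt ⊥ hbotB hbotlt
        -- hence P is the maximal ideal of Rq'
        have : Ideal.map φ (Ideal.comap φ P) = P := IsLocalization.map_comap q'.primeCompl Rq' P
        rw [← this, ← hr0, hr0eq, hmapmax]
      -- apply the induction hypothesis in Rq'
      have hih := ih Rq' inferInstance ‹_› ‹_› s' hs'card hs'm hs'min
      -- transfer the height bound along the localization
      refine Order.height_le (fun p hplast => ?_)
      have hple : ∀ i, (p i).asIdeal ≤ q' := by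
        intro i
        have h1 : p i ≤ p.last := p.monotone (Fin.le_last i)
        rw [hplast] at h1
        exact h1
      set F : Fin (p.length + 1) → PrimeSpectrum Rq' := fun i =>
        ⟨Ideal.map φ (p i).asIdeal,
          IsLocalization.isPrime_of_isPrime_disjoint q'.primeCompl Rq' _ (p i).2
            (hdisj _ (hple i))⟩ with hF
      have hFstrict : ∀ i : Fin p.length, F i.castSucc < F i.succ := by
        intro i
        have hlt : p i.castSucc < p i.succ := p.step i
        constructor
        · exact Ideal.map_mono (le_of_lt hlt)
        · intro hcontra
          have h1 := Ideal.comap_mono (f := φ) hcontra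
          have e1 : Ideal.comap φ (F i.succ).asIdeal = (p i.succ).asIdeal :=
            IsLocalization.comap_map_of_isPrime_disjoint q'.primeCompl Rq'
              (p i.succ).2 (hdisj _ (hple i.succ))
          have e2 : Ideal.comap φ (F i.castSucc).asIdeal = (p i.castSucc).asIdeal :=
            IsLocalization.comap_map_of_isPrime_disjoint q'.primeCompl Rq'
              (p i.castSucc).2 (hdisj _ (hple i.castSucc))
          rw [e1, e2] at h1
          exact absurd (le_antisymm (le_of_lt hlt) h1) (ne_of_lt hlt)
      set p' : LTSeries (PrimeSpectrum Rq') :=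
        ⟨p.length, F, hFstrict⟩ with hp'
      have hlen : (p'.length : ℕ∞) ≤ Order.height (RelSeries.last p') :=
        Order.length_le_height_last
      have hlast' : RelSeries.last p' ≤ (⟨IsLocalRing.maximalIdeal Rq',
          (IsLocalRing.maximalIdeal.isMaximal Rq').isPrime⟩ : PrimeSpectrum Rq') :=
        IsLocalRing.le_maximalIdeal (RelSeries.last p').2.ne_top
      calc (p.length : ℕ∞) = (p'.length : ℕ∞) := rfl
        _ ≤ Order.height (RelSeries.last p') := hlen
        _ ≤ _ := Order.height_mono hlast'
        _ ≤ n := hih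
    have hlt : (n : ℕ∞) < ((n + 1 : ℕ) : ℕ∞) := by exact_mod_cast Nat.lt_succ_self n
    exact Order.height_le_coe_iff.mpr (fun y hy => lt_of_le_of_lt (hstep y hy) hlt)

/-- In a noetherian local ring all heights in the prime spectrum are bounded. -/
lemma heightBound (R : Type u) [CommRing R] [IsNoetherianRing R] [IsLocalRing R] :
    ∃ N : ℕ, ∀ pp : PrimeSpectrum R, Order.height pp ≤ (N : ℕ∞) := by
  obtain ⟨s, hs⟩ := (IsNoetherian.noetherian (IsLocalRing.maximalIdeal R) :
    (IsLocalRing.maximalIdeal R).FG)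
  have hs' : Ideal.span (s : Set R) = IsLocalRing.maximalIdeal R := hs
  refine ⟨s.card, fun pp => ?_⟩
  have hmin : ∀ P : Ideal R, P.IsPrime → Ideal.span (s : Set R) ≤ P →
      P = IsLocalRing.maximalIdeal R := by
    intro P hP hle
    rw [hs'] at hle
    exact le_antisymm (IsLocalRing.le_maximalIdeal hP.ne_top) hle
  have h1 := kht s.card R ‹_› ‹_› ‹_› s le_rfl (le_of_eq hs') hmin
  refine le_trans (Order.height_mono ?_) h1
  exact IsLocalRing.le_maximalIdeal pp.2.ne_top

section MainAux

variable {R : Type} [CommRing R]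

/-- The residue field belongs to any nonzero Serre class over a local ring. -/
lemma mem_residue [IsLocalRing R] (S : SerreClass R)
    (hS : ∃ M : ModuleCat.{0} R, S.mem M ∧ Nontrivial M) :
    S.mem (ModuleCat.of R (R ⧸ (IsLocalRing.maximalIdeal R : Submodule R R))) := by
  obtain ⟨M0, hM0, hnt⟩ := hS
  obtain ⟨u, v, huv⟩ := hnt
  set z : ↑M0 := u - v with hz
  have hz0 : z ≠ 0 := sub_ne_zero.mpr huv
  set f : R →ₗ[R] ↑M0 := LinearMap.toSpanSingleton R ↑M0 z with hf
  set k := LinearMap.ker f with hk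
  have hk1 : (1 : R) ∉ k := by
    intro h1
    have : f 1 = 0 := h1
    rw [hf, LinearMap.toSpanSingleton_apply, one_smul] at this
    exact hz0 this
  have hkm : k ≤ (IsLocalRing.maximalIdeal R : Submodule R R) := by
    refine IsLocalRing.le_maximalIdeal (fun h => hk1 ?_)
    rw [hk] at h ⊢
    rw [h]; trivial
  have hinj : Function.Injective (k.liftQ f le_rfl) := by
    rw [← LinearMap.ker_eq_bot]
    exact Submodule.ker_liftQ_eq_bot k f le_rfl le_rfl
  have hmemk : S.mem (ModuleCat.of R (R ⧸ k)) :=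
    S.mem_of_injective (M := ModuleCat.of R (R ⧸ k)) (N := M0) (k.liftQ f le_rfl) hinj hM0
  have hcomap : k ≤ Submodule.comap LinearMap.id (IsLocalRing.maximalIdeal R : Submodule R R) :=
    hkm
  have hsurj : Function.Surjective
      (Submodule.mapQ k (IsLocalRing.maximalIdeal R : Submodule R R) LinearMap.id hcomap) := by
    intro b
    obtain ⟨a, rfl⟩ := Submodule.Quotient.mk_surjective _ b
    exact ⟨Submodule.Quotient.mk a, by rw [Submodule.mapQ_apply]; rfl⟩
  exact S.mem_of_surjective
    (M := ModuleCat.of R (R ⧸ k))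
    (N := ModuleCat.of R (R ⧸ (IsLocalRing.maximalIdeal R : Submodule R R)))
    (Submodule.mapQ k _ LinearMap.id hcomap) hsurj hmemk

/-- Every element of an Artinian module over a noetherian local ring is killed by
a power of the maximal ideal. -/
lemma artinian_torsion [IsNoetherianRing R] [IsLocalRing R]
    (M : Type) [AddCommGroup M] [Module R M] (hart : IsArtinian R M) (x : M) :
    ∃ n : ℕ, ∀ a ∈ (IsLocalRing.maximalIdeal R) ^ n, a • x = 0 := by
  haveI := hart
  set N := Submodule.span R {x} with hNdef
  have hNfg : N.FG := Submodule.fg_span_singleton x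
  set C : ℕ →o (Submodule R M)ᵒᵈ :=
    ⟨fun n => (IsLocalRing.maximalIdeal R) ^ n • N,
      fun a b hab => Submodule.smul_mono_left (Ideal.pow_le_pow_right hab)⟩ with hC
  obtain ⟨n, hn⟩ := IsArtinian.monotone_stabilizes C
  have heq : (IsLocalRing.maximalIdeal R) ^ n • N =
      (IsLocalRing.maximalIdeal R) ^ (n + 1) • N := hn (n + 1) (Nat.le_succ n)
  have hle : (IsLocalRing.maximalIdeal R) ^ n • N ≤
      (IsLocalRing.maximalIdeal R) • ((IsLocalRing.maximalIdeal R) ^ n • N) := by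
    rw [← Submodule.smul_assoc, smul_eq_mul, ← pow_succ']
    exact le_of_eq heq
  have hKfg : ((IsLocalRing.maximalIdeal R) ^ n • N).FG := by
    have hsub : (IsLocalRing.maximalIdeal R) ^ n • N ≤ N := Submodule.smul_le_right
    haveI : IsNoetherian R ↥N := isNoetherian_of_fg_of_noetherian N hNfg
    have h1 : (Submodule.comap N.subtype ((IsLocalRing.maximalIdeal R) ^ n • N)).FG :=
      IsNoetherian.noetherian _
    have h2 := Submodule.FG.map N.subtype h1
    rwa [Submodule.map_comap_subtype, inf_eq_right.mpr hsub] at h2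
  have hjac : (IsLocalRing.maximalIdeal R) ≤ Ideal.jacobson ⊥ := by
    rw [IsLocalRing.jacobson_eq_maximalIdeal ⊥ bot_ne_top]
  have hbot : (IsLocalRing.maximalIdeal R) ^ n • N = ⊥ :=
    Submodule.eq_bot_of_le_smul_of_le_jacobson_bot _ _ hKfg hle hjac
  refine ⟨n, fun a ha => ?_⟩
  have : a • x ∈ (IsLocalRing.maximalIdeal R) ^ n • N :=
    Submodule.smul_mem_smul ha (Submodule.mem_span_singleton_self x)
  rw [hbot] at this
  simpa using this

/-- The socle-type submodule `(0 :_M m)` of an Artinian module lies in any Serre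
class containing the residue field. -/
lemma socle_mem [IsNoetherianRing R] [IsLocalRing R] (S : SerreClass R)
    (hRm : S.mem (ModuleCat.of R (R ⧸ (IsLocalRing.maximalIdeal R : Submodule R R))))
    (M : Type) [AddCommGroup M] [Module R M] (hart : IsArtinian R M) :
    S.mem (ModuleCat.of R
      (Submodule.torsionBySet R M ((IsLocalRing.maximalIdeal R : Ideal R) : Set R))) := by
  haveI := hart
  set κ := R ⧸ (IsLocalRing.maximalIdeal R) with hκ
  set V := Submodule.torsionBySet R M ((IsLocalRing.maximalIdeal R : Ideal R) : Set R) with hV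
  have htors : Module.IsTorsionBySet R V ((IsLocalRing.maximalIdeal R : Ideal R) : Set R) :=
    Submodule.torsionBySet_isTorsionBySet _
  letI : Module κ V := htors.module
  haveI : IsScalarTower R κ V := htors.isScalarTower
  letI : Field κ := Ideal.Quotient.field _
  haveI : IsArtinian κ V := isArtinian_of_tower R inferInstance
  have hli : LinearIndependent κ
      (Subtype.val : (Module.Basis.ofVectorSpaceIndex κ V) → V) := by
    have := (Module.Basis.ofVectorSpace κ V).linearIndependent
    rwa [Module.Basis.coe_ofVectorSpace] at this
  have hfinidx : (Module.Basis.ofVectorSpaceIndex κ V).Finite :=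
    IsArtinian.finite_of_linearIndependent hli
  haveI : Finite (Module.Basis.ofVectorSpaceIndex κ V) := hfinidx.to_subtype
  set e1 : V ≃ₗ[κ] ((Module.Basis.ofVectorSpaceIndex κ V) → κ) :=
    (Module.Basis.ofVectorSpace κ V).equivFun with he1
  set eR : V ≃ₗ[R] ((Module.Basis.ofVectorSpaceIndex κ V) → κ) :=
    LinearEquiv.restrictScalars R e1 with heR
  have hmempi : S.mem (ModuleCat.of R ((Module.Basis.ofVectorSpaceIndex κ V) → κ)) :=
    SCaux.mem_pi S hRm
  exact SCaux.mem_of_equiv S eR.symm hmempi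

end MainAux

/-- Over a noetherian local ring, if a nonzero Serre class `S` has two distinct primes
of height `dim R - 1` in `MP[S]`, then the maximal ideal lies in `MP[S]`; in particular
`S` contains every Artinian module. -/
theorem stmt_4 {R : Type} [CommRing R] [IsNoetherianRing R] [IsLocalRing R]
    (S : SerreClass R) (hS : ∃ M : ModuleCat.{0} R, S.mem M ∧ Nontrivial M)
    (p q : PrimeSpectrum R) (hpq : p ≠ q)
    (hp : (Order.height p : WithBot ℕ∞) + 1 = ringKrullDim R)
    (hq : (Order.height q : WithBot ℕ∞) + 1 = ringKrullDim R)
    (hpMP : p ∈ MP R S.mem) (hqMP : q ∈ MP R S.mem) :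
    MelkerssonCondition R S.mem (IsLocalRing.maximalIdeal R) ∧
    ∀ M : ModuleCat.{0} R, IsArtinian R M → S.mem M := by
  obtain ⟨N, hN⟩ := heightBound R
  have hfin : ∀ pp : PrimeSpectrum R, Order.height pp < ⊤ :=
    fun pp => lt_of_le_of_lt (hN pp) (WithTop.coe_lt_top N)
  set mpt : PrimeSpectrum R := ⟨IsLocalRing.maximalIdeal R,
    (IsLocalRing.maximalIdeal.isMaximal R).isPrime⟩ with hmpt
  have hstrict : ∀ (pp : PrimeSpectrum R),
      ((Order.height pp : WithBot ℕ∞) + 1 = ringKrullDim R) →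
      ∀ rr : Ideal R, rr.IsPrime → pp.asIdeal < rr →
      rr = IsLocalRing.maximalIdeal R := by
    intro pp hpp rr hrr hlt
    by_contra hne
    set rpt : PrimeSpectrum R := ⟨rr, hrr⟩ with hrpt
    have hlt1 : pp < rpt := hlt
    have hlt2 : rpt < mpt := lt_of_le_of_ne (IsLocalRing.le_maximalIdeal hrr.ne_top)
      (fun h => hne (congrArg PrimeSpectrum.asIdeal h))
    have h1 : Order.height pp < Order.height rpt :=
      Order.height_strictMono hlt1 (hfin pp)
    have h2 : Order.height rpt < Order.height mpt :=
      Order.height_strictMono hlt2 (hfin rpt)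
    have h5 : (Order.height mpt : WithBot ℕ∞) ≤ ringKrullDim R :=
      Order.height_le_krullDim mpt
    obtain ⟨a, ha⟩ := WithTop.ne_top_iff_exists.mp (ne_of_lt (hfin pp))
    obtain ⟨b, hb⟩ := WithTop.ne_top_iff_exists.mp (ne_of_lt (hfin rpt))
    obtain ⟨c, hc⟩ := WithTop.ne_top_iff_exists.mp (ne_of_lt (hfin mpt))
    rw [← ha, ← hb] at h1
    rw [← hb, ← hc] at h2
    rw [← hc] at h5
    rw [← ha] at hpp
    rw [← hpp] at h5
    have h1' : a < b := WithTop.coe_lt_coe.mp h1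
    have h2' : b < c := WithTop.coe_lt_coe.mp h2
    have h5' : c ≤ a + 1 := by
      have h6 : (WithBot.some (WithTop.some c) : WithBot ℕ∞) ≤
          WithBot.some (WithTop.some (a + 1)) := h5
      exact WithTop.coe_le_coe.mp (WithBot.coe_le_coe.mp h6)
    omega
  have hpm : p.asIdeal ≤ IsLocalRing.maximalIdeal R :=
    IsLocalRing.le_maximalIdeal p.2.ne_top
  have hqm : q.asIdeal ≤ IsLocalRing.maximalIdeal R :=
    IsLocalRing.le_maximalIdeal q.2.ne_top
  have hrad : (p.asIdeal ⊔ q.asIdeal).radical = IsLocalRing.maximalIdeal R := by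
    rw [Ideal.radical_eq_sInf]
    apply le_antisymm
    · exact sInf_le ⟨sup_le hpm hqm, (IsLocalRing.maximalIdeal.isMaximal R).isPrime⟩
    · refine le_sInf (fun J hJ => ?_)
      obtain ⟨hle, hJp⟩ := hJ
      have hpJ : p.asIdeal ≤ J := le_trans le_sup_left hle
      have hqJ : q.asIdeal ≤ J := le_trans le_sup_right hle
      rcases eq_or_lt_of_le hpJ with heq | hlt
      · have hqp' : q.asIdeal ≤ p.asIdeal := by rw [heq]; exact hqJ
        have hqp : q.asIdeal < p.asIdeal := lt_of_le_of_ne hqp'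
          (fun h => hpq (PrimeSpectrum.ext h).symm)
        have hpmax : p.asIdeal = IsLocalRing.maximalIdeal R :=
          hstrict q hq p.asIdeal p.2 hqp
        rw [← heq, hpmax]
      · exact le_of_eq (hstrict p hp J hJp hlt).symm
  obtain ⟨k, hk⟩ := Ideal.exists_radical_pow_le_of_fg (p.asIdeal ⊔ q.asIdeal)
    (by rw [hrad]; exact IsNoetherian.noetherian _)
  rw [hrad] at hk
  have hsup : MelkerssonCondition R S.mem (p.asIdeal ⊔ q.asIdeal) :=
    SCaux.melkersson_sup S hpMP hqMP
  have hCm : MelkerssonCondition R S.mem (IsLocalRing.maximalIdeal R) :=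
    SCaux.melkersson_of_pow_le S (IsNoetherian.noetherian _) hsup (sup_le hpm hqm) hk
  refine ⟨hCm, fun M hart => ?_⟩
  have hRm := mem_residue S hS
  exact hCm M (fun x => artinian_torsion (R := R) ↑M hart x) (socle_mem S hRm ↑M hart)
end

section
/- Let R be a noetherian local ring with maximal ideal m and dim R > 0, and let S be a nonzero Serre subcategory of the category of R-modules such that every module in S is finitely generated. Then m does not belong to MP[S]; equivalently, no prime ideal of height dim R lies in MP[S]. -/
/-!
Common framework: a *Serre class* is a class of (bundled) `R`-modules closed under
submodules, quotient modules and extensions.  `MelkerssonCondition R P I` is the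
Melkersson condition `(C_I)`: if `Γ_I(M) = M` (every element of `M` is annihilated by
some power of `I`) and `(0 :_M I)` (the `I`-torsion-by-`I` submodule `torsionBySet`)
belongs to the class, then `M` belongs to the class.  `MP R P` is the set of prime
ideals `p` such that the class satisfies `(C_p)`.
-/

open CategoryTheory

variable (R : Type) [CommRing R]

section KrullHeight
open Ideal



/-- A f.g. module killed by a power of a maximal ideal over a noetherian ring is Artinian. -/
lemma isArtinian_of_killed_pow {B : Type} [CommRing B] [IsNoetherianRing B] {m : Ideal B}
    (hm : m.IsMaximal) :
    ∀ (N : ℕ) (M : Type) [AddCommGroup M] [Module B M] [Module.Finite B M],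
      (∀ c ∈ m ^ N, ∀ x : M, c • x = 0) → IsArtinian B M := by
  intro N
  induction N with
  | zero =>
    intro M _ _ _ hkill
    have : Subsingleton M := ⟨fun a b => by
      have ha := hkill 1 (by simp) a
      have hb := hkill 1 (by simp) b
      rw [one_smul] at ha hb
      rw [ha, hb]⟩
    infer_instance
  | succ N ih =>
    intro M _ _ _ hkill
    have hNoeth : IsNoetherian B M := isNoetherian_of_isNoetherianRing_of_finite B M
    set W : Submodule B M := m • ⊤ with hW
    have hWkill : ∀ c ∈ m ^ N, ∀ z ∈ W, c • z = 0 := by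
      intro c hc z hz
      refine Submodule.smul_induction_on hz (fun a ha y _ => ?_) (fun u v hu hv => ?_)
      · rw [smul_smul]
        exact hkill (c * a) (by rw [pow_succ]; exact Ideal.mul_mem_mul hc ha) y
      · rw [smul_add, hu, hv, add_zero]
    have hWart : IsArtinian B ↥W := by
      have : Module.Finite B ↥W := Module.Finite.iff_fg.mpr (IsNoetherian.noetherian W)
      exact ih ↥W (fun c hc x =>
        Subtype.ext (by simpa using hWkill c hc x.1 x.2))
    -- quotient is a f.d. vector space over B/m
    have hQart : IsArtinian B (M ⧸ W) := by
      have htors : Module.IsTorsionBySet B (M ⧸ W) (m : Set B) := by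
        intro x a
        obtain ⟨y, rfl⟩ := W.mkQ_surjective x
        show (a : B) • Submodule.Quotient.mk y = 0
        rw [← Submodule.Quotient.mk_smul, Submodule.Quotient.mk_eq_zero]
        exact Submodule.smul_mem_smul a.2 trivial
      letI : Module (B ⧸ m) (M ⧸ W) := htors.module
      letI : IsScalarTower B (B ⧸ m) (M ⧸ W) := htors.isScalarTower
      letI : Field (B ⧸ m) := Ideal.Quotient.field m
      have hfin : Module.Finite B (M ⧸ W) := Module.Finite.of_surjective W.mkQ W.mkQ_surjective
      have hfinK : Module.Finite (B ⧸ m) (M ⧸ W) :=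
        Module.Finite.of_restrictScalars_finite B (B ⧸ m) (M ⧸ W)
      have hartK : IsArtinian (B ⧸ m) (M ⧸ W) := inferInstance
      let e : Submodule B (M ⧸ W) → Submodule (B ⧸ m) (M ⧸ W) := fun W' =>
        { carrier := W'
          add_mem' := fun h1 h2 => W'.add_mem h1 h2
          zero_mem' := W'.zero_mem
          smul_mem' := by
            intro k x hx
            obtain ⟨b, rfl⟩ := Ideal.Quotient.mk_surjective k
            rw [htors.mk_smul b x]
            exact W'.smul_mem b hx }
      have he : StrictMono e := by
        intro W1 W2 h
        rw [lt_iff_le_not_ge] at h ⊢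
        exact ⟨fun x hx => h.1 hx, fun hc => h.2 fun x hx => hc hx⟩
      exact StrictMono.wellFoundedLT he
    exact isArtinian_of_range_eq_ker W.subtype W.mkQ
      (by rw [Submodule.range_subtype, Submodule.ker_mkQ])

/-- Krull's principal ideal theorem, core local case: in a noetherian local ring whose
maximal ideal is minimal over a principal ideal, there is no chain `Q < q < m`. -/
lemma PIT_local {B : Type} [CommRing B] [IsNoetherianRing B] [IsLocalRing B] (α : B)
    (hmin : IsLocalRing.maximalIdeal B ∈ (Ideal.span {α}).minimalPrimes)
    {Q q : Ideal B} (hQ : Q.IsPrime) (hq : q.IsPrime)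
    (hQq : Q < q) (hqm : q < IsLocalRing.maximalIdeal B)
    (hart : ∀ (N : ℕ) (M : Type) [AddCommGroup M] [Module B M] [Module.Finite B M],
      (∀ c ∈ (IsLocalRing.maximalIdeal B) ^ N, ∀ x : M, c • x = 0) → IsArtinian B M) :
    False := by
  set m := IsLocalRing.maximalIdeal B with hmdef
  have hαm : α ∈ m := hmin.1.2 (Ideal.subset_span rfl)
  have hαq : α ∉ q := by
    intro h
    have hle : Ideal.span {α} ≤ q := by rwa [Ideal.span_le, Set.singleton_subset_iff]
    exact hqm.not_ge (hmin.2 ⟨hq, hle⟩ hqm.le)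
  -- m is the radical of (α)
  have hrad : m ≤ (Ideal.span {α}).radical := by
    rw [Ideal.radical_eq_sInf]
    refine le_sInf fun J hJ => ?_
    have hJm : J ≤ m := IsLocalRing.le_maximalIdeal hJ.2.ne_top
    exact hmin.2 ⟨hJ.2, hJ.1⟩ hJm
  obtain ⟨Nn, hNn⟩ := Ideal.exists_pow_le_of_le_radical_of_fg hrad (IsNoetherian.noetherian m)
  -- localization at q
  set A := Localization.AtPrime q
  haveI := hq
  set G := algebraMap B A with hG
  haveI hAnoeth : IsNoetherianRing A := IsLocalization.isNoetherianRing q.primeCompl A ‹_›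
  haveI hAloc : IsLocalRing A := IsLocalization.AtPrime.isLocalRing A q
  -- symbolic powers
  set sym : ℕ → Ideal B := fun n => (Ideal.map G (q ^ n)).comap G with hsym
  have sym_anti : ∀ {n k : ℕ}, n ≤ k → sym k ≤ sym n := fun {n k} h =>
    Ideal.comap_mono (Ideal.map_mono (Ideal.pow_le_pow_right h))
  set c : ℕ → Ideal B := fun n => sym n ⊔ Ideal.span {α} with hc
  have c_anti : ∀ {n k : ℕ}, n ≤ k → c k ≤ c n := fun {n k} h =>
    sup_le_sup_right (sym_anti h) _
  have hspanc : ∀ n, Ideal.span {α} ≤ c n := fun n => le_sup_right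
  -- the module B ⧸ (α) is Artinian
  have hBart : IsArtinian B (B ⧸ (Ideal.span {α} : Ideal B)) := by
    have hfin : Module.Finite B (B ⧸ (Ideal.span {α} : Ideal B)) :=
      Module.Finite.of_surjective (Ideal.span {α} : Ideal B).mkQ (Submodule.mkQ_surjective _)
    refine hart Nn _ fun d hd x => ?_
    obtain ⟨y, rfl⟩ := (Ideal.span {α} : Ideal B).mkQ_surjective x
    show d • Submodule.Quotient.mk y = 0
    rw [← Submodule.Quotient.mk_smul, Submodule.Quotient.mk_eq_zero]
    exact Ideal.mul_mem_right y _ (hNn hd)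
  -- the chain (c n) stabilizes
  have hstab : ∃ n0 : ℕ, ∀ nk, n0 ≤ nk → c nk = c n0 := by
    let f : ℕ →o (Submodule B (B ⧸ (Ideal.span {α} : Ideal B)))ᵒᵈ :=
      ⟨fun n => OrderDual.toDual (Submodule.map (Ideal.span {α} : Ideal B).mkQ (c n)),
        fun n k h => by
          show Submodule.map _ (c k) ≤ Submodule.map _ (c n)
          exact Submodule.map_mono (c_anti h)⟩
    obtain ⟨n0, hn0⟩ := IsArtinian.monotone_stabilizes f
    refine ⟨n0, fun nk h => ?_⟩
    have hmap := hn0 nk h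
    have hcomap : ∀ n, (Submodule.map (Ideal.span {α} : Ideal B).mkQ (c n)).comap
        (Ideal.span {α} : Ideal B).mkQ = c n := by
      intro n
      rw [Submodule.comap_map_eq, Submodule.ker_mkQ, sup_eq_left]
      exact hspanc n
    have : Submodule.map (Ideal.span {α} : Ideal B).mkQ (c n0)
        = Submodule.map (Ideal.span {α} : Ideal B).mkQ (c nk) := congrArg OrderDual.ofDual hmap
    rw [← hcomap nk, ← this, hcomap n0]
  obtain ⟨n0, hn0⟩ := hstab
  -- from stabilization, sym (n0+1) = sym (n0+2)
  have hGα : IsUnit (G α) := IsLocalization.map_units A (⟨α, hαq⟩ : q.primeCompl)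
  have hprimary : ∀ {n : ℕ} {d : B}, d * α ∈ sym n → d ∈ sym n := by
    intro n d hd
    have : G (d * α) ∈ Ideal.map G (q ^ n) := hd
    rw [_root_.map_mul, mul_comm] at this
    exact (Ideal.unit_mul_mem_iff_mem _ hGα).mp this
  have hsymle : sym (n0 + 1) ≤ sym (n0 + 2) ⊔ m • sym (n0 + 1) := by
    intro x hx
    have hx1 : x ∈ c (n0 + 2) := by
      rw [hn0 (n0 + 2) (by omega), ← hn0 (n0 + 1) (by omega)]
      exact Submodule.mem_sup_left hx
    obtain ⟨y, hy, z, hz, hyz⟩ := Submodule.mem_sup.mp hx1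
    obtain ⟨d, rfl⟩ := Ideal.mem_span_singleton'.mp hz
    have hdα : d * α ∈ sym (n0 + 1) := by
      have : d * α = x - y := by rw [← hyz]; ring
      rw [this]
      exact sub_mem hx (sym_anti (by omega) hy)
    have hd : d ∈ sym (n0 + 1) := hprimary hdα
    rw [← hyz]
    refine Submodule.add_mem_sup hy ?_
    rw [smul_eq_mul, mul_comm d α]
    exact Ideal.mul_mem_mul hαm hd
  have hsymeq : sym (n0 + 1) = sym (n0 + 2) := by
    refine le_antisymm ?_ (sym_anti (by omega))
    have hjac : m ≤ (⊥ : Ideal B).jacobson := by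
      rw [IsLocalRing.jacobson_eq_maximalIdeal ⊥ bot_ne_top]
    have hsmul := Submodule.smul_le_of_le_smul_of_le_jacobson_bot
      (IsNoetherian.noetherian (sym (n0 + 1))) hjac hsymle
    intro x hx
    rcases Submodule.mem_sup.mp (hsymle hx) with ⟨y, hy, z, hz, hyz⟩
    rw [← hyz]
    exact add_mem hy (hsmul hz)
  -- push to the localization: (map G q)^(n0+1) = ⊥
  have hmapsym : ∀ n, Ideal.map G (sym n) = Ideal.map G q ^ n := by
    intro n
    rw [hsym]
    show Ideal.map G (Ideal.comap G (Ideal.map G (q ^ n))) = _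
    rw [IsLocalization.map_comap q.primeCompl A, Ideal.map_pow]
  have hq1 : Ideal.map G q ^ (n0 + 1) = Ideal.map G q ^ (n0 + 2) := by
    rw [← hmapsym, ← hmapsym, hsymeq]
  have hqbot : Ideal.map G q ^ (n0 + 1) = ⊥ := by
    have hqprimeA : (Ideal.map G q).IsPrime := by
      refine IsLocalization.isPrime_of_isPrime_disjoint q.primeCompl A q hq ?_
      rw [Set.disjoint_left]
      exact fun x hx hx2 => hx hx2
    refine Submodule.eq_bot_of_le_smul_of_le_jacobson_bot (Ideal.map G q) _
      (IsNoetherian.noetherian _) ?_ ?_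
    · rw [smul_eq_mul]
      exact le_of_eq (hq1.trans (by ring))
    · rw [IsLocalRing.jacobson_eq_maximalIdeal ⊥ bot_ne_top]
      exact IsLocalRing.le_maximalIdeal hqprimeA.ne_top
  -- contradiction with Q < q
  have hQdisj : Disjoint (q.primeCompl : Set B) (Q : Set B) := by
    rw [Set.disjoint_left]
    exact fun x hx hx2 => hx (hQq.le hx2)
  have hQprimeA : (Ideal.map G Q).IsPrime :=
    IsLocalization.isPrime_of_isPrime_disjoint q.primeCompl A Q hQ hQdisj
  have hpow : Ideal.map G q ^ (n0 + 1) ≤ Ideal.map G Q := by rw [hqbot]; exact bot_le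
  have hle : Ideal.map G q ≤ Ideal.map G Q := (Ideal.IsPrime.pow_le_iff (by omega)).mp hpow
  have hcomap : q ≤ Q := by
    have h1 : Ideal.comap G (Ideal.map G q) = q :=
      IsLocalization.comap_map_of_isPrime_disjoint q.primeCompl A hq
        (by rw [Set.disjoint_left]; exact fun x hx hx2 => hx hx2)
    have h2 : Ideal.comap G (Ideal.map G Q) = Q :=
      IsLocalization.comap_map_of_isPrime_disjoint q.primeCompl A hQ hQdisj
    rw [← h1, ← h2]
    exact Ideal.comap_mono hle
  exact hQq.not_ge hcomap

/-- PIT after localizing at `p`. -/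
lemma PIT_aux {R : Type} [CommRing R] [IsNoetherianRing R] (a : R) {Q q p : Ideal R}
    (hQ : Q.IsPrime) (hq : q.IsPrime) (hp : p.IsPrime)
    (hQq : Q < q) (hqp : q < p) (hmin : p ∈ (Ideal.span {a}).minimalPrimes) : False := by
  haveI := hp
  set A := Localization.AtPrime p with hA
  set G := algebraMap R A with hGdef
  haveI hAnoeth : IsNoetherianRing A := IsLocalization.isNoetherianRing p.primeCompl A ‹_›
  haveI hAloc : IsLocalRing A := IsLocalization.AtPrime.isLocalRing A p
  have hdisj : ∀ {I : Ideal R}, I ≤ p → Disjoint (p.primeCompl : Set R) (I : Set R) := by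
    intro I hI
    rw [Set.disjoint_left]
    exact fun x hx hx2 => hx (hI hx2)
  have hQA : (Ideal.map G Q).IsPrime :=
    IsLocalization.isPrime_of_isPrime_disjoint p.primeCompl A Q hQ (hdisj (hQq.le.trans hqp.le))
  have hqA : (Ideal.map G q).IsPrime :=
    IsLocalization.isPrime_of_isPrime_disjoint p.primeCompl A q hq (hdisj hqp.le)
  have hcomapQ : Ideal.comap G (Ideal.map G Q) = Q :=
    IsLocalization.comap_map_of_isPrime_disjoint p.primeCompl A hQ (hdisj (hQq.le.trans hqp.le))
  have hcomapq : Ideal.comap G (Ideal.map G q) = q :=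
    IsLocalization.comap_map_of_isPrime_disjoint p.primeCompl A hq (hdisj hqp.le)
  have hmax : Ideal.map G p = IsLocalRing.maximalIdeal A := by
    have h1 := IsLocalization.AtPrime.comap_maximalIdeal A p
    rw [← IsLocalization.map_comap p.primeCompl A (IsLocalRing.maximalIdeal A), h1]
  have h1 : Ideal.map G Q < Ideal.map G q := by
    refine lt_of_le_of_ne (Ideal.map_mono hQq.le) fun h => hQq.ne ?_
    rw [← hcomapQ, h, hcomapq]
  have h2 : Ideal.map G q < IsLocalRing.maximalIdeal A := by
    rw [← hmax]
    refine lt_of_le_of_ne (Ideal.map_mono hqp.le) fun h => hqp.ne ?_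
    have hcomapp : Ideal.comap G (Ideal.map G p) = p :=
      IsLocalization.comap_map_of_isPrime_disjoint p.primeCompl A hp (hdisj le_rfl)
    rw [← hcomapq, h, hcomapp]
  have hap : a ∈ p := hmin.1.2 (Ideal.subset_span rfl)
  have hminA : IsLocalRing.maximalIdeal A ∈ (Ideal.span {G a}).minimalPrimes := by
    refine ⟨⟨(IsLocalRing.maximalIdeal.isMaximal A).isPrime, ?_⟩, ?_⟩
    · rw [Ideal.span_le, Set.singleton_subset_iff, ← hmax]
      exact Ideal.mem_map_of_mem G hap
    · rintro y ⟨hyprime, hyle⟩ _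
      have hycomap : (Ideal.comap G y).IsPrime := hyprime.comap G
      have hyp : Ideal.comap G y ≤ p := by
        have := (IsLocalization.isPrime_iff_isPrime_disjoint p.primeCompl A y).mp hyprime
        intro x hx
        by_contra hxp
        exact Set.disjoint_left.mp this.2 hxp hx
      have hay : a ∈ Ideal.comap G y := hyle (Ideal.subset_span rfl)
      have := hmin.2 ⟨hycomap, by rwa [Ideal.span_le, Set.singleton_subset_iff]⟩ hyp
      calc IsLocalRing.maximalIdeal A = Ideal.map G p := hmax.symm
        _ ≤ Ideal.map G (Ideal.comap G y) := Ideal.map_mono this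
        _ = y := IsLocalization.map_comap p.primeCompl A y
  exact PIT_local (G a) hminA hQA hqA h1 h2 (fun N M _ _ _ hkill => isArtinian_of_killed_pow (IsLocalRing.maximalIdeal.isMaximal A) N M hkill)

/-- PIT relative version: quotient out the bottom prime. -/
lemma PIT_rel {R : Type} [CommRing R] [IsNoetherianRing R] (a : R) {P q p : Ideal R}
    (hP : P.IsPrime) (hq : q.IsPrime) (hp : p.IsPrime)
    (hPq : P < q) (hqp : q < p) (hmin : p ∈ (P ⊔ Ideal.span {a}).minimalPrimes) : False := by
  haveI := hP
  set π := Ideal.Quotient.mk P with hπ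
  have hsurj : Function.Surjective π := Ideal.Quotient.mk_surjective
  have hker : RingHom.ker π = P := Ideal.mk_ker
  have hkq : RingHom.ker π ≤ q := hker.trans_le hPq.le
  have hkp : RingHom.ker π ≤ p := hker.trans_le (hPq.le.trans hqp.le)
  have hqbar : (q.map π).IsPrime := Ideal.map_isPrime_of_surjective hsurj hkq
  have hpbar : (p.map π).IsPrime := Ideal.map_isPrime_of_surjective hsurj hkp
  have hcomapq : (q.map π).comap π = q := by
    rw [Ideal.comap_map_of_surjective π hsurj, ← RingHom.ker_eq_comap_bot, hker,
      sup_eq_left.mpr hPq.le]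
  have hcomapp : (p.map π).comap π = p := by
    rw [Ideal.comap_map_of_surjective π hsurj, ← RingHom.ker_eq_comap_bot, hker,
      sup_eq_left.mpr (hPq.le.trans hqp.le)]
  have hbot : (⊥ : Ideal (R ⧸ P)) < q.map π := by
    refine bot_lt_iff_ne_bot.mpr fun h => hPq.ne' ?_
    rw [← hcomapq, h, ← RingHom.ker_eq_comap_bot, hker]
  have hqpbar : q.map π < p.map π := by
    refine lt_of_le_of_ne (Ideal.map_mono hqp.le) fun h => hqp.ne ?_
    rw [← hcomapq, h, hcomapp]
  have hminbar : p.map π ∈ (Ideal.span {π a}).minimalPrimes := by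
    have hspan : Ideal.span {π a} = (P ⊔ Ideal.span {a}).map π := by
      rw [Ideal.map_sup, Ideal.map_quotient_self, bot_sup_eq, Ideal.map_span,
        Set.image_singleton]
    refine ⟨⟨hpbar, ?_⟩, ?_⟩
    · rw [hspan]
      exact Ideal.map_mono hmin.1.2
    · rintro y ⟨hyprime, hyle⟩ hylt
      have h1 : P ⊔ Ideal.span {a} ≤ y.comap π := by
        refine sup_le ?_ ?_
        · intro x hx
          show π x ∈ y
          rw [show π x = 0 from Ideal.Quotient.eq_zero_iff_mem.mpr hx]
          exact y.zero_mem
        · rw [Ideal.span_le, Set.singleton_subset_iff]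
          exact hyle (Ideal.subset_span rfl)
      have h2 : y.comap π ≤ p := hcomapp ▸ Ideal.comap_mono hylt
      have h3 := hmin.2 ⟨hyprime.comap π, h1⟩ h2
      calc p.map π ≤ (y.comap π).map π := Ideal.map_mono h3
        _ = y := Ideal.map_comap_of_surjective π hsurj y
  exact PIT_aux (π a) Ideal.bot_prime hqbar hpbar hbot hqpbar hminbar

lemma heightB : ∀ (n : ℕ) (R : Type) [CommRing R] [IsNoetherianRing R] (s : Finset R)
    (p : Ideal R) (hp : p.IsPrime), s.card ≤ n →
    p ∈ (Ideal.span (s : Set R)).minimalPrimes →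
    Order.height (⟨p, hp⟩ : PrimeSpectrum R) ≤ n := by
  intro n
  induction n with
  | zero =>
    intro R _ _ s p hp hcard hmin
    have hs : s = ∅ := Finset.card_eq_zero.mp (Nat.le_zero.mp hcard)
    subst hs
    rw [show ((∅ : Finset R) : Set R) = (∅ : Set R) from Finset.coe_empty,
      Ideal.span_empty] at hmin
    have h0 : Order.height (⟨p, hp⟩ : PrimeSpectrum R) = 0 :=
      Order.height_eq_zero.mpr fun b hb => hmin.2 ⟨b.2, bot_le⟩ hb
    rw [h0]
    exact zero_le
  | succ n ih =>
    intro R _ _ s p hp hcard hmin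
    classical
    have hsp : Ideal.span (s : Set R) ≤ p := hmin.1.2
    have key : ∀ Q : PrimeSpectrum R, Q < ⟨p, hp⟩ → Order.height Q ≤ n := by
      intro Q hQlt
      have hQp : Q.asIdeal < p := hQlt
      -- maximal prime between Q and p
      obtain ⟨q', hq'mem, hq'max⟩ :=
        (set_has_maximal_iff_noetherian.mpr (isNoetherianRing_iff.mp ‹_›))
          {P : Ideal R | P.IsPrime ∧ Q.asIdeal ≤ P ∧ P < p} ⟨Q.asIdeal, Q.2, le_rfl, hQp⟩
      obtain ⟨hq'prime, hqq', hq'p⟩ := hq'mem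
      -- an element of s outside q'
      have has : ¬ (s : Set R) ⊆ (q' : Set R) := by
        intro hsub
        exact hq'p.not_ge (hmin.2 ⟨hq'prime, Ideal.span_le.mpr hsub⟩ hq'p.le)
      obtain ⟨a, has', haq'⟩ := Set.not_subset.mp has
      have hap : a ∈ p := hsp (Ideal.subset_span has')
      -- localization at p
      set A := Localization.AtPrime p with hA
      set G := algebraMap R A with hGdef
      set J : Ideal R := q' ⊔ Ideal.span {a} with hJ
      have hJp : J ≤ p := sup_le hq'p.le
        (Ideal.span_le.mpr (Set.singleton_subset_iff.mpr hap))
      have hradA : Ideal.map G p ≤ (Ideal.map G J).radical := by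
        rw [Ideal.radical_eq_sInf]
        refine le_sInf fun y hy => ?_
        obtain ⟨hyJ, hyprime⟩ := hy
        have hPc : (Ideal.comap G y).IsPrime := hyprime.comap G
        have hPcp : Ideal.comap G y ≤ p := by
          have := (IsLocalization.isPrime_iff_isPrime_disjoint p.primeCompl A y).mp hyprime
          intro x hx
          by_contra hxp
          exact Set.disjoint_left.mp this.2 hxp hx
        have hJPc : J ≤ Ideal.comap G y := Ideal.le_comap_map.trans (Ideal.comap_mono hyJ)
        have hPceq : Ideal.comap G y = p := by
          by_contra hne
          have hlt : Ideal.comap G y < p := lt_of_le_of_ne hPcp hne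
          have hmem : Ideal.comap G y ∈
              {P : Ideal R | P.IsPrime ∧ Q.asIdeal ≤ P ∧ P < p} :=
            ⟨hPc, hqq'.trans ((le_sup_left : q' ≤ J).trans hJPc), hlt⟩
          have hq'le : q' ≤ Ideal.comap G y := (le_sup_left : q' ≤ J).trans hJPc
          have : q' < Ideal.comap G y := lt_of_le_of_ne hq'le fun h =>
            haq' (h ▸ hJPc ((le_sup_right : Ideal.span {a} ≤ J) (Ideal.subset_span rfl)))
          exact hq'max _ hmem this
        calc Ideal.map G p = Ideal.map G (Ideal.comap G y) := by rw [hPceq]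
          _ ≤ y := Ideal.map_comap_le
      obtain ⟨K, hK⟩ := Ideal.exists_pow_le_of_le_radical_of_fg hradA
        (Ideal.FG.map (IsNoetherian.noetherian p) G)
      have hsat : ∀ b ∈ p, ∃ w, w ∉ p ∧ w * b ^ K ∈ J := by
        intro b hb
        have h1 : G (b ^ K) ∈ Ideal.map G J := by
          have : G b ∈ Ideal.map G p := Ideal.mem_map_of_mem G hb
          have h2 : (G b) ^ K ∈ (Ideal.map G p) ^ K := Ideal.pow_mem_pow this K
          rw [map_pow]
          exact hK h2
        rw [IsLocalization.mem_map_algebraMap_iff p.primeCompl A] at h1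
        obtain ⟨⟨⟨j, hj⟩, u⟩, heq⟩ := h1
        have h3 : G (b ^ K * ↑u - j) = 0 := by
          rw [map_sub, _root_.map_mul, sub_eq_zero]
          exact heq
        obtain ⟨v, hv⟩ := (IsLocalization.map_eq_zero_iff p.primeCompl A _).mp h3
        refine ⟨↑u * ↑v, fun hmem => ?_, ?_⟩
        · exact (Submonoid.mul_mem _ u.2 v.2 : (↑u * ↑v : R) ∈ p.primeCompl) hmem
        · have hveq : ↑u * ↑v * b ^ K = ↑v * j := by linear_combination hv
          rw [hveq]
          exact Ideal.mul_mem_left _ _ hj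
      have hch : ∀ b ∈ s.erase a, ∃ d, d ∈ q' ∧ ∃ w cc, w ∉ p ∧ w * b ^ K = cc * a + d := by
        intro b hb
        have hbp : b ∈ p := hsp (Ideal.subset_span (Finset.mem_of_mem_erase hb))
        obtain ⟨w, hw, hwJ⟩ := hsat b hbp
        rw [hJ] at hwJ
        obtain ⟨z, hz, y, hy, hyz⟩ := Submodule.mem_sup.mp hwJ
        obtain ⟨cc, rfl⟩ := Ideal.mem_span_singleton'.mp hy
        exact ⟨z, hz, w, cc, hw, by rw [← hyz]; ring⟩
      set dfun : R → R := fun b => if h : b ∈ s.erase a then (hch b h).choose else 0 with hdfun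
      set t : Finset R := (s.erase a).image dfun with ht
      have htcard : t.card ≤ n := by
        calc t.card ≤ (s.erase a).card := Finset.card_image_le
          _ = s.card - 1 := Finset.card_erase_of_mem has'
          _ ≤ n := by omega
      have htq' : (t : Set R) ⊆ (q' : Set R) := by
        intro d hd
        obtain ⟨b, hb, rfl⟩ := Finset.mem_image.mp hd
        show (if h : b ∈ s.erase a then (hch b h).choose else 0) ∈ q'
        rw [dif_pos hb]
        exact (hch b hb).choose_spec.1
      have hq'min : q' ∈ (Ideal.span (t : Set R)).minimalPrimes := by
        refine ⟨⟨hq'prime, Ideal.span_le.mpr htq'⟩, ?_⟩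
        rintro P ⟨hPprime, htP⟩ hPq'
        by_contra hne
        have hPlt : P < q' := lt_of_le_of_ne hPq' fun h => hne h.ge
        have hminP : p ∈ (P ⊔ Ideal.span {a}).minimalPrimes := by
          refine ⟨⟨hp, sup_le (hPq'.trans hq'p.le)
            (Ideal.span_le.mpr (Set.singleton_subset_iff.mpr hap))⟩, ?_⟩
          rintro y ⟨hyprime, hyle⟩ hyp
          have hay : a ∈ y := hyle ((le_sup_right : Ideal.span {a} ≤ _) (Ideal.subset_span rfl))
          have hPy : P ≤ y := (le_sup_left : P ≤ P ⊔ Ideal.span {a}).trans hyle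
          have hsy : (s : Set R) ⊆ (y : Set R) := by
            intro b hb
            rcases eq_or_ne b a with rfl | hba
            · exact hay
            · have hb' : b ∈ s.erase a := Finset.mem_erase.mpr ⟨hba, hb⟩
              have hdspec := (hch b hb').choose_spec
              obtain ⟨w, cc, hw, heqn⟩ := hdspec.2
              have hdP : (hch b hb').choose ∈ P := by
                have hmemt : dfun b ∈ t := Finset.mem_image_of_mem dfun hb'
                have h4 : (if h : b ∈ s.erase a then (hch b h).choose else 0) ∈ P :=
                  htP (Ideal.subset_span hmemt)
                rwa [dif_pos hb'] at h4
              have hwb : w * b ^ K ∈ y := by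
                rw [heqn]
                exact add_mem (Ideal.mul_mem_left _ _ hay) (hPy hdP)
              have hbK : b ^ K ∈ y :=
                (hyprime.mem_or_mem hwb).resolve_left fun hwy => hw (hyp hwy)
              exact hyprime.mem_of_pow_mem K hbK
          exact hmin.2 ⟨hyprime, Ideal.span_le.mpr hsy⟩ hyp
        exact PIT_rel a hPprime hq'prime hp hPlt hq'p hminP
      have hih := ih R t q' hq'prime htcard hq'min
      calc Order.height Q ≤ Order.height (⟨q', hq'prime⟩ : PrimeSpectrum R) :=
            Order.height_mono (show Q ≤ _ from hqq')
        _ ≤ n := hih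
    -- conclude
    apply Order.height_le
    intro ser hlast
    by_cases hlen : ser.length = 0
    · rw [hlen]; exact_mod_cast Nat.zero_le _
    · have hrel := ser.eraseLast_last_rel_last (by omega)
      rw [hlast] at hrel
      have h5 : (ser.eraseLast.length : ℕ∞) ≤ Order.height ser.eraseLast.last :=
        Order.length_le_height_last
      have h6 := key ser.eraseLast.last hrel
      have h7 : (ser.eraseLast.length : ℕ∞) ≤ n := h5.trans h6
      have h8 : ser.eraseLast.length ≤ n := by exact_mod_cast h7
      have h9 : ser.length - 1 ≤ n := by
        have : ser.eraseLast.length = ser.length - 1 := rfl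
        omega
      have : ser.length ≤ n + 1 := by omega
      exact_mod_cast this

lemma height_ne_top {R : Type} [CommRing R] [IsNoetherianRing R] (p : PrimeSpectrum R) :
    Order.height p ≠ ⊤ := by
  obtain ⟨sfin, hs⟩ := (IsNoetherian.noetherian p.asIdeal : p.asIdeal.FG)
  have hmin : p.asIdeal ∈ (Ideal.span (sfin : Set R)).minimalPrimes := by
    rw [show Ideal.span (sfin : Set R) = p.asIdeal from hs]
    haveI := p.2
    rw [Ideal.minimalPrimes_eq_subsingleton_self]
    rfl
  have h1 := heightB sfin.card R sfin p.asIdeal p.2 le_rfl hmin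
  have h2 : (⟨p.asIdeal, p.2⟩ : PrimeSpectrum R) = p := rfl
  rw [h2] at h1
  exact (h1.trans_lt (WithTop.coe_lt_top _)).ne

end KrullHeight

section Part1

variable {R} [IsNoetherianRing R] [IsLocalRing R]

/-- subsingleton modules lie in any Serre class containing something. -/
lemma serre_mem_of_subsingleton (S : SerreClass R) {N0 : ModuleCat.{0} R} (hN0 : S.mem N0)
    (T : Type) [AddCommGroup T] [Module R T] (hT : Subsingleton T) :
    S.mem (ModuleCat.of R T) :=
  S.mem_of_injective (M := ModuleCat.of R T) (N := N0) 0
    (fun a b _ => @Subsingleton.elim T hT a b) hN0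

/-- The residue field belongs to any nonzero Serre class of f.g. modules. -/
lemma serre_mem_residue_field (S : SerreClass R)
    {N0 : ModuleCat.{0} R} (hN0 : S.mem N0) (hnt : Nontrivial N0)
    (hN0fg : Module.Finite R N0) :
    S.mem (ModuleCat.of R (R ⧸ IsLocalRing.maximalIdeal R)) := by
  set mI := IsLocalRing.maximalIdeal R with hmI
  have hjac : mI ≤ (⊥ : Ideal R).jacobson := by
    rw [IsLocalRing.jacobson_eq_maximalIdeal ⊥ bot_ne_top]
  have hne : (mI • ⊤ : Submodule R N0) ≠ ⊤ := by
    intro h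
    have hbot : (⊤ : Submodule R N0) = ⊥ :=
      Submodule.eq_bot_of_le_smul_of_le_jacobson_bot mI ⊤ (Module.finite_def.mp hN0fg)
        (le_of_eq h.symm) hjac
    obtain ⟨a, b, hab⟩ := hnt
    apply hab
    have ha : a ∈ (⊥ : Submodule R N0) := hbot ▸ Submodule.mem_top
    have hb : b ∈ (⊥ : Submodule R N0) := hbot ▸ Submodule.mem_top
    rw [Submodule.mem_bot] at ha hb
    rw [ha, hb]
  obtain ⟨y, hy⟩ : ∃ y : N0, y ∉ (mI • ⊤ : Submodule R N0) := by
    by_contra hcon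
    push_neg at hcon
    exact hne (Submodule.eq_top_iff'.mpr hcon)
  set V := (N0 : Type) ⧸ (mI • ⊤ : Submodule R N0) with hV
  have hVmem : S.mem (ModuleCat.of R V) :=
    S.mem_of_surjective (M := N0) (N := ModuleCat.of R V)
      (mI • ⊤ : Submodule R N0).mkQ (Submodule.mkQ_surjective _) hN0
  set z : V := Submodule.Quotient.mk y with hz
  have hz0 : z ≠ 0 := by
    rw [hz, ne_eq, Submodule.Quotient.mk_eq_zero]
    exact hy
  set g := LinearMap.toSpanSingleton R V z with hg
  have hker : mI = LinearMap.ker g := by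
    refine (IsLocalRing.maximalIdeal.isMaximal R).eq_of_le ?_ ?_
    · intro h
      apply hz0
      have h1 : (1 : R) ∈ LinearMap.ker g := h ▸ Submodule.mem_top
      rw [LinearMap.mem_ker] at h1
      rw [← one_smul R z]
      exact h1
    · intro r hr
      rw [LinearMap.mem_ker]
      show r • z = 0
      rw [hz, ← Submodule.Quotient.mk_smul, Submodule.Quotient.mk_eq_zero]
      exact Submodule.smul_mem_smul hr Submodule.mem_top
  have hrange : S.mem (ModuleCat.of R ↥(LinearMap.range g)) :=
    S.mem_of_injective (M := ModuleCat.of R ↥(LinearMap.range g)) (N := ModuleCat.of R V)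
      (LinearMap.range g).subtype (Submodule.injective_subtype _) hVmem
  have e : (R ⧸ mI) ≃ₗ[R] ↥(LinearMap.range g) :=
    (Submodule.quotEquivOfEq mI (LinearMap.ker g) hker).trans g.quotKerEquivRange
  exact S.mem_of_surjective (M := ModuleCat.of R ↥(LinearMap.range g))
    (N := ModuleCat.of R (R ⧸ mI)) e.symm.toLinearMap e.symm.surjective hrange

/-- Any f.g. module killed by the maximal ideal belongs to `S`. -/
lemma serre_mem_of_killed (S : SerreClass R)
    (hk : S.mem (ModuleCat.of R (R ⧸ IsLocalRing.maximalIdeal R)))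
    (T : Type) [AddCommGroup T] [Module R T] (hfin : Module.Finite R T)
    (hkill : ∀ c ∈ IsLocalRing.maximalIdeal R, ∀ t : T, c • t = 0) :
    S.mem (ModuleCat.of R T) := by
  set mI := IsLocalRing.maximalIdeal R with hmI
  have hP : ∀ W : Submodule R T, W.FG → S.mem (ModuleCat.of R ↥W) := by
    intro W hW
    refine Submodule.fg_induction (motive := fun W _ => S.mem (ModuleCat.of R ↥W)) ?_ ?_ W hW
    · intro x
      by_cases hx : (Submodule.span R {x} : Submodule R T) = ⊥
      · refine serre_mem_of_subsingleton S hk _ ?_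
        refine ⟨fun a b => Subtype.ext ?_⟩
        have ha : (a : T) ∈ (⊥ : Submodule R T) := hx ▸ a.2
        have hb : (b : T) ∈ (⊥ : Submodule R T) := hx ▸ b.2
        rw [Submodule.mem_bot] at ha hb
        rw [ha, hb]
      · set g := LinearMap.toSpanSingleton R T x with hg
        have hker : mI = LinearMap.ker g := by
          refine (IsLocalRing.maximalIdeal.isMaximal R).eq_of_le ?_ ?_
          · intro h
            apply hx
            rw [LinearMap.span_singleton_eq_range, LinearMap.range_eq_bot.mpr]
            exact LinearMap.ker_eq_top.mp h
          · intro r hr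
            rw [LinearMap.mem_ker]
            exact hkill r hr x
        have e : (R ⧸ mI) ≃ₗ[R] ↥(Submodule.span R {x} : Submodule R T) :=
          ((Submodule.quotEquivOfEq mI (LinearMap.ker g) hker).trans
            g.quotKerEquivRange).trans
            (LinearEquiv.ofEq _ _ (LinearMap.span_singleton_eq_range R T x).symm)
        exact S.mem_of_surjective (M := ModuleCat.of R (R ⧸ mI))
          (N := ModuleCat.of R ↥(Submodule.span R {x} : Submodule R T))
          e.toLinearMap e.surjective hk
    · intro W1 W2 _ _ h1 h2
      have hprod : S.mem (ModuleCat.of R (↥W1 × ↥W2)) :=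
        S.mem_of_extension (A := ModuleCat.of R ↥W1) (M := ModuleCat.of R (↥W1 × ↥W2))
          (B := ModuleCat.of R ↥W2)
          (LinearMap.inl R ↥W1 ↥W2) (LinearMap.snd R ↥W1 ↥W2)
          LinearMap.inl_injective LinearMap.snd_surjective
          (LinearMap.range_inl R ↥W1 ↥W2) h1 h2
      set f2 : ↥W1 × ↥W2 →ₗ[R] T := W1.subtype.coprod W2.subtype with hf2
      have hrange : LinearMap.range f2 = W1 ⊔ W2 := by
        rw [hf2, LinearMap.range_coprod, Submodule.range_subtype, Submodule.range_subtype]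
      set f3 : ↥W1 × ↥W2 →ₗ[R] ↥(W1 ⊔ W2) :=
        f2.codRestrict (W1 ⊔ W2) (fun c => hrange ▸ LinearMap.mem_range_self f2 c) with hf3
      have hf3surj : Function.Surjective f3 := by
        rintro ⟨t, ht⟩
        rw [← hrange] at ht
        obtain ⟨c, hc⟩ := ht
        exact ⟨c, Subtype.ext hc⟩
      exact S.mem_of_surjective (M := ModuleCat.of R (↥W1 × ↥W2))
        (N := ModuleCat.of R ↥(W1 ⊔ W2)) f3 hf3surj hprod
  have htop := hP ⊤ (Module.finite_def.mp hfin)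
  exact S.mem_of_surjective (M := ModuleCat.of R ↥(⊤ : Submodule R T))
    (N := ModuleCat.of R T)
    (Submodule.topEquiv : ↥(⊤ : Submodule R T) ≃ₗ[R] T).toLinearMap
    Submodule.topEquiv.surjective htop

end Part1

section Construction

variable {R} [IsNoetherianRing R] [IsLocalRing R]

lemma no_melkersson (hdim : 0 < ringKrullDim R)
    (S : SerreClass R) (hS : ∃ M : ModuleCat.{0} R, S.mem M ∧ Nontrivial M)
    (hfg : ∀ M : ModuleCat.{0} R, S.mem M → Module.Finite R M) :
    ¬ MelkerssonCondition R S.mem (IsLocalRing.maximalIdeal R) := by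
  intro hMel
  obtain ⟨N0, hN0mem, hN0nt⟩ := hS
  set mI := IsLocalRing.maximalIdeal R with hmIdef
  have hk : S.mem (ModuleCat.of R (R ⧸ mI)) :=
    serre_mem_residue_field S hN0mem hN0nt (hfg _ hN0mem)
  -- find a prime strictly below mI
  have hq0 : ∃ q0 : Ideal R, q0.IsPrime ∧ q0 < mI := by
    by_contra hcon
    push_neg at hcon
    have hsub : Subsingleton (PrimeSpectrum R) := by
      refine ⟨fun a b => ?_⟩
      have ha : a.asIdeal = mI := by
        have h1 : a.asIdeal ≤ mI := IsLocalRing.le_maximalIdeal a.2.ne_top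
        rcases lt_or_eq_of_le h1 with h | h
        · exact absurd h (by have := hcon a.asIdeal a.2; exact this)
        · exact h
      have hb : b.asIdeal = mI := by
        have h1 : b.asIdeal ≤ mI := IsLocalRing.le_maximalIdeal b.2.ne_top
        rcases lt_or_eq_of_le h1 with h | h
        · exact absurd h (hcon b.asIdeal b.2)
        · exact h
      exact PrimeSpectrum.ext (ha.trans hb.symm)
    have := Order.krullDim_nonpos_of_subsingleton (α := PrimeSpectrum R)
    rw [show Order.krullDim (PrimeSpectrum R) = ringKrullDim R from rfl] at this
    exact absurd (lt_of_lt_of_le hdim this) (lt_irrefl 0)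
  obtain ⟨q0, hq0prime, hq0lt⟩ := hq0
  -- maximal prime strictly below mI
  obtain ⟨q, hqmem, hqmax⟩ :=
    (set_has_maximal_iff_noetherian.mpr (isNoetherianRing_iff.mp ‹_›))
      {P : Ideal R | P.IsPrime ∧ P < mI} ⟨q0, hq0prime, hq0lt⟩
  obtain ⟨hqprime, hqlt⟩ := hqmem
  obtain ⟨x, hxm, hxq⟩ := SetLike.exists_of_lt hqlt
  haveI := hqprime
  -- the quotient domain and localization away from x
  set Rb := R ⧸ q with hRb
  set π := Ideal.Quotient.mk q with hπ
  set xb : Rb := π x with hxb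
  have hxb0 : xb ≠ 0 := fun h => hxq (Ideal.Quotient.eq_zero_iff_mem.mp h)
  set L := Localization.Away xb with hL
  have hinj : Function.Injective (algebraMap Rb L) :=
    IsLocalization.injective L (powers_le_nonZeroDivisors_of_noZeroDivisors hxb0)
  have halgR : algebraMap R Rb = π := Ideal.Quotient.algebraMap_eq q
  set mb : Ideal Rb := mI.map π with hmb
  have hxbmb : xb ∈ mb := Ideal.mem_map_of_mem π hxm
  have hmbne : mb ≠ ⊤ := by
    intro h
    have hcomap : Ideal.comap π mb = mI := by
      rw [hmb, Ideal.comap_map_of_surjective π Ideal.Quotient.mk_surjective,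
        ← RingHom.ker_eq_comap_bot, Ideal.mk_ker, sup_eq_left.mpr hqlt.le]
    rw [h, Ideal.comap_top] at hcomap
    exact (IsLocalRing.maximalIdeal.isMaximal R).ne_top hcomap.symm
  -- mb^k eventually inside (xb^n)
  have hpow : ∀ n : ℕ, ∃ k, mb ^ k ≤ Ideal.span {xb ^ n} := by
    intro n
    have hrad : mb ≤ (Ideal.span {xb ^ n}).radical := by
      rw [Ideal.radical_eq_sInf]
      refine le_sInf fun P hP => ?_
      obtain ⟨hPle, hPprime⟩ := hP
      have hP' : (Ideal.comap π P).IsPrime := hPprime.comap π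
      have hqP : q ≤ Ideal.comap π P := by
        intro r hr
        show π r ∈ P
        rw [show π r = 0 from Ideal.Quotient.eq_zero_iff_mem.mpr hr]
        exact P.zero_mem
      have hxP : x ∈ Ideal.comap π P := by
        show π x ∈ P
        have hxn : (π x) ^ n ∈ P := hPle (Ideal.subset_span rfl)
        exact hP'.mem_of_pow_mem n hxn
      have hPmI : Ideal.comap π P ≤ mI := IsLocalRing.le_maximalIdeal hP'.ne_top
      have hPeq : Ideal.comap π P = mI := by
        rcases lt_or_eq_of_le hPmI with h | h
        · exact absurd h (by
            have hqlt' : q < Ideal.comap π P := lt_of_le_of_ne hqP fun hh => hxq (hh ▸ hxP)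
            exact fun hcon => hqmax _ ⟨hP', hcon⟩ hqlt')
        · exact h
      calc mb = Ideal.map π (Ideal.comap π P) := by rw [hPeq]
        _ = P := Ideal.map_comap_of_surjective π Ideal.Quotient.mk_surjective P
        _ ≤ P := le_rfl
    exact Ideal.exists_pow_le_of_le_radical_of_fg hrad (IsNoetherian.noetherian mb)
  -- the module M = L / Rb
  set W : Submodule R L := LinearMap.range ((Algebra.linearMap Rb L).restrictScalars R) with hW
  have hWmem : ∀ l : L, l ∈ W ↔ ∃ s : Rb, algebraMap Rb L s = l := by
    intro l
    constructor
    · rintro ⟨s, hs⟩; exact ⟨s, hs⟩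
    · rintro ⟨s, hs⟩; exact ⟨s, hs⟩
  set Mq := L ⧸ W with hMq
  set MM : ModuleCat.{0} R := ModuleCat.of R Mq with hMM
  -- smul description
  have hsmul : ∀ (r : R) (l : L), r • l = algebraMap Rb L (π r) * l := by
    intro r l
    have h := Algebra.smul_def r l
    rw [IsScalarTower.algebraMap_apply R Rb L, halgR] at h
    exact h
  -- M is mI-power torsion
  have htors : IsTorsionByPowers R mI MM := by
    intro mm
    obtain ⟨l, rfl⟩ := W.mkQ_surjective mm
    obtain ⟨⟨r, s⟩, hrs⟩ := IsLocalization.mk'_surjective (Submonoid.powers xb) (l : L)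
    replace hrs : IsLocalization.mk' L r s = l := hrs
    obtain ⟨n, hn⟩ := s.2
    have hn' : xb ^ n = (s : Rb) := hn
    have hxn' : algebraMap Rb L (xb ^ n) * l = algebraMap Rb L r := by
      rw [← hrs, hn', mul_comm]
      exact IsLocalization.mk'_spec L r s
    obtain ⟨k, hk⟩ := hpow n
    refine ⟨k, fun cc hcc => ?_⟩
    show cc • Submodule.Quotient.mk l = (0 : Mq)
    rw [← Submodule.Quotient.mk_smul, Submodule.Quotient.mk_eq_zero]
    have hccmb : π cc ∈ mb ^ k := by
      have h1 : π cc ∈ Ideal.map π (mI ^ k) := Ideal.mem_map_of_mem π hcc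
      rwa [Ideal.map_pow] at h1
    obtain ⟨d, hd⟩ := Ideal.mem_span_singleton'.mp (hk hccmb)
    rw [hWmem]
    refine ⟨d * r, ?_⟩
    calc algebraMap Rb L (d * r) = algebraMap Rb L d * algebraMap Rb L r := by
          rw [_root_.map_mul]
      _ = algebraMap Rb L d * (algebraMap Rb L (xb ^ n) * l) := by rw [hxn']
      _ = algebraMap Rb L (d * xb ^ n) * l := by rw [_root_.map_mul, mul_assoc]
      _ = algebraMap Rb L (π cc) * l := by rw [hd]
      _ = cc • l := (hsmul cc l).symm
  -- the torsion submodule is f.g. and killed by mI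
  set TT := Submodule.torsionBySet R Mq (mI : Set R) with hTT
  have hTkill : ∀ c ∈ mI, ∀ t : ↥TT, c • t = (0 : ↥TT) := by
    intro c hc t
    refine Subtype.ext ?_
    show c • (t : Mq) = 0
    exact (Submodule.mem_torsionBySet_iff _ _).mp t.2 ⟨c, hc⟩
  set u1 : L := IsLocalization.mk' L (1 : Rb) (⟨xb, Submonoid.mem_powers xb⟩ :
    Submonoid.powers xb) with hu1
  set ψ : Rb →ₗ[R] Mq :=
    W.mkQ.comp ((LinearMap.toSpanSingleton Rb L u1).restrictScalars R) with hψ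
  have hTle : TT ≤ LinearMap.range ψ := by
    intro t ht
    obtain ⟨l, rfl⟩ := W.mkQ_surjective t
    have hxt : x • Submodule.Quotient.mk l = (0 : Mq) :=
      (Submodule.mem_torsionBySet_iff _ _).mp ht ⟨x, hxm⟩
    rw [← Submodule.Quotient.mk_smul, Submodule.Quotient.mk_eq_zero, hWmem] at hxt
    obtain ⟨s0, hs0⟩ := hxt
    rw [hsmul] at hs0
    obtain ⟨⟨r, s⟩, hrs⟩ := IsLocalization.mk'_surjective (Submonoid.powers xb) (l : L)
    replace hrs : IsLocalization.mk' L r s = l := hrs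
    obtain ⟨n, hn⟩ := s.2
    have hn' : xb ^ n = (s : Rb) := hn
    have hxn' : algebraMap Rb L (xb ^ n) * l = algebraMap Rb L r := by
      rw [← hrs, hn', mul_comm]
      exact IsLocalization.mk'_spec L r s
    have hrel : algebraMap Rb L (s0 * xb ^ n) = algebraMap Rb L (xb * r) := by
      calc algebraMap Rb L (s0 * xb ^ n)
          = algebraMap Rb L s0 * algebraMap Rb L (xb ^ n) := by rw [_root_.map_mul]
        _ = algebraMap Rb L (π x) * l * algebraMap Rb L (xb ^ n) := by rw [hs0]
        _ = algebraMap Rb L (π x) * (algebraMap Rb L (xb ^ n) * l) := by ring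
        _ = algebraMap Rb L (π x) * algebraMap Rb L r := by rw [hxn']
        _ = algebraMap Rb L (xb * r) := by rw [_root_.map_mul]
    have hrel2 : s0 * xb ^ n = xb * r := hinj hrel
    rcases Nat.eq_zero_or_pos n with hn0 | hnpos
    · -- l is in W already
      have hs1 : (s : Rb) = 1 := by rw [← hn', hn0, pow_zero]
      have hl : (l : L) = algebraMap Rb L r := by
        have hspec := IsLocalization.mk'_spec L r s
        rw [hs1, _root_.map_one, mul_one, hrs] at hspec
        exact hspec
      have hlW : (l : L) ∈ W := (hWmem l).mpr ⟨r, hl.symm⟩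
      refine ⟨0, ?_⟩
      rw [_root_.map_zero]
      exact ((Submodule.Quotient.mk_eq_zero W).mpr hlW).symm
    · obtain ⟨nm, rfl⟩ : ∃ nm, n = nm + 1 := ⟨n - 1, by omega⟩
      have hr : r = s0 * xb ^ nm := by
        have h2 : xb * r = xb * (s0 * xb ^ nm) := by
          rw [← hrel2]; ring
        exact mul_left_cancel₀ hxb0 h2
      refine ⟨s0, ?_⟩
      show W.mkQ (s0 • u1) = W.mkQ l
      have hlu : (l : L) = s0 • u1 := by
        have hsd : s0 • u1 = algebraMap Rb L s0 * u1 := Algebra.smul_def s0 u1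
        rw [hsd, hu1, IsLocalization.mul_mk'_eq_mk'_of_mul, mul_one, ← hrs]
        rw [IsLocalization.mk'_eq_iff_eq]
        refine congrArg (algebraMap Rb L) ?_
        show xb * r = (s : Rb) * s0
        rw [← hn', hr]
        ring
      rw [hlu]
  have hTfg : Module.Finite R ↥TT := by
    haveI hRbfin : Module.Finite R Rb :=
      Module.Finite.of_surjective (Algebra.linearMap R Rb)
        (by rw [show ⇑(Algebra.linearMap R Rb) = ⇑(algebraMap R Rb) from rfl, halgR]
            exact Ideal.Quotient.mk_surjective)
    haveI hRbnoeth : IsNoetherian R Rb := isNoetherian_of_isNoetherianRing_of_finite R Rb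
    have hcomapfg : (TT.comap ψ).FG := IsNoetherian.noetherian _
    have heq : TT = (TT.comap ψ).map ψ := (Submodule.map_comap_eq_self hTle).symm
    rw [Module.Finite.iff_fg, heq]
    exact Submodule.FG.map _ hcomapfg
  -- apply the Melkersson condition
  have hTmem : S.mem (ModuleCat.of R ↥(Submodule.torsionBySet R MM (mI : Set R))) :=
    serre_mem_of_killed S hk _ hTfg hTkill
  have hMMmem : S.mem MM := hMel MM htors hTmem
  have hMMfin : Module.Finite R MM := hfg MM hMMmem
  -- derive the contradiction
  have hxpow : ∀ t : Mq, ∃ nn : ℕ, x ^ nn • t = 0 := by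
    intro t
    obtain ⟨n, hn⟩ := htors t
    exact ⟨n, hn (x ^ n) (Ideal.pow_mem_pow hxm n)⟩
  obtain ⟨sgen, hsgen⟩ := Module.finite_def.mp hMMfin
  classical
  set gfun : Mq → ℕ := fun t => (hxpow t).choose with hgfun
  set K := sgen.sup gfun with hK
  have hkillgen : ∀ t ∈ sgen, x ^ K • t = (0 : Mq) := by
    intro t ht
    have h1 : gfun t ≤ K := Finset.le_sup ht
    have h2 : x ^ gfun t • t = 0 := (hxpow t).choose_spec
    calc x ^ K • t = x ^ (K - gfun t + gfun t) • t := by rw [Nat.sub_add_cancel h1]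
      _ = x ^ (K - gfun t) • x ^ gfun t • t := by rw [pow_add, mul_smul]
      _ = 0 := by rw [h2, smul_zero]
  have hkillall : ∀ t : Mq, x ^ K • t = 0 := by
    have hle : (⊤ : Submodule R Mq) ≤ LinearMap.ker (LinearMap.lsmul R Mq (x ^ K)) := by
      rw [← hsgen, Submodule.span_le]
      intro t ht
      exact hkillgen t ht
    intro t
    exact hle (Submodule.mem_top : t ∈ ⊤)
  -- evaluate at 1 / xb^(K+1)
  set uK : L := IsLocalization.mk' L (1 : Rb) (⟨xb ^ (K + 1),
    Submonoid.pow_mem _ (Submonoid.mem_powers xb) (K + 1)⟩ : Submonoid.powers xb) with huK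
  have hcompute : x ^ K • uK = u1 := by
    have h0 : x ^ K • uK = algebraMap Rb L (xb ^ K) * uK := by
      have h := hsmul (x ^ K) uK
      rw [show π (x ^ K) = xb ^ K from by rw [map_pow]] at h
      exact h
    have h1 : algebraMap Rb L (xb ^ K) * uK = u1 := by
      rw [huK, IsLocalization.mul_mk'_eq_mk'_of_mul, hu1, IsLocalization.mk'_eq_iff_eq]
      refine congrArg (algebraMap Rb L) ?_
      show xb * (xb ^ K * 1) = xb ^ (K + 1) * 1
      ring
    exact h0.trans h1
  have huKzero : x ^ K • (Submodule.Quotient.mk uK : Mq) = 0 := hkillall _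
  rw [← Submodule.Quotient.mk_smul, Submodule.Quotient.mk_eq_zero, hcompute, hWmem] at huKzero
  obtain ⟨s1, hs1⟩ := huKzero
  have hone : s1 * xb = 1 := by
    apply hinj
    rw [_root_.map_mul, hs1, hu1]
    exact IsLocalization.mk'_spec L (1 : Rb) _
  exact hmbne (Ideal.eq_top_iff_one mb |>.mpr (hone ▸ Ideal.mul_mem_left mb s1 hxbmb))

end Construction

/-- Over a noetherian local ring of positive dimension, a nonzero Serre class consisting
of finitely generated modules does not satisfy `(C_m)`; equivalently no prime of height
`dim R` lies in `MP[S]`. -/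
theorem stmt_5 {R : Type} [CommRing R] [IsNoetherianRing R] [IsLocalRing R]
    (hdim : 0 < ringKrullDim R)
    (S : SerreClass R) (hS : ∃ M : ModuleCat.{0} R, S.mem M ∧ Nontrivial M)
    (hfg : ∀ M : ModuleCat.{0} R, S.mem M → Module.Finite R M) :
    ¬ MelkerssonCondition R S.mem (IsLocalRing.maximalIdeal R) ∧
    ∀ p : PrimeSpectrum R, (Order.height p : WithBot ℕ∞) = ringKrullDim R →
      p ∉ MP R S.mem := by

  have key := no_melkersson hdim S hS hfg
  refine ⟨key, ?_⟩
  intro p hph hpMP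
  set mPt : PrimeSpectrum R := ⟨IsLocalRing.maximalIdeal R,
    (IsLocalRing.maximalIdeal.isMaximal R).isPrime⟩ with hmPt
  have hple : p ≤ mPt := IsLocalRing.le_maximalIdeal p.2.ne_top
  have hpeq : p = mPt := by
    by_contra hne
    have hlt : p < mPt := lt_of_le_of_ne hple hne
    have h1 : Order.height p < Order.height mPt :=
      Order.height_strictMono hlt (lt_top_iff_ne_top.mpr (height_ne_top p))
    have h2 : (Order.height mPt : WithBot ℕ∞) ≤ ringKrullDim R :=
      Order.height_le_krullDim mPt
    rw [← hph] at h2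
    exact absurd (WithBot.coe_le_coe.mp h2) h1.not_ge
  have hmel : MelkerssonCondition R S.mem (IsLocalRing.maximalIdeal R) := by
    have h3 : MelkerssonCondition R S.mem p.asIdeal := hpMP
    rw [hpeq] at h3
    exact h3
  exact key hmel
end
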